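/- arXiv:2001.07850 — 12 statements merged into one kernel-verified Lean document; each statement's English description precedes it below -/
import Mathlib

section
/- For all integers n, m ≥ 2, the total 2-domination number of the Cartesian product K_n □ K_m satisfies min{n,m} + 2 ≤ γ_{2t}(K_n □ K_m) ≤ 2·min{n,m}. -/
open SimpleGraph

/-- `S` is a total 2-dominating set of `G`: every vertex has at least 2 neighbors in `S`. -/
def TotalTwoDom {V : Type*} (G : SimpleGraph V) (S : Set V) : Prop :=
  ∀ v : V, 2 ≤ (S ∩ {u | G.Adj v u}).ncard

/-- The total 2-domination number of `G`. -/
noncomputable def gamma2t {V : Type*} [Fintype V] (G : SimpleGraph V) : ℕ :=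
  sInf {k | ∃ S : Set V, TotalTwoDom G S ∧ S.ncard = k}

/-- The complete graph on `n` vertices. -/
def K (n : ℕ) : SimpleGraph (Fin n) := ⊤

lemma Kadj {n m : ℕ} (x y : Fin n × Fin m) :
    (K n □ K m).Adj x y ↔ (x.1 = y.1 ∧ x.2 ≠ y.2) ∨ (x.1 ≠ y.1 ∧ x.2 = y.2) := by
  simp only [boxProd_adj, K, top_adj, ne_eq]
  tauto

/-- Two full rows form a total 2-dominating set. -/
lemma rows_dom {n m : ℕ} (hn : 2 ≤ n) (hm : 2 ≤ m) :
    TotalTwoDom (K n □ K m)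
      {p : Fin n × Fin m | p.1 = ⟨0, by omega⟩ ∨ p.1 = ⟨1, by omega⟩} := by
  intro v
  set r0 : Fin n := ⟨0, by omega⟩ with hr0
  set r1 : Fin n := ⟨1, by omega⟩ with hr1
  have hr01 : r0 ≠ r1 := by simp [hr0, hr1, Fin.ext_iff]
  obtain ⟨b', hb'⟩ : ∃ b' : Fin m, b' ≠ v.2 := by
    refine ⟨⟨if v.2.val = 0 then 1 else 0, by split <;> omega⟩, ?_⟩
    rw [Fin.ne_iff_vne]
    simp only [Fin.val_mk]
    split <;> omega
  set x : Fin n × Fin m := (r0, if v.1 = r0 then b' else v.2) with hx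
  set y : Fin n × Fin m := (r1, if v.1 = r1 then b' else v.2) with hy
  have hxS : x ∈ ({p : Fin n × Fin m | p.1 = r0 ∨ p.1 = r1} : Set _) := Or.inl rfl
  have hyS : y ∈ ({p : Fin n × Fin m | p.1 = r0 ∨ p.1 = r1} : Set _) := Or.inr rfl
  have hxadj : (K n □ K m).Adj v x := by
    rw [Kadj]
    by_cases h : v.1 = r0
    · exact Or.inl ⟨by simp [hx, h], by simp [hx, h, hb'.symm]⟩
    · exact Or.inr ⟨by simp [hx, h], by simp [hx, h]⟩
  have hyadj : (K n □ K m).Adj v y := by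
    rw [Kadj]
    by_cases h : v.1 = r1
    · exact Or.inl ⟨by simp [hy, h], by simp [hy, h, hb'.symm]⟩
    · exact Or.inr ⟨by simp [hy, h], by simp [hy, h]⟩
  have hxy : x ≠ y := by
    intro hxyeq
    exact hr01 (congrArg Prod.fst hxyeq)
  have : 1 < ({p : Fin n × Fin m | p.1 = r0 ∨ p.1 = r1} ∩ {u | (K n □ K m).Adj v u}).ncard := by
    rw [Set.one_lt_ncard (Set.toFinite _)]
    exact ⟨x, ⟨hxS, hxadj⟩, y, ⟨hyS, hyadj⟩, hxy⟩
  omega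

/-- Two full columns form a total 2-dominating set. -/
lemma cols_dom {n m : ℕ} (hn : 2 ≤ n) (hm : 2 ≤ m) :
    TotalTwoDom (K n □ K m)
      {p : Fin n × Fin m | p.2 = ⟨0, by omega⟩ ∨ p.2 = ⟨1, by omega⟩} := by
  intro v
  set c0 : Fin m := ⟨0, by omega⟩ with hc0
  set c1 : Fin m := ⟨1, by omega⟩ with hc1
  have hc01 : c0 ≠ c1 := by simp [hc0, hc1, Fin.ext_iff]
  obtain ⟨a', ha'⟩ : ∃ a' : Fin n, a' ≠ v.1 := by
    refine ⟨⟨if v.1.val = 0 then 1 else 0, by split <;> omega⟩, ?_⟩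
    rw [Fin.ne_iff_vne]
    simp only [Fin.val_mk]
    split <;> omega
  set x : Fin n × Fin m := (if v.2 = c0 then a' else v.1, c0) with hx
  set y : Fin n × Fin m := (if v.2 = c1 then a' else v.1, c1) with hy
  have hxS : x ∈ ({p : Fin n × Fin m | p.2 = c0 ∨ p.2 = c1} : Set _) := Or.inl rfl
  have hyS : y ∈ ({p : Fin n × Fin m | p.2 = c0 ∨ p.2 = c1} : Set _) := Or.inr rfl
  have hxadj : (K n □ K m).Adj v x := by
    rw [Kadj]
    by_cases h : v.2 = c0
    · exact Or.inr ⟨by simp [hx, h, ha'.symm], by simp [hx, h]⟩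
    · exact Or.inl ⟨by simp [hx, h], by simp [hx, h]⟩
  have hyadj : (K n □ K m).Adj v y := by
    rw [Kadj]
    by_cases h : v.2 = c1
    · exact Or.inr ⟨by simp [hy, h, ha'.symm], by simp [hy, h]⟩
    · exact Or.inl ⟨by simp [hy, h], by simp [hy, h]⟩
  have hxy : x ≠ y := by
    intro hxyeq
    exact hc01 (congrArg Prod.snd hxyeq)
  have : 1 < ({p : Fin n × Fin m | p.2 = c0 ∨ p.2 = c1} ∩ {u | (K n □ K m).Adj v u}).ncard := by
    rw [Set.one_lt_ncard (Set.toFinite _)]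
    exact ⟨x, ⟨hxS, hxadj⟩, y, ⟨hyS, hyadj⟩, hxy⟩
  omega

lemma rows_card {n m : ℕ} (r0 r1 : Fin n) :
    ({p : Fin n × Fin m | p.1 = r0 ∨ p.1 = r1} : Set _).ncard ≤ 2 * m := by
  have heq : ({p : Fin n × Fin m | p.1 = r0 ∨ p.1 = r1} : Set _)
      = (fun b : Fin m => (r0, b)) '' Set.univ ∪ (fun b : Fin m => (r1, b)) '' Set.univ := by
    ext ⟨a, b⟩
    simp [Prod.ext_iff, eq_comm]
  rw [heq]
  have h0 : ((fun b : Fin m => (r0, b)) '' Set.univ).ncard ≤ m := by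
    rw [Set.ncard_image_of_injective _ (fun x y h => (Prod.ext_iff.mp h).2),
      Set.ncard_univ, Nat.card_eq_fintype_card, Fintype.card_fin]
  have h1 : ((fun b : Fin m => (r1, b)) '' Set.univ).ncard ≤ m := by
    rw [Set.ncard_image_of_injective _ (fun x y h => (Prod.ext_iff.mp h).2),
      Set.ncard_univ, Nat.card_eq_fintype_card, Fintype.card_fin]
  have := Set.ncard_union_le ((fun b : Fin m => (r0, b)) '' Set.univ)
    ((fun b : Fin m => (r1, b)) '' Set.univ)
  omega

lemma cols_card {n m : ℕ} (c0 c1 : Fin m) :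
    ({p : Fin n × Fin m | p.2 = c0 ∨ p.2 = c1} : Set _).ncard ≤ 2 * n := by
  have heq : ({p : Fin n × Fin m | p.2 = c0 ∨ p.2 = c1} : Set _)
      = (fun a : Fin n => (a, c0)) '' Set.univ ∪ (fun a : Fin n => (a, c1)) '' Set.univ := by
    ext ⟨a, b⟩
    simp [Prod.ext_iff, eq_comm]
  rw [heq]
  have h0 : ((fun a : Fin n => (a, c0)) '' Set.univ).ncard ≤ n := by
    rw [Set.ncard_image_of_injective _ (fun x y h => (Prod.ext_iff.mp h).1),
      Set.ncard_univ, Nat.card_eq_fintype_card, Fintype.card_fin]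
  have h1 : ((fun a : Fin n => (a, c1)) '' Set.univ).ncard ≤ n := by
    rw [Set.ncard_image_of_injective _ (fun x y h => (Prod.ext_iff.mp h).1),
      Set.ncard_univ, Nat.card_eq_fintype_card, Fintype.card_fin]
  have := Set.ncard_union_le ((fun a : Fin n => (a, c0)) '' Set.univ)
    ((fun a : Fin n => (a, c1)) '' Set.univ)
  omega

lemma lower_bound {n m : ℕ} (hn : 2 ≤ n) (hm : 2 ≤ m) (S : Set (Fin n × Fin m))
    (h : TotalTwoDom (K n □ K m) S) : min n m + 2 ≤ S.ncard := by
  classical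
  set T : Finset (Fin n × Fin m) := S.toFinite.toFinset with hTdef
  have hmem : ∀ p, p ∈ T ↔ p ∈ S := fun p => Set.Finite.mem_toFinset _
  have hcard : S.ncard = T.card := Set.ncard_eq_toFinset_card _ _
  have key : ∀ v, 2 ≤ (T.filter fun u => (K n □ K m).Adj v u).card := by
    intro v
    have h2 := h v
    have heq : (S ∩ {u | (K n □ K m).Adj v u}).ncard
        = (T.filter fun u => (K n □ K m).Adj v u).card := by
      rw [Set.ncard_eq_toFinset_card _ (Set.toFinite _)]
      congr 1
      ext u
      simp only [Set.Finite.mem_toFinset, Finset.mem_filter, hmem u, Set.mem_inter_iff,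
        Set.mem_setOf_eq]
    omega
  set r : Fin n → ℕ := fun a => (T.filter fun p => p.1 = a).card with hrdef
  set c : Fin m → ℕ := fun b => (T.filter fun p => p.2 = b).card with hcdef
  have hsum_r : T.card = ∑ a, r a :=
    Finset.card_eq_sum_card_fiberwise (f := Prod.fst) (fun x _ => Finset.mem_univ _)
  have hsum_c : T.card = ∑ b, c b :=
    Finset.card_eq_sum_card_fiberwise (f := Prod.snd) (fun x _ => Finset.mem_univ _)
  rw [hcard]
  by_cases hall : ∀ a : Fin n, 2 ≤ r a
  · -- every row has ≥ 2: |T| ≥ 2n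
    have h2n : 2 * n ≤ T.card := by
      rw [hsum_r]
      calc 2 * n = ∑ _a : Fin n, 2 := by simp [mul_comm]
      _ ≤ ∑ a, r a := Finset.sum_le_sum fun a _ => hall a
    have := min_le_left n m
    omega
  · push_neg at hall
    obtain ⟨a, ha⟩ := hall
    interval_cases hra : r a
    · -- row a empty: every column has ≥ 2
      have hempty : T.filter (fun p => p.1 = a) = ∅ := Finset.card_eq_zero.mp hra
      have hcol : ∀ b, 2 ≤ c b := by
        intro b
        refine le_trans (key (a, b)) (Finset.card_le_card ?_)
        intro u hu
        simp only [Finset.mem_filter] at hu ⊢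
        obtain ⟨huT, hadj⟩ := hu
        rw [Kadj] at hadj
        rcases hadj with ⟨h1, _⟩ | ⟨_, h2'⟩
        · exfalso
          have hmem2 : u ∈ T.filter (fun p => p.1 = a) :=
            Finset.mem_filter.mpr ⟨huT, h1.symm⟩
          rw [hempty] at hmem2
          exact Finset.notMem_empty u hmem2
        · exact ⟨huT, h2'.symm⟩
      have h2m : 2 * m ≤ T.card := by
        rw [hsum_c]
        calc 2 * m = ∑ _b : Fin m, 2 := by simp [mul_comm]
        _ ≤ ∑ b, c b := Finset.sum_le_sum fun b _ => hcol b
      have := min_le_right n m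
      omega
    · -- row a has exactly one element p = (a, b)
      obtain ⟨p, hp⟩ := Finset.card_eq_one.mp hra
      have hpmem : p ∈ T.filter (fun q => q.1 = a) := by rw [hp]; exact Finset.mem_singleton_self p
      have hpT : p ∈ T := (Finset.mem_filter.mp hpmem).1
      have hpa : p.1 = a := (Finset.mem_filter.mp hpmem).2
      set b : Fin m := p.2 with hbdef
      -- c b ≥ 3
      have hsub : T.filter (fun u => (K n □ K m).Adj p u)
          ⊆ (T.filter fun q => q.2 = b).erase p := by
        intro u hu
        simp only [Finset.mem_filter] at hu
        obtain ⟨huT, hadj⟩ := hu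
        rw [Kadj] at hadj
        rcases hadj with ⟨h1, h2'⟩ | ⟨h1, h2'⟩
        · exfalso
          have : u ∈ T.filter (fun q => q.1 = a) :=
            Finset.mem_filter.mpr ⟨huT, by rw [← h1, hpa]⟩
          rw [hp, Finset.mem_singleton] at this
          exact h2' (by rw [this])
        · refine Finset.mem_erase.mpr ⟨?_, Finset.mem_filter.mpr ⟨huT, h2'.symm⟩⟩
          intro hup
          exact h1 (by rw [hup])
      have hpb : p ∈ T.filter fun q => q.2 = b := Finset.mem_filter.mpr ⟨hpT, rfl⟩
      have hcb : 3 ≤ c b := by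
        have h1 := le_trans (key p) (Finset.card_le_card hsub)
        have h2 := Finset.card_erase_of_mem hpb
        have h3 : 0 < (T.filter fun q => q.2 = b).card := Finset.card_pos.mpr ⟨p, hpb⟩
        simp only [hcdef]
        omega
      -- every other column nonempty
      have hcb' : ∀ b', b' ≠ b → 1 ≤ c b' := by
        intro b' hb'
        by_contra hc
        have hcz : T.filter (fun q => q.2 = b') = ∅ := by
          apply Finset.card_eq_zero.mp
          simp only [hcdef] at hc
          omega
        have hsub2 : T.filter (fun u => (K n □ K m).Adj (a, b') u) ⊆ {p} := by
          intro u hu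
          simp only [Finset.mem_filter] at hu
          obtain ⟨huT, hadj⟩ := hu
          rw [Kadj] at hadj
          rcases hadj with ⟨h1, _⟩ | ⟨_, h2'⟩
          · have : u ∈ T.filter (fun q => q.1 = a) :=
              Finset.mem_filter.mpr ⟨huT, h1.symm⟩
            rw [hp] at this
            exact this
          · exfalso
            have hmem2 : u ∈ T.filter (fun q => q.2 = b') :=
              Finset.mem_filter.mpr ⟨huT, h2'.symm⟩
            rw [hcz] at hmem2
            exact Finset.notMem_empty u hmem2
        have h21 := le_trans (key (a, b')) (Finset.card_le_card hsub2)
        rw [Finset.card_singleton] at h21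
        omega
      -- sum over columns: ≥ m + 2
      have hsplit : ∑ b'' , c b'' = c b + ∑ b'' ∈ Finset.univ.erase b, c b'' :=
        (Finset.add_sum_erase _ c (Finset.mem_univ b)).symm
      have hrest : (Finset.univ.erase b).card ≤ ∑ b'' ∈ Finset.univ.erase b, c b'' := by
        calc (Finset.univ.erase b).card = ∑ _b'' ∈ Finset.univ.erase b, 1 := by simp
        _ ≤ ∑ b'' ∈ Finset.univ.erase b, c b'' :=
          Finset.sum_le_sum fun b'' hb'' => hcb' b'' (Finset.mem_erase.mp hb'').1
      have hcardrest : (Finset.univ.erase b).card = m - 1 := by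
        rw [Finset.card_erase_of_mem (Finset.mem_univ b), Finset.card_univ, Fintype.card_fin]
      have hm2 : m + 2 ≤ T.card := by
        rw [hsum_c, hsplit]
        omega
      have := min_le_right n m
      omega

theorem stmt_0 (n m : ℕ) (hn : 2 ≤ n) (hm : 2 ≤ m) :
    min n m + 2 ≤ gamma2t (K n □ K m) ∧ gamma2t (K n □ K m) ≤ 2 * min n m := by
  constructor
  · apply le_csInf
    · exact ⟨_, {p : Fin n × Fin m | p.1 = ⟨0, by omega⟩ ∨ p.1 = ⟨1, by omega⟩},
        rows_dom hn hm, rfl⟩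
    · rintro k ⟨S, hS, rfl⟩
      exact lower_bound hn hm S hS
  · rcases le_total n m with hle | hle
    · -- min = n, use two columns (size ≤ 2n)
      have h1 : gamma2t (K n □ K m)
          ≤ ({p : Fin n × Fin m | p.2 = ⟨0, by omega⟩ ∨ p.2 = ⟨1, by omega⟩} : Set _).ncard :=
        Nat.sInf_le ⟨_, cols_dom hn hm, rfl⟩
      have h2 := cols_card (n := n) (m := m) ⟨0, by omega⟩ ⟨1, by omega⟩
      have : min n m = n := min_eq_left hle
      omega
    · have h1 : gamma2t (K n □ K m)
          ≤ ({p : Fin n × Fin m | p.1 = ⟨0, by omega⟩ ∨ p.1 = ⟨1, by omega⟩} : Set _).ncard :=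
        Nat.sInf_le ⟨_, rows_dom hn hm, rfl⟩
      have h2 := rows_card (n := n) (m := m) ⟨0, by omega⟩ ⟨1, by omega⟩
      have : min n m = m := min_eq_right hle
      omega
end

section
/- For every integer m ≥ 2, the total 2-domination number of K_2 □ K_m equals 4. -/
open SimpleGraph

lemma two_le_ncard {α : Type*} {s : Set α} (hf : s.Finite) {a b : α}
    (ha : a ∈ s) (hb : b ∈ s) (hab : a ≠ b) : 2 ≤ s.ncard := by
  have : 1 < s.ncard := (Set.one_lt_ncard hf).2 ⟨a, ha, b, hb, hab⟩
  omega

lemma Kadj_s1 {n : ℕ} {a b : Fin n} : (K n).Adj a b ↔ a ≠ b := by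
  simp [K]

lemma upper (m : ℕ) (hm : 2 ≤ m) :
    ∃ S : Set (Fin 2 × Fin m), TotalTwoDom (K 2 □ K m) S ∧ S.ncard = 4 := by
  set v0 : Fin m := ⟨0, by omega⟩ with hv0
  set v1 : Fin m := ⟨1, by omega⟩ with hv1
  have h01 : v0 ≠ v1 := by simp [hv0, hv1, Fin.ext_iff]
  refine ⟨{(0, v0), (0, v1), (1, v0), (1, v1)}, ?_, ?_⟩
  · intro v
    obtain ⟨a, b⟩ := v
    have hmemS : ∀ x : Fin 2, ∀ c : Fin m, c = v0 ∨ c = v1 →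
        (x, c) ∈ ({(0, v0), (0, v1), (1, v0), (1, v1)} : Set (Fin 2 × Fin m)) := by
      intro x c hc
      fin_cases x <;> rcases hc with rfl | rfl <;> simp
    have hane : a ≠ a + 1 := by fin_cases a <;> decide
    by_cases hb0 : b = v0
    · apply two_le_ncard (Set.toFinite _) (a := (a, v1)) (b := (a + 1, v0))
      · exact ⟨hmemS _ _ (Or.inr rfl), boxProd_adj.2 (Or.inr ⟨Kadj_s1.2 (hb0 ▸ h01), rfl⟩)⟩
      · exact ⟨hmemS _ _ (Or.inl rfl), boxProd_adj.2 (Or.inl ⟨Kadj_s1.2 hane, hb0⟩)⟩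
      · intro h; have h2 := congrArg Prod.snd h; simp only [] at h2; exact h01 h2.symm
    · by_cases hb1 : b = v1
      · apply two_le_ncard (Set.toFinite _) (a := (a, v0)) (b := (a + 1, v1))
        · exact ⟨hmemS _ _ (Or.inl rfl), boxProd_adj.2 (Or.inr ⟨Kadj_s1.2 hb0, rfl⟩)⟩
        · exact ⟨hmemS _ _ (Or.inr rfl), boxProd_adj.2 (Or.inl ⟨Kadj_s1.2 hane, hb1⟩)⟩
        · intro h; have h2 := congrArg Prod.snd h; simp only [] at h2; exact h01 h2
      · apply two_le_ncard (Set.toFinite _) (a := (a, v0)) (b := (a, v1))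
        · exact ⟨hmemS _ _ (Or.inl rfl), boxProd_adj.2 (Or.inr ⟨Kadj_s1.2 hb0, rfl⟩)⟩
        · exact ⟨hmemS _ _ (Or.inr rfl), boxProd_adj.2 (Or.inr ⟨Kadj_s1.2 hb1, rfl⟩)⟩
        · intro h; have h2 := congrArg Prod.snd h; simp only [] at h2; exact h01 h2
  · rw [Set.ncard_insert_of_notMem (by simp [Prod.ext_iff, h01]),
      Set.ncard_insert_of_notMem (by simp [Prod.ext_iff]),
      Set.ncard_insert_of_notMem (by simp [Prod.ext_iff, h01]),
      Set.ncard_singleton]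

lemma row_two (m : ℕ) (hm : 2 ≤ m) (S : Set (Fin 2 × Fin m))
    (hS : TotalTwoDom (K 2 □ K m) S) (i : Fin 2) :
    2 ≤ (S ∩ {p | p.1 = i}).ncard := by
  by_contra hlt
  push_neg at hlt
  have hle : (S ∩ {p | p.1 = i}).ncard ≤ 1 := by omega
  have hsub := (Set.ncard_le_one (Set.toFinite _)).1 hle
  -- choose c
  rcases (S ∩ {p | p.1 = i}).eq_empty_or_nonempty with hemp | ⟨x, hx⟩
  · -- no element of S in row i; vertex (i, 0) has neighbors only (i+1, 0) in S
    set v : Fin 2 × Fin m := (i, ⟨0, by omega⟩) with hv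
    have h1 : (S ∩ {u | (K 2 □ K m).Adj v u}).ncard ≤ 1 := by
      apply (Set.ncard_le_one (Set.toFinite _)).2
      intro a ha b hb
      have key : ∀ u : Fin 2 × Fin m, u ∈ S ∩ {u | (K 2 □ K m).Adj v u} →
          u.1 ≠ i ∧ u.2 = v.2 := by
        intro u ⟨huS, hadj⟩
        rcases boxProd_adj.1 hadj with ⟨h1, h2⟩ | ⟨h1, h2⟩
        · exact ⟨(Kadj_s1.1 h1).symm, h2.symm⟩
        · exfalso
          have : u ∈ S ∩ {p | p.1 = i} := ⟨huS, h2.symm⟩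
          rw [hemp] at this; exact this
      obtain ⟨ha1, ha2⟩ := key a ha
      obtain ⟨hb1, hb2⟩ := key b hb
      have : a.1 = b.1 := by fin_cases i <;> omega
      exact Prod.ext this (ha2.trans hb2.symm)
    have := hS v; omega
  · -- S ∩ row i = {x}
    set v : Fin 2 × Fin m := (i, x.2) with hv
    have hxv : x = v := Prod.ext hx.2 rfl
    have h1 : (S ∩ {u | (K 2 □ K m).Adj v u}).ncard ≤ 1 := by
      apply (Set.ncard_le_one (Set.toFinite _)).2
      intro a ha b hb
      have key : ∀ u : Fin 2 × Fin m, u ∈ S ∩ {u | (K 2 □ K m).Adj v u} →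
          u.1 ≠ i ∧ u.2 = v.2 := by
        intro u ⟨huS, hadj⟩
        rcases boxProd_adj.1 hadj with ⟨h1, h2⟩ | ⟨h1, h2⟩
        · exact ⟨(Kadj_s1.1 h1).symm, h2.symm⟩
        · exfalso
          have hu : u ∈ S ∩ {p | p.1 = i} := ⟨huS, h2.symm⟩
          have : u = x := hsub u hu x hx
          exact (Kadj_s1.1 h1) (by rw [this, hxv])
      obtain ⟨ha1, ha2⟩ := key a ha
      obtain ⟨hb1, hb2⟩ := key b hb
      have : a.1 = b.1 := by fin_cases i <;> omega
      exact Prod.ext this (ha2.trans hb2.symm)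
    have := hS v; omega

lemma lower (m : ℕ) (hm : 2 ≤ m) (S : Set (Fin 2 × Fin m))
    (hS : TotalTwoDom (K 2 □ K m) S) : 4 ≤ S.ncard := by
  have h0 := row_two m hm S hS 0
  have h1 := row_two m hm S hS 1
  have hunion : S = (S ∩ {p | p.1 = 0}) ∪ (S ∩ {p | p.1 = 1}) := by
    ext p
    constructor
    · intro hp
      have : p.1 = 0 ∨ p.1 = 1 := by omega
      rcases this with h | h
      · exact Or.inl ⟨hp, h⟩
      · exact Or.inr ⟨hp, h⟩
    · rintro (⟨hp, _⟩ | ⟨hp, _⟩) <;> exact hp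
  have hdisj : Disjoint (S ∩ {p | p.1 = 0}) (S ∩ {p | p.1 = 1}) := by
    rw [Set.disjoint_left]
    rintro p ⟨_, h0'⟩ ⟨_, h1'⟩
    simp only [Set.mem_setOf_eq] at h0' h1'
    rw [h0'] at h1'; exact absurd h1' (by decide)
  have := Set.ncard_union_eq hdisj (Set.toFinite _) (Set.toFinite _)
  rw [← hunion] at this
  omega

theorem stmt_1 (m : ℕ) (hm : 2 ≤ m) : gamma2t (K 2 □ K m) = 4 := by
  obtain ⟨S, hS, hc⟩ := upper m hm
  have hmem : 4 ∈ {k | ∃ S : Set (Fin 2 × Fin m), TotalTwoDom (K 2 □ K m) S ∧ S.ncard = k} :=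
    ⟨S, hS, hc⟩
  refine le_antisymm (Nat.sInf_le hmem) (le_csInf ⟨4, hmem⟩ ?_)
  rintro k ⟨T, hT, rfl⟩
  exact lower m hm T hT
end

section
/- For all integers 2 ≤ n ≤ m, γ_{2t}(K_n □ K_m) ≥ min{m + 2, 2n}. -/
open SimpleGraph

open Finset in
/-- Key pointwise inequality: for any vertex `v`, row count + column count of `S`
is at least `2` plus `2` if `v ∈ S`. -/
lemma key_ineq {n m : ℕ} (S : Set (Fin n × Fin m)) (hS : TotalTwoDom (K n □ K m) S)
    (T : Finset (Fin n × Fin m)) (hT : ∀ u, u ∈ T ↔ u ∈ S) (v : Fin n × Fin m) :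
    2 + (if v ∈ T then 2 else 0) ≤
      (T.filter fun p => p.1 = v.1).card + (T.filter fun p => p.2 = v.2).card := by
  classical
  have hadj : ∀ u, (K n □ K m).Adj v u ↔
      (v.1 ≠ u.1 ∧ v.2 = u.2) ∨ (v.2 ≠ u.2 ∧ v.1 = u.1) := by
    intro u
    simp [K, boxProd_adj, top_adj]
  have hset : S ∩ {u | (K n □ K m).Adj v u}
      = ((T.filter fun u => (K n □ K m).Adj v u : Finset _) : Set _) := by
    ext u
    simp only [Set.mem_inter_iff, Set.mem_setOf_eq, Finset.coe_filter, Finset.mem_filter, hT]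
  have hcard : 2 ≤ (T.filter fun u => (K n □ K m).Adj v u).card := by
    have := hS v
    rwa [hset, Set.ncard_coe_finset] at this
  have hsplit : T.filter (fun u => (K n □ K m).Adj v u)
      = (T.filter fun p => p.2 = v.2).erase v ∪ (T.filter fun p => p.1 = v.1).erase v := by
    ext u
    simp only [mem_filter, mem_union, mem_erase, hadj]
    constructor
    · rintro ⟨hu, h | h⟩
      · exact Or.inl ⟨fun he => h.1 (by rw [he]), hu, h.2.symm⟩
      · exact Or.inr ⟨fun he => h.1 (by rw [he]), hu, h.2.symm⟩
    · rintro (⟨hne, hu, h2⟩ | ⟨hne, hu, h1⟩)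
      · refine ⟨hu, Or.inl ⟨fun he => hne ?_, h2.symm⟩⟩
        exact Prod.ext_iff.mpr ⟨he.symm, h2⟩
      · refine ⟨hu, Or.inr ⟨fun he => hne ?_, h1.symm⟩⟩
        exact Prod.ext_iff.mpr ⟨h1, he.symm⟩
  have hdisj : Disjoint ((T.filter fun p => p.2 = v.2).erase v)
      ((T.filter fun p => p.1 = v.1).erase v) := by
    simp only [Finset.disjoint_left, mem_erase, mem_filter]
    rintro u ⟨hne, _, h2⟩ ⟨_, _, h1⟩
    exact hne (Prod.ext_iff.mpr ⟨h1, h2⟩)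
  rw [hsplit, Finset.card_union_of_disjoint hdisj] at hcard
  have hc : ((T.filter fun p => p.2 = v.2).erase v).card
      = if v ∈ T then (T.filter fun p => p.2 = v.2).card - 1
        else (T.filter fun p => p.2 = v.2).card := by
    by_cases hv : v ∈ T
    · rw [if_pos hv, Finset.card_erase_of_mem (by simp [hv])]
    · rw [if_neg hv, Finset.erase_eq_of_notMem (by simp [hv])]
  have hr : ((T.filter fun p => p.1 = v.1).erase v).card
      = if v ∈ T then (T.filter fun p => p.1 = v.1).card - 1
        else (T.filter fun p => p.1 = v.1).card := by
    by_cases hv : v ∈ T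
    · rw [if_pos hv, Finset.card_erase_of_mem (by simp [hv])]
    · rw [if_neg hv, Finset.erase_eq_of_notMem (by simp [hv])]
  by_cases hv : v ∈ T
  · have hc1 : 1 ≤ (T.filter fun p => p.2 = v.2).card :=
      Finset.card_pos.mpr ⟨v, by simp [hv]⟩
    have hr1 : 1 ≤ (T.filter fun p => p.1 = v.1).card :=
      Finset.card_pos.mpr ⟨v, by simp [hv]⟩
    rw [hc, hr, if_pos hv, if_pos hv] at hcard
    simp only [if_pos hv]
    omega
  · rw [hc, hr, if_neg hv, if_neg hv] at hcard
    simp only [if_neg hv]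
    omega

open Finset in
/-- Lower bound for the cardinality of any total 2-dominating set. -/
lemma main_bound {n m : ℕ} (hn : 2 ≤ n) (hnm : n ≤ m) (S : Set (Fin n × Fin m))
    (hS : TotalTwoDom (K n □ K m) S) : min (m + 2) (2 * n) ≤ S.ncard := by
  classical
  have hfin : S.Finite := Set.toFinite S
  set T : Finset (Fin n × Fin m) := hfin.toFinset with hTdef
  have hT : ∀ u, u ∈ T ↔ u ∈ S := fun u => hfin.mem_toFinset
  have hncard : S.ncard = T.card := Set.ncard_eq_toFinset_card S hfin
  set r : Fin n → ℕ := fun i => (T.filter fun p => p.1 = i).card with hrdef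
  set c : Fin m → ℕ := fun j => (T.filter fun p => p.2 = j).card with hcdef
  have hrsum : ∑ i, r i = T.card :=
    (Finset.card_eq_sum_card_fiberwise (fun x _ => Finset.mem_univ x.1)).symm
  have hcsum : ∑ j, c j = T.card :=
    (Finset.card_eq_sum_card_fiberwise (fun x _ => Finset.mem_univ x.2)).symm
  have key : ∀ v : Fin n × Fin m, 2 + (if v ∈ T then 2 else 0) ≤ r v.1 + c v.2 :=
    fun v => key_ineq S hS T hT v
  rw [hncard]
  -- Case A: some column is empty
  by_cases hcol : ∃ j, c j = 0
  · obtain ⟨j, hj⟩ := hcol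
    have hrall : ∀ i, 2 ≤ r i := by
      intro i
      have hk := key (i, j)
      have hnotin : (i, j) ∉ T := by
        intro hin
        have : 1 ≤ c j := Finset.card_pos.mpr ⟨(i, j), by simp [hin]⟩
        omega
      rw [if_neg hnotin] at hk
      simpa [hj] using hk
    have : 2 * n ≤ T.card := by
      calc 2 * n = ∑ _i : Fin n, 2 := by simp [mul_comm]
      _ ≤ ∑ i, r i := Finset.sum_le_sum fun i _ => hrall i
      _ = T.card := hrsum
    omega
  -- Case B: some row is empty
  by_cases hrow : ∃ i, r i = 0
  · obtain ⟨i, hi⟩ := hrow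
    have hcall : ∀ j, 2 ≤ c j := by
      intro j
      have hk := key (i, j)
      have hnotin : (i, j) ∉ T := by
        intro hin
        have : 1 ≤ r i := Finset.card_pos.mpr ⟨(i, j), by simp [hin]⟩
        omega
      rw [if_neg hnotin] at hk
      simpa [hi] using hk
    have h2m : 2 * m ≤ T.card := by
      calc 2 * m = ∑ _j : Fin m, 2 := by simp [mul_comm]
      _ ≤ ∑ j, c j := Finset.sum_le_sum fun j _ => hcall j
      _ = T.card := hcsum
    have : 2 * n ≤ 2 * m := by omega
    omega
  push_neg at hcol hrow
  -- Case C: all rows and columns nonempty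
  by_cases hr2 : ∀ i, 2 ≤ r i
  · have : 2 * n ≤ T.card := by
      calc 2 * n = ∑ _i : Fin n, 2 := by simp [mul_comm]
      _ ≤ ∑ i, r i := Finset.sum_le_sum fun i _ => hr2 i
      _ = T.card := hrsum
    omega
  push_neg at hr2
  obtain ⟨i₀, hi₀⟩ := hr2
  have hri₀ : r i₀ = 1 := by
    have := hrow i₀
    omega
  obtain ⟨v, hv⟩ := Finset.card_eq_one.mp hri₀
  have hvmem : v ∈ T ∧ v.1 = i₀ := by
    have : v ∈ T.filter fun p => p.1 = i₀ := by rw [hv]; exact Finset.mem_singleton_self v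
    simpa using this
  have hkey := key v
  rw [if_pos hvmem.1, hvmem.2, hri₀] at hkey
  have hc3 : 3 ≤ c v.2 := by omega
  have hsum : m + 2 ≤ ∑ j, c j := by
    calc m + 2 = ∑ j : Fin m, (1 + if j = v.2 then 2 else 0) := by
          rw [Finset.sum_add_distrib]
          simp [Finset.sum_ite_eq']
      _ ≤ ∑ j, c j := by
          refine Finset.sum_le_sum fun j _ => ?_
          by_cases hj : j = v.2
          · subst hj; simpa using hc3
          · have := hcol j
            simp [hj]
            omega
  rw [hcsum] at hsum
  omega

open Finset in
lemma univ_total {n m : ℕ} (hn : 2 ≤ n) (hm : 2 ≤ m) :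
    TotalTwoDom (K n □ K m) (Set.univ : Set (Fin n × Fin m)) := by
  intro v
  obtain ⟨i', hi'⟩ := Fintype.exists_ne_of_one_lt_card (by simp; omega) v.1
  obtain ⟨j', hj'⟩ := Fintype.exists_ne_of_one_lt_card (by simp; omega) v.2
  have hab : ((i', v.2) : Fin n × Fin m) ≠ (v.1, j') := by
    intro h
    exact hi' (congrArg Prod.fst h)
  have hsub : ({(i', v.2), (v.1, j')} : Set (Fin n × Fin m)) ⊆
      Set.univ ∩ {u | (K n □ K m).Adj v u} := by
    rintro u (hu | hu)
    · subst hu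
      exact ⟨trivial, Or.inl ⟨Ne.symm hi', rfl⟩⟩
    · simp only [Set.mem_singleton_iff] at hu
      subst hu
      exact ⟨trivial, Or.inr ⟨Ne.symm hj', rfl⟩⟩
  calc 2 = ({(i', v.2), (v.1, j')} : Set (Fin n × Fin m)).ncard := (Set.ncard_pair hab).symm
    _ ≤ _ := Set.ncard_le_ncard hsub (Set.toFinite _)

theorem stmt_2 (n m : ℕ) (hn : 2 ≤ n) (hnm : n ≤ m) :
    min (m + 2) (2 * n) ≤ gamma2t (K n □ K m) := by
  have hm : 2 ≤ m := le_trans hn hnm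
  apply le_csInf
  · exact ⟨(Set.univ : Set (Fin n × Fin m)).ncard, Set.univ, univ_total hn hm, rfl⟩
  · rintro k ⟨S, hS, rfl⟩
    exact main_bound hn hnm S hS
end

section
/- For all integers 2 ≤ n ≤ m, γ_{2t}(K_n □ K_m) ≤ γ_{2t}(K_n □ K_{m+1}) ≤ γ_{2t}(K_n □ K_m) + 1. -/
open SimpleGraph

open Finset
open scoped Classical

namespace G2T

variable {a b : ℕ}

def rowc (F : Finset (Fin a × Fin b)) (i : Fin a) : ℕ := (F.filter (fun p => p.1 = i)).card
def colc (F : Finset (Fin a × Fin b)) (j : Fin b) : ℕ := (F.filter (fun p => p.2 = j)).card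

def Good (F : Finset (Fin a × Fin b)) : Prop :=
  ∀ v, 2 + (if v ∈ F then 2 else 0) ≤ rowc F v.1 + colc F v.2

noncomputable def toF (S : Set (Fin a × Fin b)) : Finset (Fin a × Fin b) :=
  Finset.univ.filter (· ∈ S)

lemma card_eq_sum_rowc (F : Finset (Fin a × Fin b)) : F.card = ∑ i, rowc F i :=
  Finset.card_eq_sum_card_fiberwise (by simp)

lemma card_eq_sum_colc (F : Finset (Fin a × Fin b)) : F.card = ∑ j, colc F j :=
  Finset.card_eq_sum_card_fiberwise (by simp)

lemma rowc_eq (F : Finset (Fin a × Fin b)) (i : Fin a) :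
    rowc F i = (Finset.univ.filter (fun j => (i, j) ∈ F)).card := by
  rw [rowc]
  apply Finset.card_bij (fun p _ => p.2)
  · intro p hp; simp at hp ⊢; rw [← hp.2]; simpa using hp.1
  · intro p hp q hq h; simp at hp hq; ext
    · rw [hp.2, hq.2]
    · exact congrArg Fin.val h
  · intro j hj; simp at hj; exact ⟨(i, j), by simpa using hj, rfl⟩

lemma colc_eq (F : Finset (Fin a × Fin b)) (j : Fin b) :
    colc F j = (Finset.univ.filter (fun i => (i, j) ∈ F)).card := by
  rw [colc]
  apply Finset.card_bij (fun p _ => p.1)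
  · intro p hp; simp at hp ⊢; rw [← hp.2]; simpa using hp.1
  · intro p hp q hq h; simp at hp hq; ext
    · exact congrArg Fin.val h
    · rw [hp.2, hq.2]
  · intro i hi; simp at hi; exact ⟨(i, j), by simpa using hi, rfl⟩

lemma colc_le (F : Finset (Fin a × Fin b)) (j : Fin b) : colc F j ≤ a := by
  rw [colc_eq]
  calc (Finset.univ.filter (fun i => (i, j) ∈ F)).card ≤ (Finset.univ : Finset (Fin a)).card :=
        Finset.card_filter_le _ _
    _ = a := by simp

lemma adj_iff (v u : Fin a × Fin b) : (K a □ K b).Adj v u ↔ ((u.1 = v.1 ∨ u.2 = v.2) ∧ u ≠ v) := by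
  rw [SimpleGraph.boxProd_adj]
  simp only [K, top_adj]
  constructor
  · rintro (⟨h1, h2⟩ | ⟨h1, h2⟩)
    · exact ⟨Or.inr h2.symm, fun he => h1 (congrArg Prod.fst he).symm⟩
    · exact ⟨Or.inl h2.symm, fun he => h1 (congrArg Prod.snd he).symm⟩
  · rintro ⟨h1 | h1, h2⟩
    · exact Or.inr ⟨fun he => h2 (Prod.ext h1 he.symm), h1.symm⟩
    · exact Or.inl ⟨fun he => h2 (Prod.ext he.symm h1), h1.symm⟩

lemma nbr_card (F : Finset (Fin a × Fin b)) (v : Fin a × Fin b) :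
    (F.filter (fun u => (K a □ K b).Adj v u)).card + (if v ∈ F then 2 else 0)
      = rowc F v.1 + colc F v.2 := by
  classical
  set A := F.filter (fun p => p.1 = v.1) with hA
  set B := F.filter (fun p => p.2 = v.2) with hB
  have hfil : F.filter (fun u => (K a □ K b).Adj v u) = (A ∪ B).erase v := by
    ext p
    simp only [mem_filter, adj_iff, mem_erase, mem_union, hA, hB]
    tauto
  have hAB : A ∩ B = F.filter (fun p => p = v) := by
    ext p
    simp only [mem_inter, mem_filter, hA, hB, Prod.ext_iff]
    tauto
  have hcard : (A ∪ B).card + (A ∩ B).card = A.card + B.card :=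
    Finset.card_union_add_card_inter A B
  rw [hfil]
  by_cases hv : v ∈ F
  · have h1 : A ∩ B = {v} := by
      rw [hAB]; ext p; simp only [mem_filter, mem_singleton]
      exact ⟨fun h => h.2, fun h => ⟨h ▸ hv, h⟩⟩
    have hvAB : v ∈ A ∪ B := by simp [hA, hB, mem_union, mem_filter, hv]
    have h2 : ((A ∪ B).erase v).card + 1 = (A ∪ B).card := Finset.card_erase_add_one hvAB
    rw [h1] at hcard
    simp only [Finset.card_singleton] at hcard
    simp only [hv, if_true]
    rw [rowc, colc, ← hA, ← hB]
    omega
  · have h1 : A ∩ B = ∅ := by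
      rw [hAB, Finset.filter_eq_empty_iff]
      rintro p hp rfl; exact hv hp
    have hvAB : v ∉ A ∪ B := by
      simp only [mem_union, hA, hB, mem_filter]
      rintro (⟨h, -⟩ | ⟨h, -⟩) <;> exact hv h
    rw [Finset.erase_eq_of_notMem hvAB]
    rw [h1] at hcard
    simp only [Finset.card_empty, add_zero] at hcard
    simp only [hv, if_false]
    rw [rowc, colc, ← hA, ← hB]
    omega

lemma ncard_nbhd (S : Set (Fin a × Fin b)) (v : Fin a × Fin b) :
    (S ∩ {u | (K a □ K b).Adj v u}).ncard
      = ((toF S).filter (fun u => (K a □ K b).Adj v u)).card := by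
  rw [Set.ncard_eq_toFinset_card']
  congr 1
  ext p
  simp [Set.mem_toFinset, toF]

lemma ncard_toF (S : Set (Fin a × Fin b)) : S.ncard = (toF S).card := by
  rw [Set.ncard_eq_toFinset_card']
  congr 1
  ext p
  simp [Set.mem_toFinset, toF]

lemma ttd_iff (S : Set (Fin a × Fin b)) :
    TotalTwoDom (K a □ K b) S ↔ Good (toF S) := by
  unfold TotalTwoDom Good
  constructor
  · intro h v
    have h1 := h v
    rw [ncard_nbhd] at h1
    have h2 := nbr_card (toF S) v
    by_cases hv : v ∈ toF S <;> simp only [hv, if_true, if_false] at h2 ⊢ <;> omega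
  · intro h v
    have h1 := h v
    rw [ncard_nbhd]
    have h2 := nbr_card (toF S) v
    by_cases hv : v ∈ toF S <;> simp only [hv, if_true, if_false] at h1 h2 <;> omega

lemma gamma_le_of_good (F : Finset (Fin a × Fin b)) (h : Good F) :
    gamma2t (K a □ K b) ≤ F.card := by
  apply Nat.sInf_le
  have he : toF (↑F : Set (Fin a × Fin b)) = F := by
    ext p; simp [toF]
  refine ⟨(↑F : Set _), ?_, Set.ncard_coe_finset F⟩
  rw [ttd_iff, he]
  exact h

lemma good_univ (ha : 2 ≤ a) (hb : 2 ≤ b) : Good (Finset.univ : Finset (Fin a × Fin b)) := by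
  intro v
  have h1 : rowc (Finset.univ : Finset (Fin a × Fin b)) v.1 = b := by
    rw [rowc_eq]; simp
  have h2 : colc (Finset.univ : Finset (Fin a × Fin b)) v.2 = a := by
    rw [colc_eq]; simp
  rw [h1, h2]
  simp only [Finset.mem_univ, if_true]
  omega

lemma exists_opt (ha : 2 ≤ a) (hb : 2 ≤ b) :
    ∃ F : Finset (Fin a × Fin b), Good F ∧ F.card = gamma2t (K a □ K b) := by
  have hne : {k | ∃ S : Set (Fin a × Fin b), TotalTwoDom (K a □ K b) S ∧ S.ncard = k}.Nonempty := by
    refine ⟨(Set.univ : Set (Fin a × Fin b)).ncard, Set.univ, ?_, rfl⟩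
    rw [ttd_iff]
    have he : toF (Set.univ : Set (Fin a × Fin b)) = Finset.univ := by
      ext p; simp [toF]
    rw [he]
    exact good_univ ha hb
  obtain ⟨S, hS, hc⟩ := Nat.sInf_mem hne
  exact ⟨toF S, (ttd_iff S).1 hS, by rw [← ncard_toF]; exact hc⟩

def emb2 : Fin a × Fin b ↪ Fin a × Fin (b + 1) :=
  ⟨fun p => (p.1, p.2.castSucc), by
    intro p q h
    rw [Prod.ext_iff] at h ⊢
    exact ⟨h.1, Fin.castSucc_injective b h.2⟩⟩

lemma mem_map_emb2 (F : Finset (Fin a × Fin b)) (i : Fin a) (j : Fin b) :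
    (i, j.castSucc) ∈ F.map emb2 ↔ (i, j) ∈ F := by
  simp only [Finset.mem_map, emb2, Function.Embedding.coeFn_mk, Prod.ext_iff]
  constructor
  · rintro ⟨q, hq, h1, h2⟩
    have : q = (i, j) := Prod.ext h1 (Fin.castSucc_injective b h2)
    rwa [← this]
  · intro h
    exact ⟨(i, j), h, rfl, rfl⟩

lemma not_mem_map_emb2_last (F : Finset (Fin a × Fin b)) (i : Fin a) :
    (i, Fin.last b) ∉ F.map emb2 := by
  simp only [Finset.mem_map, emb2, Function.Embedding.coeFn_mk, Prod.ext_iff]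
  rintro ⟨q, hq, h1, h2⟩
  exact absurd h2 (Fin.castSucc_lt_last q.2).ne

lemma rowc_map_emb2 (F : Finset (Fin a × Fin b)) (i : Fin a) :
    rowc (F.map emb2) i = rowc F i := by
  unfold rowc
  rw [Finset.filter_map]
  rw [Finset.card_map]
  congr 1

lemma colc_map_emb2 (F : Finset (Fin a × Fin b)) (j : Fin b) :
    colc (F.map emb2) j.castSucc = colc F j := by
  unfold colc
  rw [Finset.filter_map, Finset.card_map]
  congr 1
  ext p
  rw [Finset.mem_filter, Finset.mem_filter]
  simp [Function.comp, emb2, Function.Embedding.coeFn_mk, Fin.castSucc_inj]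
  exact fun _ => Fin.castSucc_inj

lemma colc_map_emb2_last (F : Finset (Fin a × Fin b)) :
    colc (F.map emb2) (Fin.last b) = 0 := by
  unfold colc
  rw [Finset.card_eq_zero, Finset.filter_eq_empty_iff]
  intro p hp
  obtain ⟨q, hq, rfl⟩ := Finset.mem_map.1 hp
  exact (Fin.castSucc_lt_last q.2).ne

end G2T

namespace G2T
variable {a b : ℕ}

lemma rowc_mono {F G : Finset (Fin a × Fin b)} (h : F ⊆ G) (i : Fin a) :
    rowc F i ≤ rowc G i :=
  Finset.card_le_card (Finset.filter_subset_filter _ h)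

lemma colc_mono {F G : Finset (Fin a × Fin b)} (h : F ⊆ G) (j : Fin b) :
    colc F j ≤ colc G j :=
  Finset.card_le_card (Finset.filter_subset_filter _ h)

lemma good_two_cols (ha : 2 ≤ a) (hb : 2 ≤ b) :
    ∃ T : Finset (Fin a × Fin b), Good T ∧ T.card = 2 * a := by
  classical
  set T : Finset (Fin a × Fin b) := Finset.univ.filter (fun p => (p.2 : ℕ) < 2) with hT
  have hmem : ∀ v : Fin a × Fin b, v ∈ T ↔ (v.2 : ℕ) < 2 := by intro v; simp [hT]
  have hrow : ∀ i, rowc T i = 2 := by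
    intro i
    rw [rowc_eq]
    have h1 : (Finset.univ.filter (fun j : Fin b => (i, j) ∈ T))
        = Finset.univ.filter (fun j : Fin b => (j : ℕ) < 2) := by
      ext j; simp [hT]
    rw [h1]
    have h2 : (Finset.univ.filter (fun j : Fin b => (j : ℕ) < 2))
        = {(⟨0, by omega⟩ : Fin b), ⟨1, by omega⟩} := by
      ext j
      simp [Fin.ext_iff]
      omega
    rw [h2, Finset.card_insert_of_notMem (by simp [Fin.ext_iff]), Finset.card_singleton]
  have hcolmem : ∀ v : Fin a × Fin b, v ∈ T → colc T v.2 = a := by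
    intro v hv
    rw [colc_eq]
    have h1 : Finset.univ.filter (fun i => (i, v.2) ∈ T) = Finset.univ := by
      ext i
      simp only [Finset.mem_filter, Finset.mem_univ, true_and, iff_true]
      rw [hmem]
      exact (hmem v).1 hv
    rw [h1]; simp
  refine ⟨T, ?_, ?_⟩
  · intro v
    by_cases hv : v ∈ T
    · rw [hrow, hcolmem v hv, if_pos hv]; omega
    · rw [hrow, if_neg hv]; omega
  · rw [card_eq_sum_rowc]
    simp only [hrow, Finset.sum_const, Finset.card_univ, Fintype.card_fin, smul_eq_mul]
    ring

lemma good_P2 {F : Finset (Fin a × Fin b)} (hF : Good F) (i : Fin a) (j : Fin b) :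
    2 ≤ rowc F i + colc F j := by
  have h := hF (i, j)
  by_cases hv : (i, j) ∈ F <;> simp only [hv, if_true, if_false] at h <;> omega

lemma good_P4 {F : Finset (Fin a × Fin b)} (hF : Good F) (v : Fin a × Fin b) (hv : v ∈ F) :
    4 ≤ rowc F v.1 + colc F v.2 := by
  have h := hF v
  simp only [hv, if_true] at h
  omega

lemma part2 (ha : 2 ≤ a) (hab : a ≤ b) (F : Finset (Fin a × Fin b)) (hF : Good F) :
    ∃ T : Finset (Fin a × Fin (b + 1)), Good T ∧ T.card ≤ F.card + 1 := by
  have hb : 2 ≤ b := le_trans ha hab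
  by_cases hall2 : ∀ i, 2 ≤ rowc F i
  · refine ⟨F.map emb2, ?_, by rw [Finset.card_map]; omega⟩
    rintro ⟨i, j2⟩
    rcases Fin.eq_castSucc_or_eq_last j2 with ⟨j, rfl⟩ | rfl
    · dsimp only
      rw [rowc_map_emb2, colc_map_emb2]
      by_cases hm : (i, j) ∈ F
      · rw [if_pos ((mem_map_emb2 F i j).2 hm)]
        have h4 : 4 ≤ rowc F i + colc F j := by simpa using good_P4 hF (i, j) hm
        omega
      · rw [if_neg (fun h => hm ((mem_map_emb2 F i j).1 h))]
        have := good_P2 hF i j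
        omega
    · dsimp only
      rw [rowc_map_emb2, colc_map_emb2_last, if_neg (not_mem_map_emb2_last F i)]
      have := hall2 i
      omega
  · push_neg at hall2
    by_cases hzero : ∃ i0, rowc F i0 = 0
    · obtain ⟨i0, hi0⟩ := hzero
      have hc2 : ∀ j, 2 ≤ colc F j := fun j => by
        have := good_P2 hF i0 j; omega
      have hcard : 2 * b ≤ F.card := by
        rw [card_eq_sum_colc]
        calc 2 * b = ∑ _j : Fin b, 2 := by
              simp [Finset.sum_const, Finset.card_univ, mul_comm]
          _ ≤ ∑ j, colc F j := Finset.sum_le_sum (fun j _ => hc2 j)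
      obtain ⟨T, hT, hTc⟩ := good_two_cols (a := a) (b := b + 1) ha (by omega)
      exact ⟨T, hT, by omega⟩
    · push_neg at hzero
      obtain ⟨i0, hi0lt⟩ := hall2
      have hi0 : rowc F i0 = 1 := by have := hzero i0; omega
      have hstar : ∃ i, 3 ≤ rowc F i := by
        by_contra hno
        push_neg at hno
        have hcol2 : ∀ j, 2 ≤ colc F j := by
          intro j
          rcases Nat.lt_or_ge (colc F j) 2 with h | h
          · exfalso
            have h1 : colc F j = 1 := by have := good_P2 hF i0 j; omega
            obtain ⟨v, hv⟩ := Finset.card_eq_one.1 h1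
            have hvm : v ∈ F.filter (fun p => p.2 = j) := hv ▸ Finset.mem_singleton_self v
            have hvF := Finset.mem_filter.1 hvm
            have h4 := good_P4 hF v hvF.1
            rw [hvF.2] at h4
            have := hno v.1
            omega
          · exact h
        have hge : 2 * b ≤ F.card := by
          rw [card_eq_sum_colc]
          calc 2 * b = ∑ _j : Fin b, 2 := by
                simp [Finset.sum_const, Finset.card_univ, mul_comm]
            _ ≤ ∑ j, colc F j := Finset.sum_le_sum (fun j _ => hcol2 j)
        have hlt : F.card < 2 * a := by
          rw [card_eq_sum_rowc]
          calc ∑ i, rowc F i < ∑ _i : Fin a, 2 :=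
                Finset.sum_lt_sum (fun i _ => by have := hno i; omega)
                  ⟨i0, Finset.mem_univ _, by omega⟩
            _ = 2 * a := by simp [Finset.sum_const, Finset.card_univ, mul_comm]
        omega
      obtain ⟨istar, histar⟩ := hstar
      set v0 : Fin a × Fin (b + 1) := (istar, Fin.last b) with hv0
      set T : Finset (Fin a × Fin (b + 1)) := insert v0 (F.map emb2) with hT
      have hv0n : v0 ∉ F.map emb2 := not_mem_map_emb2_last F istar
      have hsub : F.map emb2 ⊆ T := Finset.subset_insert v0 _
      have hcardT : T.card ≤ F.card + 1 := by
        rw [hT, Finset.card_insert_of_notMem hv0n, Finset.card_map]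
      have hrowT : ∀ i, rowc F i ≤ rowc T i := by
        intro i
        rw [← rowc_map_emb2 F i]
        exact rowc_mono hsub i
      have hrowTstar : rowc T istar = rowc F istar + 1 := by
        have step : rowc T istar = rowc (F.map emb2) istar + 1 := by
          rw [hT, rowc, Finset.filter_insert, if_pos rfl,
            Finset.card_insert_of_notMem (fun h => hv0n (Finset.mem_of_mem_filter _ h))]
          rfl
        rw [step, rowc_map_emb2]
      have hcolT_last : colc T (Fin.last b) = 1 := by
        have hz : (F.map emb2).filter (fun p => p.2 = Fin.last b) = ∅ :=
          Finset.card_eq_zero.1 (colc_map_emb2_last F)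
        unfold colc
        rw [hT, Finset.filter_insert, if_pos rfl, hz]
        simp
      have hcolT_cast : ∀ j : Fin b, colc T j.castSucc = colc F j := by
        intro j
        have h1 : (Fin.last b : Fin (b+1)) ≠ j.castSucc := (Fin.castSucc_lt_last j).ne'
        unfold colc
        rw [hT, Finset.filter_insert, if_neg h1]
        exact colc_map_emb2 F j
      have hmemT : ∀ (i : Fin a) (j : Fin b), ((i, j.castSucc) ∈ T) ↔ (i, j) ∈ F := by
        intro i j
        rw [hT, Finset.mem_insert, mem_map_emb2]
        constructor
        · rintro (h | h)
          · exact absurd (congrArg Prod.snd h) (Fin.castSucc_lt_last j).ne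
          · exact h
        · exact fun h => Or.inr h
      refine ⟨T, ?_, hcardT⟩
      rintro ⟨i, j2⟩
      rcases Fin.eq_castSucc_or_eq_last j2 with ⟨j, rfl⟩ | rfl
      · dsimp only
        rw [hcolT_cast]
        by_cases hm : (i, j) ∈ F
        · rw [if_pos ((hmemT i j).2 hm)]
          have h4 : 4 ≤ rowc F i + colc F j := by simpa using good_P4 hF (i, j) hm
          have := hrowT i
          omega
        · rw [if_neg (fun h => hm ((hmemT i j).1 h))]
          have h2 := good_P2 hF i j
          have := hrowT i
          omega
      · dsimp only
        rw [hcolT_last]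
        by_cases hi : i = istar
        · subst hi
          have hin : (i, Fin.last b) ∈ T := by rw [hT]; exact Finset.mem_insert_self _ _
          rw [if_pos hin]
          have := hrowTstar
          omega
        · have hnot : (i, Fin.last b) ∉ T := by
            rw [hT, Finset.mem_insert]
            rintro (h | h)
            · exact hi (congrArg Prod.fst h)
            · exact not_mem_map_emb2_last F i h
          rw [if_neg hnot]
          have h1 := hzero i
          have := hrowT i
          omega

end G2T

namespace P1
open G2T

variable {a b : ℕ}

def cmap (σ : Equiv.Perm (Fin b)) (F : Finset (Fin a × Fin b)) : Finset (Fin a × Fin b) :=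
  F.map (Equiv.prodCongr (Equiv.refl (Fin a)) σ).toEmbedding

lemma mem_cmap (σ : Equiv.Perm (Fin b)) (F : Finset (Fin a × Fin b)) (v : Fin a × Fin b) :
    v ∈ cmap σ F ↔ (v.1, σ.symm v.2) ∈ F := by
  rw [cmap, Finset.mem_map_equiv]
  rfl

lemma rowc_cmap (σ : Equiv.Perm (Fin b)) (F : Finset (Fin a × Fin b)) (i : Fin a) :
    rowc (cmap σ F) i = rowc F i := by
  rw [rowc_eq, rowc_eq]
  apply Finset.card_bij (fun j _ => σ.symm j)
  · intro j hj
    simp only [Finset.mem_filter, Finset.mem_univ, true_and] at hj ⊢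
    rwa [mem_cmap] at hj
  · intro x hx y hy h
    exact σ.symm.injective h
  · intro j hj
    simp only [Finset.mem_filter, Finset.mem_univ, true_and] at hj ⊢
    refine ⟨σ j, ?_, by simp⟩
    simp only [Finset.mem_filter, Finset.mem_univ, true_and, mem_cmap]
    simpa using hj

lemma colc_cmap (σ : Equiv.Perm (Fin b)) (F : Finset (Fin a × Fin b)) (j : Fin b) :
    colc (cmap σ F) j = colc F (σ.symm j) := by
  rw [colc_eq, colc_eq]
  congr 1
  ext i
  simp [mem_cmap]

lemma good_cmap (σ : Equiv.Perm (Fin b)) (F : Finset (Fin a × Fin b)) (hF : Good F) :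
    Good (cmap σ F) := by
  rintro ⟨i, j⟩
  rw [rowc_cmap, colc_cmap]
  have h := hF (i, σ.symm j)
  by_cases hv : (i, j) ∈ cmap σ F
  · rw [if_pos hv]
    rw [mem_cmap] at hv
    simp only [hv, if_true] at h
    simpa using h
  · rw [if_neg hv]
    rw [mem_cmap] at hv
    simp only [hv, if_false] at h
    simpa using h

def B (F : Finset (Fin a × Fin (b + 1))) (i : Fin a) : Finset (Fin b) :=
  Finset.univ.filter (fun j => (i, j.castSucc) ∈ F)

lemma B_card (F : Finset (Fin a × Fin (b + 1))) (i : Fin a) :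
    (B F i).card + (if (i, Fin.last b) ∈ F then 1 else 0) = rowc F i := by
  rw [rowc_eq, Finset.card_filter, Fin.sum_univ_castSucc, B, Finset.card_filter]

lemma colc_pos_of_mem {F : Finset (Fin a × Fin b)} {v : Fin a × Fin b} (hv : v ∈ F) :
    1 ≤ colc F v.2 :=
  Finset.card_pos.2 ⟨v, Finset.mem_filter.2 ⟨hv, rfl⟩⟩

lemma part1core (ha : 2 ≤ a) (hab : a ≤ b) (F : Finset (Fin a × Fin (b + 1))) (hF : Good F)
    (hmin : ∀ j, colc F (Fin.last b) ≤ colc F j) :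
    ∃ T : Finset (Fin a × Fin b), Good T ∧ T.card ≤ F.card := by
  have hb : 2 ≤ b := le_trans ha hab
  classical
  have hex : ∀ i : Fin a, ∃ j : Fin b, (B F i ≠ Finset.univ → j ∉ B F i) := by
    intro i
    by_cases h : B F i = Finset.univ
    · exact ⟨⟨0, by omega⟩, fun hn => absurd h hn⟩
    · by_contra hc
      push_neg at hc
      exact h (Finset.eq_univ_iff_forall.2 (fun j => (hc j).2))
  choose pick hpick using hex
  set B' : Fin a → Finset (Fin b) :=
    fun i => if (i, Fin.last b) ∈ F ∧ B F i ≠ Finset.univ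
      then insert (pick i) (B F i) else B F i with hB'
  set T : Finset (Fin a × Fin b) :=
    Finset.univ.filter (fun p => p.2 ∈ B' p.1) with hTdef
  have hBsub : ∀ i, B F i ⊆ B' i := by
    intro i
    rw [hB']
    dsimp only
    split
    · exact Finset.subset_insert _ _
    · exact Finset.Subset.refl _
  have hmemT : ∀ p : Fin a × Fin b, p ∈ T ↔ p.2 ∈ B' p.1 := by
    intro p; simp [hTdef]
  have hmemB : ∀ (i : Fin a) (j : Fin b), j ∈ B F i ↔ (i, j.castSucc) ∈ F := by
    intro i j; simp [B]
  have hrowT : ∀ i, rowc T i = (B' i).card := by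
    intro i
    rw [rowc_eq]
    congr 1
    ext j
    simp only [Finset.mem_filter, Finset.mem_univ, true_and]
    rw [hmemT]
  have hcolT : ∀ j : Fin b, colc F j.castSucc ≤ colc T j := by
    intro j
    rw [colc_eq, colc_eq]
    apply Finset.card_le_card
    apply Finset.monotone_filter_right
    intro i _ hi
    rw [hmemT]
    exact hBsub i ((hmemB i j).2 hi)
  -- row cardinalities
  have hrow_le : ∀ i, rowc T i ≤ rowc F i := by
    intro i
    rw [hrowT, hB']
    dsimp only
    have hBc := B_card F i
    split
    · next h2 =>
      rw [Finset.card_insert_of_notMem (hpick i h2.2)]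
      simp only [h2.1, if_true] at hBc
      omega
    · next h2 =>
      by_cases hl : (i, Fin.last b) ∈ F <;> simp only [hl, if_true, if_false] at hBc <;> omega
  have hrow_eq : ∀ i, ¬((i, Fin.last b) ∈ F ∧ B F i = Finset.univ) → rowc T i = rowc F i := by
    intro i h3
    rw [hrowT, hB']
    dsimp only
    have hBc := B_card F i
    split
    · next h2 =>
      rw [Finset.card_insert_of_notMem (hpick i h2.2)]
      simp only [h2.1, if_true] at hBc
      omega
    · next h2 =>
      have hl : (i, Fin.last b) ∉ F := by
        by_contra hl
        by_cases hu : B F i = Finset.univ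
        · exact h3 ⟨hl, hu⟩
        · exact h2 ⟨hl, hu⟩
      simp only [hl, if_false] at hBc
      omega
  have hcard : T.card ≤ F.card := by
    rw [card_eq_sum_rowc, card_eq_sum_rowc]
    exact Finset.sum_le_sum (fun i _ => hrow_le i)
  refine ⟨T, ?_, hcard⟩
  rintro ⟨i, j⟩
  dsimp only
  have hchain : colc F (Fin.last b) ≤ colc T j := le_trans (hmin j.castSucc) (hcolT j)
  by_cases h3 : (i, Fin.last b) ∈ F ∧ B F i = Finset.univ
  · -- full row case
    have hrT : rowc T i = b := by
      rw [hrowT, hB']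
      dsimp only
      rw [if_neg (fun hc => hc.2 h3.2), h3.2]
      simp
    by_cases hm : (i, j) ∈ T
    · rw [if_pos hm, hrT]
      suffices h4 : 4 ≤ b + colc T j by omega
      by_cases hb3 : 3 ≤ b
      · have h1 : 1 ≤ colc T j := colc_pos_of_mem hm
        omega
      · -- b = 2, a = 2
        have hb2 : b = 2 := by omega
        have ha2 : a = 2 := by omega
        have h1 : 1 ≤ colc T j := colc_pos_of_mem hm
        by_cases hc2 : 2 ≤ colc T j
        · omega
        · exfalso
          have hcol1 : colc T j = 1 := by omega
          obtain ⟨x, hx⟩ := Finset.card_eq_one.1 hcol1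
          have hix : ((i, j) : Fin a × Fin b) = x := by
            have : ((i, j) : Fin a × Fin b) ∈ T.filter (fun p => p.2 = j) :=
              Finset.mem_filter.2 ⟨hm, rfl⟩
            rw [hx] at this
            exact Finset.mem_singleton.1 this
          obtain ⟨i2, hi2⟩ := Fintype.exists_ne_of_one_lt_card (by simp; omega) i
          -- (i2, j) ∉ T
          have hni2 : ((i2, j) : Fin a × Fin b) ∉ T := by
            intro hmem
            have : ((i2, j) : Fin a × Fin b) ∈ T.filter (fun p => p.2 = j) :=
              Finset.mem_filter.2 ⟨hmem, rfl⟩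
            rw [hx] at this
            have := Finset.mem_singleton.1 this
            rw [← hix] at this
            exact hi2 (congrArg Prod.fst this)
          have hnF : (i2, j.castSucc) ∉ F := by
            intro hmem
            exact hni2 ((hmemT (i2, j)).2 (hBsub i2 ((hmemB i2 j).2 hmem)))
          -- colc F j.castSucc ≤ a - 1 = 1
          have hcF : colc F j.castSucc ≤ 1 := by
            rw [colc_eq]
            calc (Finset.univ.filter (fun i' => (i', j.castSucc) ∈ F)).card
                ≤ (Finset.univ.erase i2).card := by
                  apply Finset.card_le_card
                  intro x hxm
                  simp only [Finset.mem_filter, Finset.mem_univ, true_and] at hxm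
                  refine Finset.mem_erase.2 ⟨?_, Finset.mem_univ _⟩
                  rintro rfl
                  exact hnF hxm
              _ = a - 1 := by rw [Finset.card_erase_of_mem (Finset.mem_univ _)]; simp
              _ ≤ 1 := by omega
          -- colc F last ≤ 1 and (i, last) ∈ F hence (i2, last) ∉ F
          have hclast : colc F (Fin.last b) ≤ 1 := le_trans (hmin j.castSucc) hcF
          have hnF2 : (i2, Fin.last b) ∉ F := by
            intro hmem
            have h2lt : 1 < colc F (Fin.last b) := by
              apply Finset.one_lt_card.2
              refine ⟨(i, Fin.last b), Finset.mem_filter.2 ⟨h3.1, rfl⟩,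
                (i2, Fin.last b), Finset.mem_filter.2 ⟨hmem, rfl⟩, ?_⟩
              intro he
              exact hi2 (congrArg Prod.fst he).symm
            omega
          -- rowc F i2 ≤ 1
          have hrow2 : rowc F i2 ≤ 1 := by
            rw [rowc_eq]
            calc (Finset.univ.filter (fun j' => (i2, j') ∈ F)).card
                ≤ ((Finset.univ.erase j.castSucc).erase (Fin.last b)).card := by
                  apply Finset.card_le_card
                  intro x hxm
                  simp only [Finset.mem_filter, Finset.mem_univ, true_and] at hxm
                  refine Finset.mem_erase.2 ⟨?_, Finset.mem_erase.2 ⟨?_, Finset.mem_univ _⟩⟩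
                  · rintro rfl; exact hnF2 hxm
                  · rintro rfl; exact hnF hxm
              _ ≤ 1 := by
                  rw [Finset.card_erase_of_mem, Finset.card_erase_of_mem (Finset.mem_univ _)]
                  · simp only [Finset.card_univ, Fintype.card_fin]
                    omega
                  · exact Finset.mem_erase.2 ⟨(Fin.castSucc_lt_last j).ne', Finset.mem_univ _⟩
          -- but P2 forces rowc F i2 = 1, then P4 at its element gives colc ≥ 3 > a
          have hge1 : 1 ≤ rowc F i2 := by
            have := good_P2 hF i2 j.castSucc
            omega
          have hrow21 : rowc F i2 = 1 := by omega
          obtain ⟨v, hv⟩ := Finset.card_eq_one.1 hrow21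
          have hvm : v ∈ F.filter (fun p => p.1 = i2) := hv ▸ Finset.mem_singleton_self v
          have hvF := Finset.mem_filter.1 hvm
          have h4 := good_P4 hF v hvF.1
          have hcle := colc_le F v.2
          have : rowc F v.1 = 1 := by rw [hvF.2]; exact hrow21
          omega
    · rw [if_neg hm, hrT]
      omega
  · -- normal rows
    have hrT : rowc T i = rowc F i := hrow_eq i h3
    by_cases hm : (i, j) ∈ T
    · rw [if_pos hm, hrT]
      have hj : j ∈ B' i := (hmemT (i, j)).1 hm
      by_cases hjB : j ∈ B F i
      · have h4 := good_P4 hF (i, j.castSucc) ((hmemB i j).1 hjB)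
        dsimp only at h4
        have := hcolT j
        omega
      · -- j is the inserted pick, so (i, last) ∈ F
        have h2 : (i, Fin.last b) ∈ F ∧ B F i ≠ Finset.univ := by
          by_contra hc
          rw [hB'] at hj
          dsimp only at hj
          rw [if_neg hc] at hj
          exact hjB hj
        have h4 := good_P4 hF (i, Fin.last b) h2.1
        dsimp only at h4
        omega
    · rw [if_neg hm, hrT]
      have h2 := good_P2 hF i j.castSucc
      have := hcolT j
      omega

end P1

namespace P1
open G2T
variable {a b : ℕ}

lemma part1 (ha : 2 ≤ a) (hab : a ≤ b) (F : Finset (Fin a × Fin (b + 1))) (hF : Good F) :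
    ∃ T : Finset (Fin a × Fin b), Good T ∧ T.card ≤ F.card := by
  obtain ⟨k, -, hk⟩ := Finset.exists_min_image Finset.univ (colc F)
    ⟨Fin.last b, Finset.mem_univ _⟩
  set σ : Equiv.Perm (Fin (b + 1)) := Equiv.swap k (Fin.last b) with hσ
  set G := cmap σ F with hG
  have hGgood : Good G := good_cmap σ F hF
  have hGcard : G.card = F.card := Finset.card_map _
  have hcolG : ∀ j, colc G j = colc F (σ j) := by
    intro j
    rw [hG, colc_cmap]
    congr 1
  have hmin : ∀ j, colc G (Fin.last b) ≤ colc G j := by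
    intro j
    rw [hcolG, hcolG]
    have h1 : σ (Fin.last b) = k := Equiv.swap_apply_right k (Fin.last b)
    rw [h1]
    exact hk _ (Finset.mem_univ _)
  obtain ⟨T, hT, hTc⟩ := part1core ha hab G hGgood hmin
  exact ⟨T, hT, by omega⟩

end P1

theorem stmt_4 (n m : ℕ) (hn : 2 ≤ n) (hnm : n ≤ m) :
    gamma2t (K n □ K m) ≤ gamma2t (K n □ K (m + 1)) ∧
    gamma2t (K n □ K (m + 1)) ≤ gamma2t (K n □ K m) + 1 := by
  have hm : 2 ≤ m := le_trans hn hnm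
  constructor
  · obtain ⟨F, hF, hFc⟩ := G2T.exists_opt (a := n) (b := m + 1) hn (by omega)
    obtain ⟨T, hT, hTc⟩ := P1.part1 hn hnm F hF
    calc gamma2t (K n □ K m) ≤ T.card := G2T.gamma_le_of_good T hT
      _ ≤ F.card := hTc
      _ = _ := hFc
  · obtain ⟨F, hF, hFc⟩ := G2T.exists_opt (a := n) (b := m) hn hm
    obtain ⟨T, hT, hTc⟩ := G2T.part2 hn hnm F hF
    calc gamma2t (K n □ K (m + 1)) ≤ T.card := G2T.gamma_le_of_good T hT
      _ ≤ F.card + 1 := hTc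
      _ = _ := by rw [hFc]
end

section
/- For all integers 2 ≤ n ≤ m, γ_{2t}(K_n □ K_m) ≤ γ_{2t}(K_{n+1} □ K_m) ≤ γ_{2t}(K_n □ K_m) + 2. -/
open SimpleGraph

lemma adjK {a b : ℕ} {x y : Fin a × Fin b} :
    (K a □ K b).Adj x y ↔ (x.1 ≠ y.1 ∧ x.2 = y.2) ∨ (x.1 = y.1 ∧ x.2 ≠ y.2) := by
  simp only [K, SimpleGraph.boxProd_adj, SimpleGraph.top_adj]; tauto

lemma two_le_ncard_s5 {α : Type*} {s : Set α} (hs : s.Finite) {x y : α}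
    (hx : x ∈ s) (hy : y ∈ s) (hxy : x ≠ y) : 2 ≤ s.ncard := by
  have := (Set.one_lt_ncard_iff hs).2 ⟨x, y, hx, hy, hxy⟩
  omega

lemma ncard_two {α : Type*} {s : Set α} (hs : s.Finite) (h : 2 ≤ s.ncard) :
    ∃ x y, x ∈ s ∧ y ∈ s ∧ x ≠ y :=
  (Set.one_lt_ncard_iff hs).1 (by omega)

lemma univ_t2d {a b : ℕ} (ha : 2 ≤ a) (hb : 2 ≤ b) :
    TotalTwoDom (K a □ K b) Set.univ := by
  intro v
  have : Nontrivial (Fin a) := Fin.nontrivial_iff_two_le.2 ha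
  have : Nontrivial (Fin b) := Fin.nontrivial_iff_two_le.2 hb
  obtain ⟨i, hi⟩ := exists_ne v.1
  obtain ⟨j, hj⟩ := exists_ne v.2
  refine two_le_ncard_s5 (Set.toFinite _) (x := (i, v.2)) (y := (v.1, j)) ⟨trivial, ?_⟩
    ⟨trivial, ?_⟩ ?_
  · exact adjK.2 (Or.inl ⟨hi.symm, rfl⟩)
  · exact adjK.2 (Or.inr ⟨rfl, hj.symm⟩)
  · intro h
    exact hi (congrArg Prod.fst h)

lemma gamma_le {a b : ℕ} {S : Set (Fin a × Fin b)} (hS : TotalTwoDom (K a □ K b) S) :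
    gamma2t (K a □ K b) ≤ S.ncard :=
  Nat.sInf_le ⟨S, hS, rfl⟩

lemma gamma_spec {a b : ℕ} (ha : 2 ≤ a) (hb : 2 ≤ b) :
    ∃ S : Set (Fin a × Fin b), TotalTwoDom (K a □ K b) S ∧ S.ncard = gamma2t (K a □ K b) :=
  Nat.sInf_mem (s := {k | ∃ S : Set (Fin a × Fin b), TotalTwoDom (K a □ K b) S ∧ S.ncard = k})
    ⟨_, Set.univ, univ_t2d ha hb, rfl⟩

lemma exists_two_cols {a b : ℕ} (ha : 2 ≤ a) (hb : 2 ≤ b) {S : Set (Fin a × Fin b)}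
    (hS : TotalTwoDom (K a □ K b) S) :
    ∃ p q, p ∈ S ∧ q ∈ S ∧ p.2 ≠ q.2 := by
  by_contra hcon
  push_neg at hcon
  have : Nontrivial (Fin b) := Fin.nontrivial_iff_two_le.2 hb
  haveI : NeZero a := ⟨by omega⟩
  -- get one element of S
  obtain ⟨x, y, hx, -, -⟩ := ncard_two (Set.toFinite _) (hS (⟨0, by omega⟩, ⟨0, by omega⟩))
  have hx' : x ∈ S := hx.1
  obtain ⟨j, hj⟩ := exists_ne x.2
  -- all of S is in column x.2
  obtain ⟨u, w, hu, hw, huw⟩ := ncard_two (Set.toFinite _) (hS (x.1, j))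
  have key : ∀ z : Fin a × Fin b, z ∈ S ∩ {t | (K a □ K b).Adj (x.1, j) t} → z = (x.1, x.2) := by
    rintro ⟨z1, z2⟩ ⟨hzS, hzadj⟩
    have hz2 : z2 = x.2 := hcon _ _ hzS hx'
    rcases adjK.1 hzadj with ⟨h1, h2⟩ | ⟨h1, h2⟩
    · exact False.elim (hj (h2.trans hz2))
    · simp only at h1
      rw [Prod.mk.injEq]
      exact ⟨h1.symm, hz2⟩
  have := (key u hu).trans (key w hw).symm
  exact huw this

lemma twocols {a b : ℕ} (ha : 2 ≤ a) (hb : 2 ≤ b) :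
    ∃ T : Set (Fin a × Fin b), TotalTwoDom (K a □ K b) T ∧ T.ncard = 2 * a := by
  have : Nontrivial (Fin a) := Fin.nontrivial_iff_two_le.2 ha
  set c0 : Fin b := ⟨0, by omega⟩
  set c1 : Fin b := ⟨1, by omega⟩
  have hc : c0 ≠ c1 := by simp [c0, c1, Fin.ext_iff]
  refine ⟨((Finset.univ ×ˢ ({c0, c1} : Finset (Fin b)) : Finset (Fin a × Fin b)) : Set (Fin a × Fin b)), ?_, ?_⟩
  · intro v
    have hmem : ∀ (i : Fin a) (c : Fin b), c = c0 ∨ c = c1 →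
        (i, c) ∈ ((Finset.univ ×ˢ ({c0, c1} : Finset (Fin b)) : Finset (Fin a × Fin b)) : Set (Fin a × Fin b)) := by
      intro i c hc'
      simp [Finset.mem_product, hc']
    rcases eq_or_ne v.2 c0 with h0 | h0
    · obtain ⟨i, hi⟩ := exists_ne v.1
      refine two_le_ncard_s5 (Set.toFinite _) (x := (v.1, c1)) (y := (i, c0))
        ⟨hmem _ _ (Or.inr rfl), adjK.2 (Or.inr ⟨rfl, by rw [h0]; exact hc⟩)⟩
        ⟨hmem _ _ (Or.inl rfl), adjK.2 (Or.inl ⟨hi.symm, h0⟩)⟩ ?_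
      exact fun h => hc (congrArg Prod.snd h).symm
    rcases eq_or_ne v.2 c1 with h1 | h1
    · obtain ⟨i, hi⟩ := exists_ne v.1
      refine two_le_ncard_s5 (Set.toFinite _) (x := (v.1, c0)) (y := (i, c1))
        ⟨hmem _ _ (Or.inl rfl), adjK.2 (Or.inr ⟨rfl, by rw [h1]; exact hc.symm⟩)⟩
        ⟨hmem _ _ (Or.inr rfl), adjK.2 (Or.inl ⟨hi.symm, h1⟩)⟩ ?_
      exact fun h => hc (congrArg Prod.snd h)
    · refine two_le_ncard_s5 (Set.toFinite _) (x := (v.1, c0)) (y := (v.1, c1))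
        ⟨hmem _ _ (Or.inl rfl), adjK.2 (Or.inr ⟨rfl, h0⟩)⟩
        ⟨hmem _ _ (Or.inr rfl), adjK.2 (Or.inr ⟨rfl, h1⟩)⟩ ?_
      exact fun h => hc (congrArg Prod.snd h)
  · rw [Set.ncard_coe_finset, Finset.card_product, Finset.card_univ, Fintype.card_fin,
      Finset.card_insert_of_notMem (by simp [hc]), Finset.card_singleton]
    ring

lemma adj_lift {a b : ℕ} (ρ : Fin (a + 1)) {p q : Fin a × Fin b} (h : (K a □ K b).Adj p q) :
    (K (a + 1) □ K b).Adj (ρ.succAbove p.1, p.2) (ρ.succAbove q.1, q.2) := by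
  rcases adjK.1 h with ⟨h1, h2⟩ | ⟨h1, h2⟩
  · exact adjK.2 (Or.inl ⟨fun hh => h1 (Fin.succAbove_right_injective hh), h2⟩)
  · exact adjK.2 (Or.inr ⟨congrArg ρ.succAbove h1, h2⟩)

lemma adj_unlift {a b : ℕ} (ρ : Fin (a + 1)) {p q : Fin a × Fin b}
    (h : (K (a + 1) □ K b).Adj (ρ.succAbove p.1, p.2) (ρ.succAbove q.1, q.2)) :
    (K a □ K b).Adj p q := by
  rcases adjK.1 h with ⟨h1, h2⟩ | ⟨h1, h2⟩
  · exact adjK.2 (Or.inl ⟨fun hh => h1 (congrArg ρ.succAbove hh), h2⟩)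
  · exact adjK.2 (Or.inr ⟨Fin.succAbove_right_injective h1, h2⟩)

lemma adj_cross {a b : ℕ} (ρ : Fin (a + 1)) {p : Fin a × Fin b} {c : Fin b} :
    (K (a + 1) □ K b).Adj (ρ.succAbove p.1, p.2) (ρ, c) ↔ p.2 = c := by
  constructor
  · intro h
    rcases adjK.1 h with ⟨h1, h2⟩ | ⟨h1, h2⟩
    · exact h2
    · exact absurd h1 (Fin.succAbove_ne ρ p.1)
  · intro h
    exact adjK.2 (Or.inl ⟨Fin.succAbove_ne ρ p.1, h⟩)

lemma ineq2 {n m : ℕ} (hn : 2 ≤ n) (hm : 2 ≤ m) :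
    gamma2t (K (n + 1) □ K m) ≤ gamma2t (K n □ K m) + 2 := by
  obtain ⟨S, hS, hcard⟩ := gamma_spec hn hm
  obtain ⟨p, q, hp, hq, hpq⟩ := exists_two_cols hn hm hS
  set ρ : Fin (n + 1) := Fin.last n with hρ
  set e : Fin n × Fin m → Fin (n + 1) × Fin m := fun r => (ρ.succAbove r.1, r.2) with he
  have einj : Function.Injective e := by
    rintro ⟨x1, x2⟩ ⟨y1, y2⟩ h
    simp only [e, Prod.mk.injEq] at h
    exact Prod.ext (Fin.succAbove_right_injective h.1) h.2
  set S' : Set (Fin (n + 1) × Fin m) := insert (ρ, p.2) (insert (ρ, q.2) (e '' S)) with hS'def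
  have hmem1 : (ρ, p.2) ∈ S' := Set.mem_insert _ _
  have hmem2 : (ρ, q.2) ∈ S' := Set.mem_insert_iff.2 (Or.inr (Set.mem_insert _ _))
  have hmemE : ∀ r ∈ S, e r ∈ S' := fun r hr =>
    Set.mem_insert_iff.2 (Or.inr (Set.mem_insert_iff.2 (Or.inr ⟨r, hr, rfl⟩)))
  have hT2 : TotalTwoDom (K (n + 1) □ K m) S' := by
    intro v
    rcases eq_or_ne v.1 ρ with hv | hv
    · have hv' : v = (ρ, v.2) := Prod.ext hv rfl
      rcases eq_or_ne v.2 p.2 with hvp | hvp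
      · refine two_le_ncard_s5 (Set.toFinite _) (x := (ρ, q.2)) (y := e p)
          ⟨hmem2, ?_⟩ ⟨hmemE p hp, ?_⟩ ?_
        · exact adjK.2 (Or.inr ⟨hv, by rw [hvp]; exact hpq⟩)
        · rw [hv', hvp]
          exact (adj_cross ρ).2 rfl |>.symm
        · exact fun h => Fin.ne_succAbove ρ p.1 (congrArg Prod.fst h)
      rcases eq_or_ne v.2 q.2 with hvq | hvq
      · refine two_le_ncard_s5 (Set.toFinite _) (x := (ρ, p.2)) (y := e q)
          ⟨hmem1, ?_⟩ ⟨hmemE q hq, ?_⟩ ?_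
        · exact adjK.2 (Or.inr ⟨hv, by rw [hvq]; exact hpq.symm⟩)
        · rw [hv', hvq]
          exact (adj_cross ρ).2 rfl |>.symm
        · exact fun h => Fin.ne_succAbove ρ q.1 (congrArg Prod.fst h)
      · refine two_le_ncard_s5 (Set.toFinite _) (x := (ρ, p.2)) (y := (ρ, q.2))
          ⟨hmem1, adjK.2 (Or.inr ⟨hv, hvp⟩)⟩ ⟨hmem2, adjK.2 (Or.inr ⟨hv, hvq⟩)⟩ ?_
        exact fun h => hpq (congrArg (Prod.snd : Fin (n+1) × Fin m → Fin m) h)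
    · obtain ⟨i', hi'⟩ := Fin.exists_succAbove_eq hv
      have hv' : v = e (i', v.2) := Prod.ext hi'.symm rfl
      obtain ⟨x, y, ⟨hxS, hxadj⟩, ⟨hyS, hyadj⟩, hxy⟩ :=
        ncard_two (Set.toFinite _) (hS (i', v.2))
      refine two_le_ncard_s5 (Set.toFinite _) (x := e x) (y := e y)
        ⟨hmemE x hxS, ?_⟩ ⟨hmemE y hyS, ?_⟩ fun h => hxy (einj h)
      · rw [hv']; exact adj_lift ρ hxadj
      · rw [hv']; exact adj_lift ρ hyadj
  have hcard' : S'.ncard ≤ S.ncard + 2 := by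
    calc S'.ncard ≤ (insert (ρ, q.2) (e '' S)).ncard + 1 := Set.ncard_insert_le _ _
    _ ≤ (e '' S).ncard + 1 + 1 := by
        have := Set.ncard_insert_le (ρ, q.2) (e '' S)
        omega
    _ = S.ncard + 2 := by rw [Set.ncard_image_of_injective _ einj]
  calc gamma2t (K (n + 1) □ K m) ≤ S'.ncard := gamma_le hT2
    _ ≤ S.ncard + 2 := hcard'
    _ = gamma2t (K n □ K m) + 2 := by rw [hcard]

lemma ineq1 {n m : ℕ} (hn : 2 ≤ n) (hm : 2 ≤ m) :
    gamma2t (K n □ K m) ≤ gamma2t (K (n + 1) □ K m) := by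
  classical
  have hn1 : 2 ≤ n + 1 := by omega
  by_cases hA : 2 * n ≤ gamma2t (K (n + 1) □ K m)
  · obtain ⟨T, hT, hTc⟩ := twocols hn hm
    have := gamma_le hT
    omega
  · push_neg at hA
    obtain ⟨S, hS, hcard⟩ := gamma_spec hn1 hm
    have hfin : S.Finite := Set.toFinite _
    -- find a row ρ with at most one element of S
    have hrow : ∃ ρ : Fin (n + 1), ∀ j j', (ρ, j) ∈ S → (ρ, j') ∈ S → j = j' := by
      by_contra hcon
      push_neg at hcon
      have hkey : 2 * (n + 1) ≤ S.ncard := by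
        rw [Set.ncard_eq_toFinset_card S hfin]
        rw [Finset.card_eq_sum_card_fiberwise
          (f := Prod.fst) (t := (Finset.univ : Finset (Fin (n + 1))))
          (fun x _ => Finset.mem_univ _)]
        have hterm : ∀ i ∈ (Finset.univ : Finset (Fin (n + 1))),
            2 ≤ (hfin.toFinset.filter (fun x => x.1 = i)).card := by
          intro i _
          obtain ⟨j, j', h1, h2, hne⟩ := hcon i
          have hsub : ({(i, j), (i, j')} : Finset (Fin (n + 1) × Fin m)) ⊆
              hfin.toFinset.filter (fun x => x.1 = i) := by
            intro x hx
            rcases Finset.mem_insert.1 hx with rfl | hx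
            · exact Finset.mem_filter.2 ⟨hfin.mem_toFinset.2 h1, rfl⟩
            · rw [Finset.mem_singleton.1 hx]
              exact Finset.mem_filter.2 ⟨hfin.mem_toFinset.2 h2, rfl⟩
          have hc2 : ({(i, j), (i, j')} : Finset (Fin (n + 1) × Fin m)).card = 2 :=
            Finset.card_pair (fun h => hne (congrArg Prod.snd h))
          rw [← hc2]
          exact Finset.card_le_card hsub
        calc 2 * (n + 1) = ∑ _i : Fin (n + 1), 2 := by
              simp [Finset.sum_const, Finset.card_univ, mul_comm]
          _ ≤ _ := Finset.sum_le_sum hterm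
      omega
    obtain ⟨ρ, hρ⟩ := hrow
    set e : Fin n × Fin m → Fin (n + 1) × Fin m := fun r => (ρ.succAbove r.1, r.2) with he
    have einj : Function.Injective e := by
      rintro ⟨x1, x2⟩ ⟨y1, y2⟩ h
      simp only [e, Prod.mk.injEq] at h
      exact Prod.ext (Fin.succAbove_right_injective h.1) h.2
    set S0 : Set (Fin n × Fin m) := {r | e r ∈ S} with hS0def
    have himg : e '' S0 ⊆ S := by rintro _ ⟨r, hr, rfl⟩; exact hr
    have hS0card : S0.ncard ≤ S.ncard := by
      rw [← Set.ncard_image_of_injective S0 einj]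
      exact Set.ncard_le_ncard himg hfin
    have hdecomp : ∀ x : Fin (n + 1) × Fin m, x ∈ S → x.1 ≠ ρ →
        ∃ r, r ∈ S0 ∧ e r = x := by
      intro x hx hxρ
      obtain ⟨i', hi'⟩ := Fin.exists_succAbove_eq hxρ
      have hex : e (i', x.2) = x := Prod.ext hi' rfl
      exact ⟨(i', x.2), by rw [hS0def, Set.mem_setOf_eq, hex]; exact hx, hex⟩
    -- transfer lemma
    have transfer : ∀ v : Fin n × Fin m, (ρ, v.2) ∉ S →
        2 ≤ (S0 ∩ {u | (K n □ K m).Adj v u}).ncard := by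
      intro v hcross
      obtain ⟨x, y, ⟨hxS, hxadj⟩, ⟨hyS, hyadj⟩, hxy⟩ :=
        ncard_two (Set.toFinite _) (hS (e v))
      have step : ∀ z : Fin (n + 1) × Fin m, z ∈ S →
          (K (n + 1) □ K m).Adj (e v) z → ∃ r, r ∈ S0 ∧ e r = z ∧ (K n □ K m).Adj v r := by
        intro z hzS hzadj
        have hz1 : z.1 ≠ ρ := by
          intro h
          have hz' : z = (ρ, z.2) := Prod.ext h rfl
          rw [hz'] at hzadj hzS
          have h2 := (adj_cross ρ).1 hzadj
          rw [← h2] at hzS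
          exact hcross hzS
        obtain ⟨r, hr, hre⟩ := hdecomp z hzS hz1
        refine ⟨r, hr, hre, adj_unlift ρ ?_⟩
        show (K (n + 1) □ K m).Adj (e v) (e r)
        rw [show e r = z from hre]
        exact hzadj
      obtain ⟨rx, hrx, hrex, hrxadj⟩ := step x hxS hxadj
      obtain ⟨ry, hry, hrey, hryadj⟩ := step y hyS hyadj
      refine two_le_ncard_s5 (Set.toFinite _) ⟨hrx, hrxadj⟩ ⟨hry, hryadj⟩ ?_
      intro h
      exact hxy (by rw [← hrex, ← hrey, h])
    -- final bookkeeping helper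
    have finish : ∀ T : Set (Fin n × Fin m), TotalTwoDom (K n □ K m) T →
        T.ncard ≤ S.ncard → gamma2t (K n □ K m) ≤ gamma2t (K (n + 1) □ K m) := by
      intro T hT hTc
      calc gamma2t (K n □ K m) ≤ T.ncard := gamma_le hT
        _ ≤ S.ncard := hTc
        _ = _ := hcard
    by_cases hJ : ∃ c, (ρ, c) ∈ S
    case neg =>
      push_neg at hJ
      exact finish S0 (fun v => transfer v (hJ v.2)) hS0card
    case pos =>
    obtain ⟨c0, hc0⟩ := hJ
    have hJuniq : ∀ c, (ρ, c) ∈ S → c = c0 := fun c hc => hρ c c0 hc hc0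
    -- transfer applies at all columns other than c0
    have tr' : ∀ v : Fin n × Fin m, v.2 ≠ c0 →
        2 ≤ (S0 ∩ {u | (K n □ K m).Adj v u}).ncard :=
      fun v hv => transfer v (fun h => hv (hJuniq v.2 h))
    -- two column-c0 elements of S0
    have getcol : ∀ z : Fin (n + 1) × Fin m, z ∈ S →
        (K (n + 1) □ K m).Adj (ρ, c0) z → ∃ a : Fin n, (a, c0) ∈ S0 ∧ e (a, c0) = z := by
      intro z hzS hzadj
      have hz1 : z.1 ≠ ρ := by
        intro h
        have hz' : z = (ρ, z.2) := Prod.ext h rfl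
        have hz2 : z.2 = c0 := hJuniq z.2 (hz' ▸ hzS)
        rw [hz', hz2] at hzadj
        exact (K (n + 1) □ K m).irrefl hzadj
      obtain ⟨i', hi'⟩ := Fin.exists_succAbove_eq hz1
      have hz2 : z.2 = c0 := by
        have : (K (n + 1) □ K m).Adj (e (i', z.2)) (ρ, c0) := by
          have hez : e (i', z.2) = z := Prod.ext hi' rfl
          rw [hez]
          exact hzadj.symm
        exact (adj_cross ρ (p := (i', z.2))).1 this
      have hez : e (i', c0) = z := Prod.ext hi' hz2.symm
      exact ⟨i', by rw [hS0def, Set.mem_setOf_eq, hez]; exact hzS, hez⟩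
    obtain ⟨x, y, ⟨hxS, hxadj⟩, ⟨hyS, hyadj⟩, hxy⟩ :=
      ncard_two (Set.toFinite _) (hS (ρ, c0))
    obtain ⟨a1, ha1, hea1⟩ := getcol x hxS hxadj
    obtain ⟨a2, ha2, hea2⟩ := getcol y hyS hyadj
    have ha12 : a1 ≠ a2 := by
      intro h
      exact hxy (by rw [← hea1, ← hea2, h])
    -- cardinality of insertions
    have insert_card : ∀ r : Fin n × Fin m, r ∉ S0 → (insert r S0).ncard ≤ S.ncard := by
      intro r hr
      have h3 : (ρ, c0) ∉ e '' S0 := by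
        rintro ⟨t, _, hte⟩
        exact Fin.succAbove_ne ρ t.1 (congrArg Prod.fst hte)
      have h4 : (insert (ρ, c0) (e '' S0)).ncard = S0.ncard + 1 := by
        rw [Set.ncard_insert_of_notMem h3 (Set.toFinite _),
          Set.ncard_image_of_injective _ einj]
      calc (insert r S0).ncard = S0.ncard + 1 :=
            Set.ncard_insert_of_notMem hr (Set.toFinite _)
        _ = (insert (ρ, c0) (e '' S0)).ncard := h4.symm
        _ ≤ S.ncard := Set.ncard_le_ncard (Set.insert_subset hc0 himg) hfin
    -- three-in-a-column domination helper
    have col3 : ∀ (T : Set (Fin n × Fin m)) (b1 b2 b3 : Fin n), b1 ≠ b2 → b1 ≠ b3 → b2 ≠ b3 →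
        (b1, c0) ∈ T → (b2, c0) ∈ T → (b3, c0) ∈ T →
        ∀ i : Fin n, 2 ≤ (T ∩ {u | (K n □ K m).Adj (i, c0) u}).ncard := by
      intro T b1 b2 b3 h12 h13 h23 hb1 hb2 hb3 i
      have pick : ∃ u w : Fin n, u ≠ i ∧ w ≠ i ∧ u ≠ w ∧ (u, c0) ∈ T ∧ (w, c0) ∈ T := by
        rcases eq_or_ne i b1 with rfl | hi1
        · exact ⟨b2, b3, h12.symm, h13.symm, h23, hb2, hb3⟩
        rcases eq_or_ne i b2 with rfl | hi2
        · exact ⟨b1, b3, h12, Ne.symm h23, h13, hb1, hb3⟩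
        · exact ⟨b1, b2, fun h => hi1 h.symm, fun h => hi2 h.symm, h12, hb1, hb2⟩
      obtain ⟨u, w, hu, hw, huw, hmu, hmw⟩ := pick
      refine two_le_ncard_s5 (Set.toFinite _) (x := (u, c0)) (y := (w, c0))
        ⟨hmu, adjK.2 (Or.inl ⟨fun h => hu h.symm, rfl⟩)⟩
        ⟨hmw, adjK.2 (Or.inl ⟨fun h => hw h.symm, rfl⟩)⟩ ?_
      exact fun h => huw (congrArg Prod.fst h)
    -- monotonicity helper
    have mono : ∀ (T : Set (Fin n × Fin m)) (v : Fin n × Fin m), S0 ⊆ T →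
        2 ≤ (S0 ∩ {u | (K n □ K m).Adj v u}).ncard →
        2 ≤ (T ∩ {u | (K n □ K m).Adj v u}).ncard := by
      intro T v hsub h
      exact le_trans h (Set.ncard_le_ncard (Set.inter_subset_inter_left _ hsub)
        (Set.toFinite _))
    by_cases hC1 : ∃ a3, a3 ≠ a1 ∧ a3 ≠ a2 ∧ (a3, c0) ∈ S0
    · obtain ⟨a3, h31, h32, ha3⟩ := hC1
      refine finish S0 (fun v => ?_) hS0card
      rcases eq_or_ne v.2 c0 with hv | hv
      · have hv' : v = (v.1, c0) := Prod.ext rfl hv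
        rw [hv']
        exact col3 S0 a1 a2 a3 ha12 (Ne.symm h31) (Ne.symm h32) ha1 ha2 ha3 v.1
      · exact tr' v hv
    by_cases hC2 : ∃ a3 : Fin n, a3 ≠ a1 ∧ a3 ≠ a2
    · obtain ⟨a3, h31, h32⟩ := hC2
      have hnotin : (a3, c0) ∉ S0 := fun h => hC1 ⟨a3, h31, h32, h⟩
      refine finish (insert (a3, c0) S0) (fun v => ?_) (insert_card _ hnotin)
      rcases eq_or_ne v.2 c0 with hv | hv
      · have hv' : v = (v.1, c0) := Prod.ext rfl hv
        rw [hv']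
        exact col3 _ a1 a2 a3 ha12 (Ne.symm h31) (Ne.symm h32)
          (Set.mem_insert_iff.2 (Or.inr ha1)) (Set.mem_insert_iff.2 (Or.inr ha2))
          (Set.mem_insert _ _) v.1
      · exact mono _ v (Set.subset_insert _ _) (tr' v hv)
    · -- every element of Fin n is a1 or a2
      push_neg at hC2
      have hall : ∀ a : Fin n, a = a1 ∨ a = a2 := by
        intro a
        by_cases h : a = a1
        · exact Or.inl h
        · exact Or.inr (hC2 a h)
      -- row-c0 domination helper given row witnesses
      have rowdom : ∀ (T : Set (Fin n × Fin m)), S0 ⊆ T →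
          (∃ j, j ≠ c0 ∧ (a1, j) ∈ T) → (∃ j, j ≠ c0 ∧ (a2, j) ∈ T) →
          TotalTwoDom (K n □ K m) T := by
        intro T hsub ⟨j1, hj1, hw1⟩ ⟨j2, hj2, hw2⟩ v
        rcases eq_or_ne v.2 c0 with hv | hv
        · have hv' : v = (v.1, c0) := Prod.ext rfl hv
          rw [hv']
          rcases hall v.1 with h | h
          · refine two_le_ncard_s5 (Set.toFinite _) (x := (a2, c0)) (y := (a1, j1))
              ⟨hsub ha2, adjK.2 (Or.inl ⟨by rw [h]; exact ha12, rfl⟩)⟩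
              ⟨hw1, adjK.2 (Or.inr ⟨by rw [h], Ne.symm hj1⟩)⟩ ?_
            exact fun hh => ha12 (congrArg Prod.fst hh).symm
          · refine two_le_ncard_s5 (Set.toFinite _) (x := (a1, c0)) (y := (a2, j2))
              ⟨hsub ha1, adjK.2 (Or.inl ⟨by rw [h]; exact ha12.symm, rfl⟩)⟩
              ⟨hw2, adjK.2 (Or.inr ⟨by rw [h], Ne.symm hj2⟩)⟩ ?_
            exact fun hh => ha12 (congrArg Prod.fst hh)
        · exact mono _ v hsub (tr' v hv)
      by_cases hP1 : ∃ j, j ≠ c0 ∧ (a1, j) ∈ S0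
      · by_cases hP2 : ∃ j, j ≠ c0 ∧ (a2, j) ∈ S0
        · exact finish S0 (rowdom S0 (subset_refl _) hP1 hP2) hS0card
        · -- a2 bare, a1 has a witness (a1, j1); insert (a2, j1)
          obtain ⟨j1, hj1, hw1⟩ := hP1
          have hnotin : (a2, j1) ∉ S0 := fun h => hP2 ⟨j1, hj1, h⟩
          refine finish (insert (a2, j1) S0) ?_ (insert_card _ hnotin)
          exact rowdom _ (Set.subset_insert _ _)
            ⟨j1, hj1, Set.mem_insert_iff.2 (Or.inr hw1)⟩
            ⟨j1, hj1, Set.mem_insert _ _⟩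
      · by_cases hP2 : ∃ j, j ≠ c0 ∧ (a2, j) ∈ S0
        · obtain ⟨j2, hj2, hw2⟩ := hP2
          have hnotin : (a1, j2) ∉ S0 := fun h => hP1 ⟨j2, hj2, h⟩
          refine finish (insert (a1, j2) S0) ?_ (insert_card _ hnotin)
          exact rowdom _ (Set.subset_insert _ _)
            ⟨j2, hj2, Set.mem_insert _ _⟩
            ⟨j2, hj2, Set.mem_insert_iff.2 (Or.inr hw2)⟩
        · -- contradiction: S0 is contained in column c0 and row ρ has a single element
          exfalso
          have hbar : ∀ r : Fin n × Fin m, r ∈ S0 → r.2 = c0 := by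
            rintro ⟨i, j⟩ hr
            by_contra hj
            rcases hall i with rfl | rfl
            · exact hP1 ⟨j, hj, hr⟩
            · exact hP2 ⟨j, hj, hr⟩
          have : Nontrivial (Fin m) := Fin.nontrivial_iff_two_le.2 hm
          obtain ⟨j1, hj1⟩ := exists_ne c0
          obtain ⟨x, y, ⟨hxS, hxadj⟩, ⟨hyS, hyadj⟩, hxy⟩ :=
            ncard_two (Set.toFinite _) (hS (e (a1, j1)))
          have claim : ∀ z : Fin (n + 1) × Fin m, z ∈ S →
              (K (n + 1) □ K m).Adj (e (a1, j1)) z → z = e (a1, c0) := by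
            intro z hzS hzadj
            rcases eq_or_ne z.1 ρ with hz1 | hz1
            · exfalso
              have hz' : z = (ρ, z.2) := Prod.ext hz1 rfl
              have hz2 : z.2 = c0 := hJuniq z.2 (hz' ▸ hzS)
              rw [hz', hz2] at hzadj
              exact hj1 ((adj_cross ρ (p := (a1, j1))).1 hzadj)
            · obtain ⟨r, hr, hre⟩ := hdecomp z hzS hz1
              have hr2 : r.2 = c0 := hbar r hr
              have hadj : (K n □ K m).Adj (a1, j1) r := by
                refine adj_unlift ρ (p := (a1, j1)) (q := r) ?_
                have : e r = z := hre
                rw [show (ρ.succAbove r.1, r.2) = e r from rfl, this]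
                exact hzadj
              rcases adjK.1 hadj with ⟨_, h2⟩ | ⟨h1, _⟩
              · exact absurd (h2.trans hr2) hj1
              · have : r = (a1, c0) := Prod.ext h1.symm hr2
                rw [← hre, this]
          exact hxy ((claim x hxS hxadj).trans (claim y hyS hyadj).symm)

theorem stmt_5 (n m : ℕ) (hn : 2 ≤ n) (hnm : n ≤ m) :
    gamma2t (K n □ K m) ≤ gamma2t (K (n + 1) □ K m) ∧
    gamma2t (K (n + 1) □ K m) ≤ gamma2t (K n □ K m) + 2 := by
  have hm : 2 ≤ m := le_trans hn hnm
  exact ⟨ineq1 hn hm, ineq2 hn hm⟩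
end

section
/- Let n, m ≥ 2 and suppose S is a total 2-dominating set of K_n □ K_m with |S| < 2·min{n,m}. Then for every row v ∈ V(K_n), the set S ∩ ({v} × V(K_m)) is nonempty, and for every column w ∈ V(K_m), the set S ∩ (V(K_n) × {w}) is nonempty. -/
open SimpleGraph

lemma fiber_count {α β : Type*} [Fintype α] [Fintype β] [DecidableEq β]
    (S : Set (α × β)) [DecidablePred (· ∈ S)]
    (h : ∀ w : β, 2 ≤ (S ∩ {p | p.2 = w}).ncard) :
    2 * Fintype.card β ≤ S.ncard := by
  rw [Set.ncard_eq_toFinset_card']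
  rw [Finset.card_eq_sum_card_fiberwise (f := Prod.snd) (t := Finset.univ)
    (fun x _ => Finset.mem_univ _)]
  have : 2 * Fintype.card β = ∑ _w : β, 2 := by simp [mul_comm]
  rw [this]
  apply Finset.sum_le_sum
  intro w _
  have := h w
  rw [Set.ncard_eq_toFinset_card'] at this
  refine le_trans this (Finset.card_le_card ?_)
  intro p hp
  simp only [Set.mem_toFinset, Set.mem_inter_iff, Set.mem_setOf_eq] at hp
  simp [hp.1, hp.2]

theorem stmt_6 (n m : ℕ) (hn : 2 ≤ n) (hm : 2 ≤ m)
    (S : Set (Fin n × Fin m)) (hS : TotalTwoDom (K n □ K m) S)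
    (hcard : S.ncard < 2 * min n m) :
    (∀ v : Fin n, (S ∩ {p | p.1 = v}).Nonempty) ∧
    (∀ w : Fin m, (S ∩ {p | p.2 = w}).Nonempty) := by
  classical
  constructor
  · intro v
    by_contra hrow
    rw [Set.not_nonempty_iff_eq_empty] at hrow
    have hcol : ∀ w : Fin m, 2 ≤ (S ∩ {p | p.2 = w}).ncard := by
      intro w
      refine le_trans (hS (v, w)) (Set.ncard_le_ncard ?_ (Set.toFinite _))
      rintro u ⟨huS, hadj⟩
      refine ⟨huS, ?_⟩
      rcases hadj with ⟨_, h2⟩ | ⟨_, h2⟩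
      · exact h2.symm
      · exact absurd (Set.eq_empty_iff_forall_notMem.mp hrow u) (by
          simp [huS, h2.symm])
    have := fiber_count S hcol
    simp only [Fintype.card_fin] at this
    omega
  · intro w
    by_contra hcol
    rw [Set.not_nonempty_iff_eq_empty] at hcol
    have hrow : ∀ v : Fin n, 2 ≤ ((Prod.swap '' S) ∩ {p | p.2 = v}).ncard := by
      intro v
      refine le_trans (hS (v, w)) ?_
      have : (S ∩ {u | (K n □ K m).Adj (v, w) u}).ncard
          = (Prod.swap '' (S ∩ {u | (K n □ K m).Adj (v, w) u})).ncard := by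
        rw [Set.ncard_image_of_injective _ Prod.swap_injective]
      rw [this]
      refine Set.ncard_le_ncard ?_ (Set.toFinite _)
      rintro q ⟨u, ⟨huS, hadj⟩, rfl⟩
      refine ⟨⟨u, huS, rfl⟩, ?_⟩
      rcases hadj with ⟨_, h2⟩ | ⟨_, h2⟩
      · exact absurd (Set.eq_empty_iff_forall_notMem.mp hcol u) (by
          simp [huS, h2.symm])
      · exact h2.symm
    have := fiber_count (Prod.swap '' S) hrow
    rw [Set.ncard_image_of_injective _ Prod.swap_injective] at this
    simp only [Fintype.card_fin] at this
    omega
end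

section
/- Let n, m ≥ 2 and suppose S is a total 2-dominating set of K_n □ K_m with |S| < 2·min{n,m}. Then there exists a row v ∈ V(K_n) with |S ∩ ({v} × V(K_m))| ≥ 3, and there exists a column w ∈ V(K_m) with |S ∩ (V(K_n) × {w})| ≥ 3. -/
open SimpleGraph

lemma sum_fiber {α β : Type*} [Fintype α] [Fintype β] (S : Set α) (f : α → β) :
    ∑ b : β, (S ∩ {p | f p = b}).ncard = S.ncard := by
  classical
  have hfin : S.Finite := Set.toFinite S
  have h : ∀ b, (S ∩ {p | f p = b}).ncard
      = (hfin.toFinset.filter (fun p => f p = b)).card := by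
    intro b
    rw [← Set.ncard_coe_finset]
    congr 1
    ext p
    simp only [Finset.coe_filter, Set.Finite.mem_toFinset]
    exact ⟨fun h => ⟨h.1, h.2⟩, fun h => ⟨h.1, h.2⟩⟩
  simp_rw [h]
  rw [Set.ncard_eq_toFinset_card S hfin]
  exact (Finset.card_eq_sum_card_fiberwise (fun x _ => Finset.mem_univ (f x))).symm

theorem stmt_7 (n m : ℕ) (hn : 2 ≤ n) (hm : 2 ≤ m)
    (S : Set (Fin n × Fin m)) (hS : TotalTwoDom (K n □ K m) S)
    (hcard : S.ncard < 2 * min n m) :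
    (∃ v : Fin n, 3 ≤ (S ∩ {p | p.1 = v}).ncard) ∧
    (∃ w : Fin m, 3 ≤ (S ∩ {p | p.2 = w}).ncard) := by
  classical
  set R : Fin n → Set (Fin n × Fin m) := fun v => S ∩ {p | p.1 = v} with hRdef
  set C : Fin m → Set (Fin n × Fin m) := fun w => S ∩ {p | p.2 = w} with hCdef
  have hsumR : ∑ v : Fin n, (R v).ncard = S.ncard := sum_fiber S Prod.fst
  have hsumC : ∑ w : Fin m, (C w).ncard = S.ncard := sum_fiber S Prod.snd
  have key : ∀ v w, 2 ≤ (R v \ {(v,w)}).ncard + (C w \ {(v,w)}).ncard := by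
    intro v w
    have h := hS (v, w)
    refine h.trans ?_
    refine le_trans (Set.ncard_le_ncard ?_ (Set.toFinite _)) (Set.ncard_union_le _ _)
    rintro u ⟨huS, hadj⟩
    simp only [Set.mem_setOf_eq, SimpleGraph.boxProd_adj, K, SimpleGraph.top_adj] at hadj
    rcases hadj with ⟨h1, h2⟩ | ⟨h1, h2⟩
    · right
      refine ⟨⟨huS, h2.symm⟩, ?_⟩
      simp only [Set.mem_singleton_iff]
      intro he
      simp [he] at h1
    · left
      refine ⟨⟨huS, h2.symm⟩, ?_⟩
      simp only [Set.mem_singleton_iff]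
      intro he
      simp [he] at h1
  have hmin_n : 2 * min n m ≤ 2 * n := Nat.mul_le_mul_left _ (min_le_left n m)
  have hmin_m : 2 * min n m ≤ 2 * m := Nat.mul_le_mul_left _ (min_le_right n m)
  -- every column is nonempty
  have colNE : ∀ w, (C w).Nonempty := by
    intro w
    by_contra hw
    rw [Set.not_nonempty_iff_eq_empty] at hw
    have hall : ∀ v : Fin n, 2 ≤ (R v).ncard := by
      intro v
      have h := key v w
      rw [hw] at h
      simp only [Set.empty_diff, Set.ncard_empty, add_zero] at h
      exact h.trans (Set.ncard_le_ncard Set.diff_subset (Set.toFinite _))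
    have : 2 * n ≤ S.ncard := by
      rw [← hsumR]
      calc 2 * n = ∑ _v : Fin n, 2 := by simp [Finset.sum_const, mul_comm]
        _ ≤ ∑ v : Fin n, (R v).ncard := Finset.sum_le_sum fun v _ => hall v
    omega
  have rowNE : ∀ v, (R v).Nonempty := by
    intro v
    by_contra hv
    rw [Set.not_nonempty_iff_eq_empty] at hv
    have hall : ∀ w : Fin m, 2 ≤ (C w).ncard := by
      intro w
      have h := key v w
      rw [hv] at h
      simp only [Set.empty_diff, Set.ncard_empty, zero_add] at h
      exact h.trans (Set.ncard_le_ncard Set.diff_subset (Set.toFinite _))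
    have : 2 * m ≤ S.ncard := by
      rw [← hsumC]
      calc 2 * m = ∑ _w : Fin m, 2 := by simp [Finset.sum_const, mul_comm]
        _ ≤ ∑ w : Fin m, (C w).ncard := Finset.sum_le_sum fun w _ => hall w
    omega
  constructor
  · by_contra hcon
    push_neg at hcon
    have hall : ∀ w : Fin m, 2 ≤ (C w).ncard := by
      intro w
      obtain ⟨p, hpS, hp2⟩ := colNE w
      have hp : p = (p.1, w) := by
        ext <;> simp [hp2.symm]
      have hk := key p.1 w
      rw [← hp] at hk
      have hpR : p ∈ R p.1 := ⟨hpS, rfl⟩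
      have hRle : (R p.1 \ {p}).ncard + 1 = (R p.1).ncard :=
        Set.ncard_diff_singleton_add_one hpR (Set.toFinite _)
      have hRv : (R p.1).ncard < 3 := hcon p.1
      have hCle : (C w \ {p}).ncard + 1 = (C w).ncard :=
        Set.ncard_diff_singleton_add_one ⟨hpS, hp2⟩ (Set.toFinite _)
      omega
    have : 2 * m ≤ S.ncard := by
      rw [← hsumC]
      calc 2 * m = ∑ _w : Fin m, 2 := by simp [Finset.sum_const, mul_comm]
        _ ≤ ∑ w : Fin m, (C w).ncard := Finset.sum_le_sum fun w _ => hall w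
    omega
  · by_contra hcon
    push_neg at hcon
    have hall : ∀ v : Fin n, 2 ≤ (R v).ncard := by
      intro v
      obtain ⟨p, hpS, hp1⟩ := rowNE v
      have hp : p = (v, p.2) := by
        ext <;> simp [hp1.symm]
      have hk := key v p.2
      rw [← hp] at hk
      have hCle : (C p.2 \ {p}).ncard + 1 = (C p.2).ncard :=
        Set.ncard_diff_singleton_add_one ⟨hpS, rfl⟩ (Set.toFinite _)
      have hCv : (C p.2).ncard < 3 := hcon p.2
      have hRle : (R v \ {p}).ncard + 1 = (R v).ncard :=
        Set.ncard_diff_singleton_add_one ⟨hpS, hp1⟩ (Set.toFinite _)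
      omega
    have : 2 * n ≤ S.ncard := by
      rw [← hsumR]
      calc 2 * n = ∑ _v : Fin n, 2 := by simp [Finset.sum_const, mul_comm]
        _ ≤ ∑ v : Fin n, (R v).ncard := Finset.sum_le_sum fun v _ => hall v
    omega
end

section
/- γ_{2t}(K_4 □ K_4) = 6. -/
open SimpleGraph

open SimpleGraph

def adj' (v u : Fin 4 × Fin 4) : Prop := (v.1 ≠ u.1 ∧ v.2 = u.2) ∨ (v.2 ≠ u.2 ∧ v.1 = u.1)
instance : DecidableRel adj' := fun v u => by unfold adj'; infer_instance

abbrev rw (F : Finset (Fin 4 × Fin 4)) (i : Fin 4) : ℕ := (F.filter (fun u => u.1 = i)).card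
abbrev cl (F : Finset (Fin 4 × Fin 4)) (j : Fin 4) : ℕ := (F.filter (fun u => u.2 = j)).card

lemma key (F : Finset (Fin 4 × Fin 4)) (i j : Fin 4) :
    (F.filter (fun u => adj' (i,j) u)).card + (if (i,j) ∈ F then 2 else 0)
      = rw F i + cl F j := by
  classical
  have h1 : F.filter (fun u => adj' (i,j) u)
      = (F.filter (fun u => u.1 = i ∨ u.2 = j)).erase (i,j) := by
    ext u
    simp only [Finset.mem_erase, Finset.mem_filter]; simp only [adj']
    constructor
    · rintro ⟨hu, (⟨h1, h2⟩ | ⟨h1, h2⟩)⟩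
      · exact ⟨by rintro rfl; exact h1 rfl, hu, Or.inr h2.symm⟩
      · exact ⟨by rintro rfl; exact h1 rfl, hu, Or.inl h2.symm⟩
    · rintro ⟨hne, hu, (h | h)⟩
      · refine ⟨hu, Or.inr ⟨fun hc => hne ?_, h.symm⟩⟩
        exact Prod.ext h hc.symm
      · refine ⟨hu, Or.inl ⟨fun hc => hne ?_, h.symm⟩⟩
        exact Prod.ext hc.symm h
  have h2 : rw F i + cl F j
      = (F.filter (fun u => u.1 = i ∨ u.2 = j)).card
        + (F.filter (fun u => u.1 = i ∧ u.2 = j)).card := by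
    rw [Finset.filter_or, Finset.filter_and, ← Finset.card_union_add_card_inter]
  have h3 : F.filter (fun u => u.1 = i ∧ u.2 = j) = F.filter (fun u => u = (i,j)) := by
    apply Finset.filter_congr
    intro u _
    simp [Prod.ext_iff]
  have h4 : (F.filter (fun u => u = (i,j))).card = if (i,j) ∈ F then 1 else 0 := by
    rw [Finset.filter_eq']
    split <;> simp
  have hmem : (i,j) ∈ F.filter (fun u => u.1 = i ∨ u.2 = j) ↔ (i,j) ∈ F := by simp
  rw [h1, h2, h3, h4]
  by_cases h : (i,j) ∈ F
  · rw [Finset.card_erase_of_mem (hmem.mpr h)]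
    simp only [h, if_true]
    have : 1 ≤ (F.filter (fun u => u.1 = i ∨ u.2 = j)).card :=
      Finset.card_pos.mpr ⟨(i,j), hmem.mpr h⟩
    omega
  · rw [Finset.erase_eq_of_notMem (fun hc => h (hmem.mp hc))]
    simp [h]

lemma row_sum (F : Finset (Fin 4 × Fin 4)) : ∑ i, rw F i = F.card := by
  classical
  exact (Finset.card_eq_sum_card_fiberwise (f := Prod.fst) (fun x _ => Finset.mem_univ x.1)).symm

lemma col_sum (F : Finset (Fin 4 × Fin 4)) : ∑ j, cl F j = F.card := by
  classical
  exact (Finset.card_eq_sum_card_fiberwise (f := Prod.snd) (fun x _ => Finset.mem_univ x.2)).symm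

lemma lowerF (F : Finset (Fin 4 × Fin 4))
    (H : ∀ v, 2 ≤ (F.filter (fun u => adj' v u)).card) : 6 ≤ F.card := by
  classical
  by_contra hlt
  push_neg at hlt
  have hF5 : F.card ≤ 5 := by omega
  -- every row nonempty
  have hrow : ∀ i, 1 ≤ rw F i := by
    intro i
    by_contra h0
    push_neg at h0
    have hr0 : rw F i = 0 := by omega
    -- then every column has ≥ 2
    have hc2 : ∀ j, 2 ≤ cl F j := by
      intro j
      have hk := key F i j
      have hm : (i,j) ∉ F := by
        intro hm
        have h1 : (i,j) ∈ F.filter (fun u => u.1 = i) := by simp [hm]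
        have h2 : 0 < rw F i := Finset.card_pos.mpr ⟨(i,j), h1⟩
        omega
      have := H (i,j)
      simp [hm] at hk
      omega
    have : 8 ≤ ∑ j, cl F j := by
      calc 8 = ∑ _j : Fin 4, 2 := by simp
      _ ≤ ∑ j, cl F j := Finset.sum_le_sum (fun j _ => hc2 j)
    rw [col_sum] at this
    omega
  have hcol : ∀ j, 1 ≤ cl F j := by
    intro j
    by_contra h0
    push_neg at h0
    have hc0 : cl F j = 0 := by omega
    have hr2 : ∀ i, 2 ≤ rw F i := by
      intro i
      have hk := key F i j
      have hm : (i,j) ∉ F := by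
        intro hm
        have h1 : (i,j) ∈ F.filter (fun u => u.2 = j) := by simp [hm]
        have h2 : 0 < cl F j := Finset.card_pos.mpr ⟨(i,j), h1⟩
        omega
      have := H (i,j)
      simp [hm] at hk
      omega
    have : 8 ≤ ∑ i, rw F i := by
      calc 8 = ∑ _i : Fin 4, 2 := by simp
      _ ≤ ∑ i, rw F i := Finset.sum_le_sum (fun i _ => hr2 i)
    rw [row_sum] at this
    omega
  -- each row count ≤ 2
  have hrle : ∀ i, rw F i ≤ 2 := by
    intro i
    have hsum := row_sum F
    have h1 : ∑ i', rw F i' = rw F i + ∑ i' ∈ Finset.univ.erase i, rw F i' :=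
      (Finset.add_sum_erase _ _ (Finset.mem_univ i)).symm
    have h2 : 3 ≤ ∑ i' ∈ Finset.univ.erase i, rw F i' := by
      calc (3 : ℕ) = ∑ _i' ∈ Finset.univ.erase i, 1 := by
            rw [Finset.sum_const, Finset.card_erase_of_mem (Finset.mem_univ i)]; simp
      _ ≤ _ := Finset.sum_le_sum (fun i' _ => hrow i')
    omega
  have hcle : ∀ j, cl F j ≤ 2 := by
    intro j
    have hsum := col_sum F
    have h1 : ∑ j', cl F j' = cl F j + ∑ j' ∈ Finset.univ.erase j, cl F j' :=
      (Finset.add_sum_erase _ _ (Finset.mem_univ j)).symm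
    have h2 : 3 ≤ ∑ j' ∈ Finset.univ.erase j, cl F j' := by
      calc (3 : ℕ) = ∑ _j' ∈ Finset.univ.erase j, 1 := by
            rw [Finset.sum_const, Finset.card_erase_of_mem (Finset.mem_univ j)]; simp
      _ ≤ _ := Finset.sum_le_sum (fun j' _ => hcol j')
    omega
  -- every point in F lies in a row with count 2, hence every row has count 2
  have hall2 : ∀ i, rw F i = 2 := by
    intro i
    obtain ⟨u, hu⟩ := Finset.card_pos.mp (hrow i)
    rw [Finset.mem_filter] at hu
    obtain ⟨huF, hu1⟩ := hu
    have hk := key F i u.2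
    have hm : (i, u.2) ∈ F := by rw [← hu1]; exact huF
    have := H (i, u.2)
    simp only [hm, if_true] at hk
    have := hrle i
    have := hcle u.2
    omega
  have : ∑ i, rw F i = 8 := by simp [hall2]
  rw [row_sum] at this
  omega

lemma adj_eq (v u : Fin 4 × Fin 4) : (K 4 □ K 4).Adj v u ↔ adj' v u := by
  constructor
  · rintro (⟨h,h2⟩|⟨h,h2⟩)
    · exact Or.inl ⟨h.ne, h2⟩
    · exact Or.inr ⟨h.ne, h2⟩
  · rintro (⟨h,h2⟩|⟨h,h2⟩)
    · exact Or.inl ⟨h, h2⟩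
    · exact Or.inr ⟨h, h2⟩

lemma inter_card (F : Finset (Fin 4 × Fin 4)) (v : Fin 4 × Fin 4) :
    ((↑F : Set (Fin 4 × Fin 4)) ∩ {u | (K 4 □ K 4).Adj v u}).ncard
      = (F.filter (fun u => adj' v u)).card := by
  classical
  have : (↑F : Set (Fin 4 × Fin 4)) ∩ {u | (K 4 □ K 4).Adj v u}
      = ↑(F.filter (fun u => adj' v u)) := by
    ext u
    simp only [Set.mem_inter_iff, Finset.mem_coe, Set.mem_setOf_eq, Finset.coe_filter,
      adj_eq, and_comm]
  rw [this, Set.ncard_coe_finset]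

def Fup : Finset (Fin 4 × Fin 4) := {(0,1),(0,2),(0,3),(1,0),(2,0),(3,0)}

lemma upper_s10 : TotalTwoDom (K 4 □ K 4) (↑Fup) ∧ (↑Fup : Set (Fin 4 × Fin 4)).ncard = 6 := by
  constructor
  · intro v
    rw [inter_card]
    revert v
    decide
  · rw [Set.ncard_coe_finset]
    decide

theorem stmt_10 : gamma2t (K 4 □ K 4) = 6 := by
  unfold gamma2t
  apply le_antisymm
  · apply Nat.sInf_le
    exact ⟨↑Fup, upper_s10.1, upper_s10.2⟩
  · refine le_csInf ⟨6, ?_⟩ ?_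
    · exact ⟨↑Fup, upper_s10.1, upper_s10.2⟩
    rintro k ⟨S, hS, rfl⟩
    classical
    set F := (Set.toFinite S).toFinset with hF
    have hcoe : (↑F : Set (Fin 4 × Fin 4)) = S := Set.Finite.coe_toFinset _
    have h6 : 6 ≤ F.card := by
      apply lowerF
      intro v
      have := hS v
      rw [← hcoe, inter_card] at this
      exact this
    calc 6 ≤ F.card := h6
    _ = S.ncard := by rw [← hcoe, Set.ncard_coe_finset]
end

section
/- γ_{2t}(K_5 □ K_5) = 8. -/
open SimpleGraph

/-- Explicit decidable adjacency predicate for `K 5 □ K 5`. -/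
def adjP (v u : Fin 5 × Fin 5) : Prop :=
  (v.1 ≠ u.1 ∧ v.2 = u.2) ∨ (v.2 ≠ u.2 ∧ v.1 = u.1)

instance (v : Fin 5 × Fin 5) : DecidablePred (adjP v) := fun u => by
  unfold adjP; infer_instance

lemma adj_iff (v u : Fin 5 × Fin 5) : (K 5 □ K 5).Adj v u ↔ adjP v u := by
  simp only [SimpleGraph.boxProd_adj, adjP, K, top_adj]
  all_goals tauto

lemma ncard_inter (T : Finset (Fin 5 × Fin 5)) (v : Fin 5 × Fin 5) :
    ((↑T : Set (Fin 5 × Fin 5)) ∩ {u | (K 5 □ K 5).Adj v u}).ncard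
      = (T.filter (adjP v)).card := by
  rw [← Set.ncard_coe_finset]
  congr 1
  ext u
  simp only [Set.mem_inter_iff, Finset.coe_filter, Set.mem_setOf_eq, Finset.mem_coe,
    adj_iff]
  all_goals tauto

/-- Number of elements of `T` in row `a`. -/
def rowc (T : Finset (Fin 5 × Fin 5)) (a : Fin 5) : ℕ :=
  (T.filter (fun u => u.1 = a)).card

/-- Number of elements of `T` in column `b`. -/
def colc (T : Finset (Fin 5 × Fin 5)) (b : Fin 5) : ℕ :=
  (T.filter (fun u => u.2 = b)).card

/-- The key counting identity: the number of neighbors of `(i, j)` in `T` plus twice the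
indicator of membership equals (row count of `i`) + (column count of `j`). -/
lemma key_identity (T : Finset (Fin 5 × Fin 5)) (i j : Fin 5) :
    (T.filter (adjP (i, j))).card + (if (i, j) ∈ T then 2 else 0)
      = rowc T i + colc T j := by
  classical
  have hsplit : T.filter (adjP (i, j))
      = T.filter (fun u => u.1 = i ∧ u.2 ≠ j) ∪ T.filter (fun u => u.2 = j ∧ u.1 ≠ i) := by
    ext u
    simp only [Finset.mem_filter, Finset.mem_union, adjP]
    constructor
    · rintro ⟨hu, h | h⟩
      · exact Or.inr ⟨hu, h.2.symm, fun hh => h.1 hh.symm⟩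
      · exact Or.inl ⟨hu, h.2.symm, fun hh => h.1 hh.symm⟩
    · rintro (⟨hu, h1, h2⟩ | ⟨hu, h1, h2⟩)
      · exact ⟨hu, Or.inr ⟨fun hh => h2 hh.symm, h1.symm⟩⟩
      · exact ⟨hu, Or.inl ⟨fun hh => h2 hh.symm, h1.symm⟩⟩
  have hdisj : Disjoint (T.filter (fun u => u.1 = i ∧ u.2 ≠ j))
      (T.filter (fun u => u.2 = j ∧ u.1 ≠ i)) := by
    rw [Finset.disjoint_left]
    intro u hu hu'
    simp only [Finset.mem_filter] at hu hu'
    exact hu.2.2 hu'.2.1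
  have hsingle : ∀ (p : (Fin 5 × Fin 5) → Prop) (_ : DecidablePred p),
      (∀ u, p u ↔ u = (i, j)) →
      (T.filter p).card = if (i, j) ∈ T then 1 else 0 := by
    intro p _ hp
    have heq : T.filter p = T.filter (fun u => u = (i, j)) :=
      Finset.filter_congr (fun u _ => hp u)
    rw [heq, Finset.filter_eq']
    split_ifs <;> simp
  have hrow : (T.filter (fun u => u.1 = i ∧ u.2 ≠ j)).card
        + (if (i, j) ∈ T then 1 else 0)
      = rowc T i := by
    have h1 := Finset.card_filter_add_card_filter_not
      (s := T.filter (fun u => u.1 = i)) (p := fun u => u.2 ≠ j)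
    rw [Finset.filter_filter, Finset.filter_filter] at h1
    have h2 : ((T.filter fun u => u.1 = i ∧ ¬u.2 ≠ j)).card
        = if (i, j) ∈ T then 1 else 0 := by
      apply hsingle _ inferInstance
      intro u
      rw [Prod.ext_iff]
      simp only [not_not]
      all_goals tauto
    unfold rowc
    omega
  have hcol : (T.filter (fun u => u.2 = j ∧ u.1 ≠ i)).card
        + (if (i, j) ∈ T then 1 else 0)
      = colc T j := by
    have h1 := Finset.card_filter_add_card_filter_not
      (s := T.filter (fun u => u.2 = j)) (p := fun u => u.1 ≠ i)
    rw [Finset.filter_filter, Finset.filter_filter] at h1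
    have h2 : ((T.filter fun u => u.2 = j ∧ ¬u.1 ≠ i)).card
        = if (i, j) ∈ T then 1 else 0 := by
      apply hsingle _ inferInstance
      intro u
      rw [Prod.ext_iff]
      simp only [not_not]
      all_goals tauto
    unfold colc
    omega
  rw [hsplit, Finset.card_union_of_disjoint hdisj]
  by_cases h : (i, j) ∈ T <;>
    simp only [h, if_true, if_false] at hrow hcol ⊢ <;> omega

/-- Core combinatorial lower bound. -/
lemma core (T : Finset (Fin 5 × Fin 5))
    (hT : ∀ v, 2 ≤ (T.filter (adjP v)).card) : 8 ≤ T.card := by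
  classical
  by_contra hcon
  push_neg at hcon
  have hsum_r : ∑ a, rowc T a = T.card := by
    unfold rowc
    exact (Finset.card_eq_sum_card_fiberwise (fun v _ => Finset.mem_univ v.1)).symm
  have hsum_c : ∑ b, colc T b = T.card := by
    unfold colc
    exact (Finset.card_eq_sum_card_fiberwise (fun v _ => Finset.mem_univ v.2)).symm
  -- every row is nonempty
  have hrpos : ∀ a, 1 ≤ rowc T a := by
    intro a
    by_contra h
    push_neg at h
    have h0 : rowc T a = 0 := by omega
    have hnot : ∀ j : Fin 5, (a, j) ∉ T := by
      intro j hj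
      have hmem : (a, j) ∈ T.filter (fun u => u.1 = a) := by
        simp [Finset.mem_filter, hj]
      have hpos : 0 < rowc T a := Finset.card_pos.mpr ⟨_, hmem⟩
      omega
    have hcj : ∀ j : Fin 5, 2 ≤ colc T j := by
      intro j
      have hk := key_identity T a j
      have h2 := hT (a, j)
      rw [if_neg (hnot j)] at hk
      omega
    have h10 : 10 ≤ ∑ b, colc T b := by
      calc (10 : ℕ) = ∑ _b : Fin 5, 2 := by simp
      _ ≤ ∑ b, colc T b := Finset.sum_le_sum (fun b _ => hcj b)
    rw [hsum_c] at h10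
    omega
  -- every column is nonempty
  have hcpos : ∀ b, 1 ≤ colc T b := by
    intro b
    by_contra h
    push_neg at h
    have h0 : colc T b = 0 := by omega
    have hnot : ∀ i : Fin 5, (i, b) ∉ T := by
      intro i hi
      have hmem : (i, b) ∈ T.filter (fun u => u.2 = b) := by
        simp [Finset.mem_filter, hi]
      have hpos : 0 < colc T b := Finset.card_pos.mpr ⟨_, hmem⟩
      omega
    have hri : ∀ i : Fin 5, 2 ≤ rowc T i := by
      intro i
      have hk := key_identity T i b
      have h2 := hT (i, b)
      rw [if_neg (hnot i)] at hk
      omega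
    have h10 : 10 ≤ ∑ a, rowc T a := by
      calc (10 : ℕ) = ∑ _a : Fin 5, 2 := by simp
      _ ≤ ∑ a, rowc T a := Finset.sum_le_sum (fun a _ => hri a)
    rw [hsum_r] at h10
    omega
  -- each row/column count is at most 3
  have hub : ∀ (f : Fin 5 → ℕ), (∀ a, 1 ≤ f a) → (∑ a, f a = T.card) →
      ∀ a, f a ≤ 3 := by
    intro f hf hsum a
    have h1 : f a + ∑ x ∈ Finset.univ.erase a, f x = ∑ x, f x :=
      Finset.add_sum_erase _ f (Finset.mem_univ a)
    have h2 : 4 ≤ ∑ x ∈ Finset.univ.erase a, f x := by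
      calc (4 : ℕ) = ∑ _x ∈ Finset.univ.erase a, 1 := by
            rw [Finset.sum_const, Finset.card_erase_of_mem (Finset.mem_univ a)]
            simp
      _ ≤ ∑ x ∈ Finset.univ.erase a, f x :=
            Finset.sum_le_sum (fun x _ => hf x)
    rw [hsum] at h1
    omega
  have hr3 := hub (rowc T) hrpos hsum_r
  have hc3 := hub (colc T) hcpos hsum_c
  -- quadratic bound
  have hquad : ∀ (x : ℕ), 1 ≤ x → x ≤ 3 → x * x + 3 ≤ 4 * x := by
    intro x h1 h3
    have hx : x = 1 ∨ x = 2 ∨ x = 3 := by omega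
    rcases hx with h | h | h <;> rw [h] <;> norm_num
  have hsq : ∀ (f : Fin 5 → ℕ), (∀ a, 1 ≤ f a) → (∀ a, f a ≤ 3) →
      (∑ a, f a = T.card) → ∑ a, f a * f a + 15 ≤ 4 * T.card := by
    intro f h1 h3 hsum
    have hle : ∑ a, (f a * f a + 3) ≤ ∑ a, 4 * f a :=
      Finset.sum_le_sum (fun a _ => hquad (f a) (h1 a) (h3 a))
    rw [Finset.sum_add_distrib, Finset.sum_const, ← Finset.mul_sum, hsum] at hle
    simpa using hle
  have hsqr := hsq (rowc T) hrpos hr3 hsum_r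
  have hsqc := hsq (colc T) hcpos hc3 hsum_c
  -- member inequality
  have hmem4 : ∀ v ∈ T, 4 ≤ rowc T v.1 + colc T v.2 := by
    rintro ⟨i, j⟩ hv
    have hk := key_identity T i j
    have h2 := hT (i, j)
    rw [if_pos hv] at hk
    show 4 ≤ rowc T i + colc T j
    omega
  -- sum over members
  have hmemsum : 4 * T.card ≤ ∑ v ∈ T, (rowc T v.1 + colc T v.2) := by
    calc 4 * T.card = ∑ _v ∈ T, 4 := by rw [Finset.sum_const]; ring
    _ ≤ ∑ v ∈ T, (rowc T v.1 + colc T v.2) := Finset.sum_le_sum hmem4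
  have hfibr : ∑ v ∈ T, rowc T v.1 = ∑ a, rowc T a * rowc T a := by
    rw [← Finset.sum_fiberwise' T (fun v => v.1) (rowc T)]
    refine Finset.sum_congr rfl (fun a _ => ?_)
    rw [Finset.sum_const, smul_eq_mul]
    rfl
  have hfibc : ∑ v ∈ T, colc T v.2 = ∑ b, colc T b * colc T b := by
    rw [← Finset.sum_fiberwise' T (fun v => v.2) (colc T)]
    refine Finset.sum_congr rfl (fun b _ => ?_)
    rw [Finset.sum_const, smul_eq_mul]
    rfl
  rw [Finset.sum_add_distrib, hfibr, hfibc] at hmemsum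
  omega

/-- Witness total 2-dominating set of size 8. -/
def W : Finset (Fin 5 × Fin 5) :=
  {(0, 1), (0, 2), (0, 3), (0, 4), (1, 0), (2, 0), (3, 0), (4, 0)}

theorem stmt_11 : gamma2t (K 5 □ K 5) = 8 := by
  have hmem8 : 8 ∈ {k | ∃ S : Set (Fin 5 × Fin 5),
      TotalTwoDom (K 5 □ K 5) S ∧ S.ncard = k} := by
    refine ⟨↑W, ?_, ?_⟩
    · intro v
      rw [ncard_inter]
      revert v
      decide
    · rw [Set.ncard_coe_finset]
      decide
  refine le_antisymm (Nat.sInf_le hmem8) ?_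
  refine le_csInf ⟨8, hmem8⟩ ?_
  rintro k ⟨S, hS, rfl⟩
  have hfin : S.Finite := S.toFinite
  have hSeq : S = ↑hfin.toFinset := (Set.Finite.coe_toFinset hfin).symm
  have hT : ∀ v, 2 ≤ (hfin.toFinset.filter (adjP v)).card := by
    intro v
    have h := hS v
    rwa [hSeq, ncard_inter] at h
  rw [hSeq, Set.ncard_coe_finset]
  exact core _ hT
end

section
/- γ_{2t}(K_6 □ K_6) = 10. -/
open SimpleGraph

open Finset
instance : DecidableRel (K 6 □ K 6).Adj := fun x y =>
  decidable_of_iff ((x.1 ≠ y.1 ∧ x.2 = y.2) ∨ (x.2 ≠ y.2 ∧ x.1 = y.1)) (by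
    rw [boxProd_adj]; exact Iff.rfl)

lemma lb (T : Finset (Fin 6 × Fin 6)) (hT : T.card = 9)
    (hP : ∀ v, 2 ≤ (T.filter (fun u => (K 6 □ K 6).Adj v u)).card) : False := by
  classical
  set r : Fin 6 → ℕ := fun i => (T.filter (fun u => u.1 = i)).card with hrdef
  set c : Fin 6 → ℕ := fun j => (T.filter (fun u => u.2 = j)).card with hcdef
  have hadj : ∀ v u : Fin 6 × Fin 6, (K 6 □ K 6).Adj v u ↔
      (v.1 ≠ u.1 ∧ v.2 = u.2) ∨ (v.2 ≠ u.2 ∧ v.1 = u.1) := fun v u => by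
    rw [boxProd_adj]; rfl
  have hNsub : ∀ v : Fin 6 × Fin 6, T.filter (fun u => (K 6 □ K 6).Adj v u) ⊆
      (T.filter (fun u => u.1 = v.1)).erase v ∪ (T.filter (fun u => u.2 = v.2)).erase v := by
    intro v u hu
    rw [mem_filter] at hu
    obtain ⟨huT, ha⟩ := hu
    rw [hadj] at ha
    rcases ha with ⟨h1, h2⟩ | ⟨h1, h2⟩
    · refine mem_union_right _ (mem_erase.mpr ⟨?_, mem_filter.mpr ⟨huT, h2.symm⟩⟩)
      intro h; subst h; exact h1 rfl
    · refine mem_union_left _ (mem_erase.mpr ⟨?_, mem_filter.mpr ⟨huT, h2.symm⟩⟩)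
      intro h; subst h; exact h1 rfl
  have hub : ∀ v : Fin 6 × Fin 6, 2 ≤ r v.1 + c v.2 := by
    intro v
    have h1 := hP v
    have h2 := card_le_card (hNsub v)
    have h3 := card_union_le ((T.filter (fun u => u.1 = v.1)).erase v)
      ((T.filter (fun u => u.2 = v.2)).erase v)
    have h4 := card_le_card (erase_subset v (T.filter (fun u => u.1 = v.1)))
    have h5 := card_le_card (erase_subset v (T.filter (fun u => u.2 = v.2)))
    simp only [hrdef, hcdef]
    omega
  have hin : ∀ v ∈ T, 4 ≤ r v.1 + c v.2 := by
    intro v hv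
    have h1 := hP v
    have h2 := card_le_card (hNsub v)
    have h3 := card_union_le ((T.filter (fun u => u.1 = v.1)).erase v)
      ((T.filter (fun u => u.2 = v.2)).erase v)
    have h4 := card_erase_of_mem (mem_filter.mpr ⟨hv, rfl⟩ :
      v ∈ T.filter (fun u => u.1 = v.1))
    have h5 := card_erase_of_mem (mem_filter.mpr ⟨hv, rfl⟩ :
      v ∈ T.filter (fun u => u.2 = v.2))
    have h6 : 1 ≤ r v.1 := card_pos.mpr ⟨v, mem_filter.mpr ⟨hv, rfl⟩⟩
    have h7 : 1 ≤ c v.2 := card_pos.mpr ⟨v, mem_filter.mpr ⟨hv, rfl⟩⟩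
    simp only [hrdef, hcdef] at *
    omega
  have hsumr : ∑ i, r i = 9 := by
    rw [hrdef, ← hT]
    exact (card_eq_sum_card_fiberwise (f := Prod.fst) (t := univ)
      (fun x _ => mem_univ _)).symm
  have hsumc : ∑ j, c j = 9 := by
    rw [hcdef, ← hT]
    exact (card_eq_sum_card_fiberwise (f := Prod.snd) (t := univ)
      (fun x _ => mem_univ _)).symm
  have hr1 : ∀ i, 1 ≤ r i := by
    intro i
    by_contra h
    have h0 : r i = 0 := by omega
    have hc2 : ∀ j, 2 ≤ c j := by
      intro j
      have := hub (i, j)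
      simp only at this
      omega
    have h12 : (univ : Finset (Fin 6)).card • 2 ≤ ∑ j, c j :=
      card_nsmul_le_sum univ c 2 (fun j _ => hc2 j)
    simp at h12
    omega
  have hc1 : ∀ j, 1 ≤ c j := by
    intro j
    by_contra h
    have h0 : c j = 0 := by omega
    have hr2 : ∀ i, 2 ≤ r i := by
      intro i
      have := hub (i, j)
      simp only at this
      omega
    have h12 : (univ : Finset (Fin 6)).card • 2 ≤ ∑ i, r i :=
      card_nsmul_le_sum univ r 2 (fun i _ => hr2 i)
    simp at h12
    omega

  have hsumXR := hsumr
  have hX1R := hr1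
  have hXYR : ∀ v ∈ T, 4 ≤ r v.1 + c v.2 := hin
  have hYdef'R : ∀ j, (T.filter (fun u => u.2 = j)).card = c j := fun j => rfl
  have hsumXC := hsumc
  have hX1C := hc1
  have hXYC : ∀ v ∈ T, 4 ≤ c v.2 + r v.1 := fun v hv => by have := hin v hv; omega
  have hYdef'C : ∀ j, (T.filter (fun u => u.1 = j)).card = r j := fun j => rfl

  -- ROWSIDE analysis
  have hXle9R : ∀ i, r i ≤ 9 := by
    intro i; rw [← hT]; exact card_filter_le _ _
  have h6XR : (univ.filter (fun i => r i = 1)).card +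
      (((univ.filter (fun i => ¬ r i = 1)).filter (fun i => r i = 2)).card +
       ((univ.filter (fun i => ¬ r i = 1)).filter (fun i => ¬ r i = 2)).card) = 6 := by
    have e1 := card_filter_add_card_filter_not (s := (univ : Finset (Fin 6)))
      (p := fun i => r i = 1)
    have e2 := card_filter_add_card_filter_not
      (s := (univ.filter (fun i => ¬ r i = 1))) (p := fun i => r i = 2)
    simp only [Finset.card_univ, Fintype.card_fin] at e1
    omega
  have h9XR : (univ.filter (fun i => r i = 1)).card +
      (2 * ((univ.filter (fun i => ¬ r i = 1)).filter (fun i => r i = 2)).card +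
       ∑ i ∈ (univ.filter (fun i => ¬ r i = 1)).filter (fun i => ¬ r i = 2), r i) = 9 := by
    have e1 := sum_filter_add_sum_filter_not (univ : Finset (Fin 6)) (fun i => r i = 1) r
    have e2 := sum_filter_add_sum_filter_not (univ.filter (fun i => ¬ r i = 1))
      (fun i => r i = 2) r
    have e3 : ∑ i ∈ univ.filter (fun i => r i = 1), r i
        = (univ.filter (fun i => r i = 1)).card := by
      rw [Finset.sum_congr rfl (fun i hi => (mem_filter.mp hi).2), Finset.sum_const,
        smul_eq_mul, mul_one]
    have e4 : ∑ i ∈ (univ.filter (fun i => ¬ r i = 1)).filter (fun i => r i = 2), r i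
        = 2 * ((univ.filter (fun i => ¬ r i = 1)).filter (fun i => r i = 2)).card := by
      rw [Finset.sum_congr rfl (fun i hi => (mem_filter.mp hi).2), Finset.sum_const,
        smul_eq_mul, mul_comm]
    rw [hsumXR] at e1
    omega
  have h3qR : 3 * ((univ.filter (fun i => ¬ r i = 1)).filter (fun i => ¬ r i = 2)).card
      ≤ ∑ i ∈ (univ.filter (fun i => ¬ r i = 1)).filter (fun i => ¬ r i = 2), r i := by
    have := card_nsmul_le_sum ((univ.filter (fun i => ¬ r i = 1)).filter (fun i => ¬ r i = 2))
      r 3 (fun i hi => by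
        have h1 := (mem_filter.mp (mem_filter.mp hi).1).2
        have h2 := (mem_filter.mp hi).2
        have h3 := hX1R i
        omega)
    simp only [smul_eq_mul] at this
    rw [mul_comm]; exact this
  have h9qR : ∑ i ∈ (univ.filter (fun i => ¬ r i = 1)).filter (fun i => ¬ r i = 2), r i
      ≤ 9 * ((univ.filter (fun i => ¬ r i = 1)).filter (fun i => ¬ r i = 2)).card := by
    have := sum_le_card_nsmul ((univ.filter (fun i => ¬ r i = 1)).filter (fun i => ¬ r i = 2))
      r 9 (fun i _ => hXle9R i)
    simp only [smul_eq_mul] at this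
    rw [mul_comm]; exact this
  have hcrossR : (univ.filter (fun j => c j = 1)).card
      ≤ ∑ i ∈ (univ.filter (fun i => ¬ r i = 1)).filter (fun i => ¬ r i = 2), r i := by
    set Q := (univ.filter (fun i => ¬ r i = 1)).filter (fun i => ¬ r i = 2) with hQR
    have hcard : (T.filter (fun v => v.1 ∈ Q)).card = ∑ i ∈ Q, r i := by
      rw [card_eq_sum_card_fiberwise (f := Prod.fst) (s := T.filter (fun v => v.1 ∈ Q)) (t := Q)
        (fun x hx => (mem_filter.mp hx).2)]
      refine Finset.sum_congr rfl (fun i hi => ?_)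
      rw [filter_filter]
      congr 1
      refine filter_congr (fun v _ => ?_)
      constructor
      · exact fun h => h.2
      · exact fun h => ⟨h ▸ hi, h⟩
    rw [← hcard]
    refine card_le_card_of_injOn
      (fun j => if h : (T.filter (fun u => u.2 = j)).Nonempty then h.choose else (0, 0)) ?_ ?_
    · intro j hj
      have hj1 : c j = 1 := (mem_filter.mp hj).2
      have hne : (T.filter (fun u => u.2 = j)).Nonempty := by
        rw [← card_pos, hYdef'R]; omega
      simp only [dif_pos hne]
      have hspec := hne.choose_spec
      rw [mem_filter] at hspec
      have hT' : hne.choose ∈ T := hspec.1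
      have hP2 : hne.choose.2 = j := hspec.2
      have h4 := hXYR hne.choose hT'
      rw [hP2, hj1] at h4
      refine mem_filter.mpr ⟨hT', mem_filter.mpr ⟨mem_filter.mpr ⟨mem_univ _, ?_⟩, ?_⟩⟩
      · omega
      · omega
    · intro j1 hj1 j2 hj2 heq
      simp only [coe_filter, Set.mem_setOf_eq] at hj1 hj2
      dsimp only at heq
      have hj1' := hj1.2
      have hj2' := hj2.2
      have hne1 : (T.filter (fun u => u.2 = j1)).Nonempty := by
        rw [← card_pos, hYdef'R j1]; omega
      have hne2 : (T.filter (fun u => u.2 = j2)).Nonempty := by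
        rw [← card_pos, hYdef'R]; omega
      rw [dif_pos hne1, dif_pos hne2] at heq
      have e1 := (mem_filter.mp hne1.choose_spec).2
      have e2 := (mem_filter.mp hne2.choose_spec).2
      rw [← e1, ← e2, heq]

  -- ROWSIDE analysis
  have hXle9C : ∀ i, c i ≤ 9 := by
    intro i; rw [← hT]; exact card_filter_le _ _
  have h6XC : (univ.filter (fun i => c i = 1)).card +
      (((univ.filter (fun i => ¬ c i = 1)).filter (fun i => c i = 2)).card +
       ((univ.filter (fun i => ¬ c i = 1)).filter (fun i => ¬ c i = 2)).card) = 6 := by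
    have e1 := card_filter_add_card_filter_not (s := (univ : Finset (Fin 6)))
      (p := fun i => c i = 1)
    have e2 := card_filter_add_card_filter_not
      (s := (univ.filter (fun i => ¬ c i = 1))) (p := fun i => c i = 2)
    simp only [Finset.card_univ, Fintype.card_fin] at e1
    omega
  have h9XC : (univ.filter (fun i => c i = 1)).card +
      (2 * ((univ.filter (fun i => ¬ c i = 1)).filter (fun i => c i = 2)).card +
       ∑ i ∈ (univ.filter (fun i => ¬ c i = 1)).filter (fun i => ¬ c i = 2), c i) = 9 := by
    have e1 := sum_filter_add_sum_filter_not (univ : Finset (Fin 6)) (fun i => c i = 1) c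
    have e2 := sum_filter_add_sum_filter_not (univ.filter (fun i => ¬ c i = 1))
      (fun i => c i = 2) c
    have e3 : ∑ i ∈ univ.filter (fun i => c i = 1), c i
        = (univ.filter (fun i => c i = 1)).card := by
      rw [Finset.sum_congr rfl (fun i hi => (mem_filter.mp hi).2), Finset.sum_const,
        smul_eq_mul, mul_one]
    have e4 : ∑ i ∈ (univ.filter (fun i => ¬ c i = 1)).filter (fun i => c i = 2), c i
        = 2 * ((univ.filter (fun i => ¬ c i = 1)).filter (fun i => c i = 2)).card := by
      rw [Finset.sum_congr rfl (fun i hi => (mem_filter.mp hi).2), Finset.sum_const,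
        smul_eq_mul, mul_comm]
    rw [hsumXC] at e1
    omega
  have h3qC : 3 * ((univ.filter (fun i => ¬ c i = 1)).filter (fun i => ¬ c i = 2)).card
      ≤ ∑ i ∈ (univ.filter (fun i => ¬ c i = 1)).filter (fun i => ¬ c i = 2), c i := by
    have := card_nsmul_le_sum ((univ.filter (fun i => ¬ c i = 1)).filter (fun i => ¬ c i = 2))
      c 3 (fun i hi => by
        have h1 := (mem_filter.mp (mem_filter.mp hi).1).2
        have h2 := (mem_filter.mp hi).2
        have h3 := hX1C i
        omega)
    simp only [smul_eq_mul] at this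
    rw [mul_comm]; exact this
  have h9qC : ∑ i ∈ (univ.filter (fun i => ¬ c i = 1)).filter (fun i => ¬ c i = 2), c i
      ≤ 9 * ((univ.filter (fun i => ¬ c i = 1)).filter (fun i => ¬ c i = 2)).card := by
    have := sum_le_card_nsmul ((univ.filter (fun i => ¬ c i = 1)).filter (fun i => ¬ c i = 2))
      c 9 (fun i _ => hXle9C i)
    simp only [smul_eq_mul] at this
    rw [mul_comm]; exact this
  have hcrossC : (univ.filter (fun j => r j = 1)).card
      ≤ ∑ i ∈ (univ.filter (fun i => ¬ c i = 1)).filter (fun i => ¬ c i = 2), c i := by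
    set Q := (univ.filter (fun i => ¬ c i = 1)).filter (fun i => ¬ c i = 2) with hQC
    have hcard : (T.filter (fun v => v.2 ∈ Q)).card = ∑ i ∈ Q, c i := by
      rw [card_eq_sum_card_fiberwise (f := Prod.snd) (s := T.filter (fun v => v.2 ∈ Q)) (t := Q)
        (fun x hx => (mem_filter.mp hx).2)]
      refine Finset.sum_congr rfl (fun i hi => ?_)
      rw [filter_filter]
      congr 1
      refine filter_congr (fun v _ => ?_)
      constructor
      · exact fun h => h.2
      · exact fun h => ⟨h ▸ hi, h⟩
    rw [← hcard]
    refine card_le_card_of_injOn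
      (fun j => if h : (T.filter (fun u => u.1 = j)).Nonempty then h.choose else (0, 0)) ?_ ?_
    · intro j hj
      have hj1 : r j = 1 := (mem_filter.mp hj).2
      have hne : (T.filter (fun u => u.1 = j)).Nonempty := by
        rw [← card_pos, hYdef'C]; omega
      simp only [dif_pos hne]
      have hspec := hne.choose_spec
      rw [mem_filter] at hspec
      have hT' : hne.choose ∈ T := hspec.1
      have hP2 : hne.choose.1 = j := hspec.2
      have h4 := hXYC hne.choose hT'
      rw [hP2, hj1] at h4
      refine mem_filter.mpr ⟨hT', mem_filter.mpr ⟨mem_filter.mpr ⟨mem_univ _, ?_⟩, ?_⟩⟩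
      · omega
      · omega
    · intro j1 hj1 j2 hj2 heq
      simp only [coe_filter, Set.mem_setOf_eq] at hj1 hj2
      dsimp only at heq
      have hj1' := hj1.2
      have hj2' := hj2.2
      have hne1 : (T.filter (fun u => u.1 = j1)).Nonempty := by
        rw [← card_pos, hYdef'C]; omega
      have hne2 : (T.filter (fun u => u.1 = j2)).Nonempty := by
        rw [← card_pos, hYdef'C]; omega
      rw [dif_pos hne1, dif_pos hne2] at heq
      have e1 := (mem_filter.mp hne1.choose_spec).2
      have e2 := (mem_filter.mp hne2.choose_spec).2
      rw [← e1, ← e2, heq]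

  omega

def F10 : Finset (Fin 6 × Fin 6) :=
  {(0,3),(0,4),(0,5),(1,1),(1,2),(2,1),(2,2),(3,0),(4,0),(5,0)}

lemma inter_eq (S : Finset (Fin 6 × Fin 6)) (v : Fin 6 × Fin 6) :
    ((S : Set (Fin 6 × Fin 6)) ∩ {u | (K 6 □ K 6).Adj v u}).ncard
      = (S.filter (fun u => (K 6 □ K 6).Adj v u)).card := by
  rw [← Set.ncard_coe_finset]
  congr 1
  ext u
  simp [Finset.mem_filter]

lemma upper_mem : (10 : ℕ) ∈ {k | ∃ S : Set (Fin 6 × Fin 6),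
    TotalTwoDom (K 6 □ K 6) S ∧ S.ncard = k} := by
  refine ⟨(F10 : Set (Fin 6 × Fin 6)), ?_, ?_⟩
  · intro v
    rw [inter_eq]
    revert v
    decide
  · rw [Set.ncard_coe_finset]
    decide

lemma lower_bd : ∀ k ∈ {k | ∃ S : Set (Fin 6 × Fin 6),
    TotalTwoDom (K 6 □ K 6) S ∧ S.ncard = k}, 10 ≤ k := by
  rintro k ⟨S, hS, rfl⟩
  by_contra hlt
  push_neg at hlt
  have hfin : S.Finite := Set.toFinite S
  have hcard : hfin.toFinset.card = S.ncard := by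
    exact (Set.ncard_eq_toFinset_card S hfin).symm
  have h9 : hfin.toFinset.card ≤ 9 := by omega
  obtain ⟨T, hsub, -, hTcard⟩ := Finset.exists_subsuperset_card_eq
    (Finset.subset_univ hfin.toFinset) h9 (by simp)
  refine lb T hTcard ?_
  intro v
  have h2 := hS v
  rw [show S = (hfin.toFinset : Set (Fin 6 × Fin 6)) by simp] at h2
  rw [inter_eq] at h2
  exact le_trans h2 (Finset.card_le_card (Finset.filter_subset_filter _ hsub))

theorem stmt_12 : gamma2t (K 6 □ K 6) = 10 := by
  refine le_antisymm (Nat.sInf_le upper_mem) (le_csInf ⟨10, upper_mem⟩ lower_bd)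
end

section
/- For every integer n ≥ 2, γ_{2t}(K_n □ K_n) equals 3n/2 if n ≡ 0 (mod 4), equals (3n+1)/2 if n is odd, and equals (3n+2)/2 if n ≡ 2 (mod 4). -/
open SimpleGraph Finset

def row (T : Finset (Fin n × Fin n)) (i : Fin n) : ℕ := (T.filter fun p => p.1 = i).card
def col (T : Finset (Fin n × Fin n)) (j : Fin n) : ℕ := (T.filter fun p => p.2 = j).card

lemma card_eq_sum_row (T : Finset (Fin n × Fin n)) : T.card = ∑ i, row T i :=
  Finset.card_eq_sum_card_fiberwise (fun p _ => Finset.mem_univ p.1)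
lemma card_eq_sum_col (T : Finset (Fin n × Fin n)) : T.card = ∑ j, col T j :=
  Finset.card_eq_sum_card_fiberwise (fun p _ => Finset.mem_univ p.2)

lemma nbr_eq (T : Finset (Fin n × Fin n)) (i j : Fin n) :
    ((↑T : Set _) ∩ {u | (K n □ K n).Adj (i,j) u}).ncard
    = (((T.filter fun p => p.1 = i)).erase (i,j)).card
      + (((T.filter fun p => p.2 = j)).erase (i,j)).card := by
  have hset : (↑T : Set _) ∩ {u | (K n □ K n).Adj (i,j) u}
      = ↑((((T.filter fun p => p.1 = i)).erase (i,j)) ∪ (((T.filter fun p => p.2 = j)).erase (i,j))) := by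
    ext ⟨u1, u2⟩
    simp only [Set.mem_inter_iff, Finset.coe_union, Set.mem_union, Finset.mem_coe,
      Finset.mem_erase, Finset.mem_filter, Set.mem_setOf_eq, boxProd_adj, K, top_adj,
      ne_eq, Prod.mk.injEq, not_and]
    tauto
  rw [hset, Set.ncard_coe_finset, Finset.card_union_of_disjoint]
  rw [Finset.disjoint_left]
  rintro ⟨u1, u2⟩ h1 h2
  simp only [Finset.mem_erase, Finset.mem_filter, ne_eq, Prod.mk.injEq, not_and] at h1 h2
  exact h1.1 h1.2.2 h2.2.2

lemma ttd_iff (T : Finset (Fin n × Fin n)) :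
    TotalTwoDom (K n □ K n) ↑T ↔
      ∀ i j : Fin n, (if (i,j) ∈ T then 4 else 2) ≤ row T i + col T j := by
  constructor
  · intro h i j
    have := h (i, j)
    rw [nbr_eq] at this
    by_cases hm : (i,j) ∈ T
    · have h1 : (i,j) ∈ T.filter fun p => p.1 = i := by simp [hm]
      have h2 : (i,j) ∈ T.filter fun p => p.2 = j := by simp [hm]
      rw [Finset.card_erase_of_mem h1, Finset.card_erase_of_mem h2] at this
      have c1 : 1 ≤ row T i := Finset.card_pos.mpr ⟨_, h1⟩
      have c2 : 1 ≤ col T j := Finset.card_pos.mpr ⟨_, h2⟩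
      simp only [hm, if_true]
      simp only [row, col] at *
      omega
    · have h1 : (i,j) ∉ T.filter fun p => p.1 = i := by simp [hm]
      have h2 : (i,j) ∉ T.filter fun p => p.2 = j := by simp [hm]
      rw [Finset.erase_eq_of_notMem h1, Finset.erase_eq_of_notMem h2] at this
      simp only [hm, if_false]
      simp only [row, col] at *
      omega
  · intro h ⟨i, j⟩
    rw [nbr_eq]
    have := h i j
    by_cases hm : (i,j) ∈ T
    · have h1 : (i,j) ∈ T.filter fun p => p.1 = i := by simp [hm]
      have h2 : (i,j) ∈ T.filter fun p => p.2 = j := by simp [hm]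
      rw [Finset.card_erase_of_mem h1, Finset.card_erase_of_mem h2]
      simp only [hm, if_true] at this
      have c1 : 1 ≤ row T i := Finset.card_pos.mpr ⟨_, h1⟩
      have c2 : 1 ≤ col T j := Finset.card_pos.mpr ⟨_, h2⟩
      simp only [row, col] at *
      omega
    · have h1 : (i,j) ∉ T.filter fun p => p.1 = i := by simp [hm]
      have h2 : (i,j) ∉ T.filter fun p => p.2 = j := by simp [hm]
      rw [Finset.erase_eq_of_notMem h1, Finset.erase_eq_of_notMem h2]
      simp only [hm, if_false] at this
      simp only [row, col] at *
      omega

lemma half' (T : Finset (Fin n × Fin n)) (hn : 2 ≤ n)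
    (hpos : ∀ i : Fin n, 1 ≤ row T i ∧ 1 ≤ col T i)
    (h : ∀ i j : Fin n, (if (i,j) ∈ T then 4 else 2) ≤ row T i + col T j) :
    ∃ p q X, (Finset.univ.filter fun i => row T i = 1).card + q + p = n ∧
      T.card = X + 2*q + (Finset.univ.filter fun i => row T i = 1).card ∧
      3*p ≤ X ∧ (Finset.univ.filter fun j => col T j = 1).card ≤ X := by
  classical
  set A := Finset.univ.filter (fun i => row T i = 1) with hA
  set Q := Finset.univ.filter (fun i => row T i = 2) with hQ
  set P := Finset.univ.filter (fun i => 3 ≤ row T i) with hP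
  have hdAQ : Disjoint A Q := by
    rw [Finset.disjoint_left]; intro i hi hi'
    simp [hA, hQ] at hi hi'; omega
  have hdAQP : Disjoint (A ∪ Q) P := by
    rw [Finset.disjoint_left]; intro i hi hi'
    simp [hA, hQ, hP] at hi hi'; omega
  have hun : (A ∪ Q) ∪ P = Finset.univ := by
    ext i
    simp only [Finset.mem_union, hA, hQ, hP, Finset.mem_filter, Finset.mem_univ, true_and,
      iff_true]
    have := (hpos i).1; omega
  refine ⟨P.card, Q.card, ∑ i ∈ P, row T i, ?_, ?_, ?_, ?_⟩
  · have := Finset.card_union_of_disjoint hdAQP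
    rw [hun] at this
    rw [Finset.card_union_of_disjoint hdAQ] at this
    simp [Finset.card_univ] at this
    omega
  · have h1 : T.card = ∑ i, row T i := card_eq_sum_row T
    rw [h1, ← hun, Finset.sum_union hdAQP, Finset.sum_union hdAQ]
    have hAs : ∑ i ∈ A, row T i = A.card := by
      rw [Finset.card_eq_sum_ones]
      apply Finset.sum_congr rfl
      intro i hi; simp [hA] at hi; omega
    have hQs : ∑ i ∈ Q, row T i = 2 * Q.card := by
      have : ∑ i ∈ Q, row T i = ∑ _i ∈ Q, 2 :=
        Finset.sum_congr rfl fun i hi => by simp [hQ] at hi; omega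
      rw [this, Finset.sum_const, smul_eq_mul, Nat.mul_comm]
    rw [hAs, hQs]; ring
  · calc 3 * P.card = ∑ _i ∈ P, 3 := by rw [Finset.sum_const]; ring
    _ ≤ ∑ i ∈ P, row T i := Finset.sum_le_sum fun i hi => by simp [hP] at hi; omega
  · -- b ≤ X
    have hXcard : (T.filter fun pt => 3 ≤ row T pt.1).card = ∑ i ∈ P, row T i := by
      rw [Finset.card_eq_sum_card_fiberwise (f := Prod.fst) (t := P)
        (fun pt hpt => by simp [hP]; exact (Finset.mem_filter.1 hpt).2)]
      apply Finset.sum_congr rfl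
      intro i hi
      simp only [hP, Finset.mem_filter, Finset.mem_univ, true_and] at hi
      unfold row
      congr 1
      ext pt
      simp only [Finset.mem_filter]
      constructor
      · rintro ⟨⟨h1, _⟩, h3⟩; exact ⟨h1, h3⟩
      · rintro ⟨h1, h3⟩; exact ⟨⟨h1, h3 ▸ hi⟩, h3⟩
    rw [← hXcard]
    have hpt : ∀ j : Fin n, col T j = 1 → ∃ pt : Fin n × Fin n, pt ∈ T ∧ pt.2 = j ∧ 3 ≤ row T pt.1 := by
      intro j hj
      have : (T.filter fun p => p.2 = j).Nonempty := by
        rw [← Finset.card_pos]; unfold col at hj; omega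
      obtain ⟨pt, hpt⟩ := this
      rw [Finset.mem_filter] at hpt
      refine ⟨pt, hpt.1, hpt.2, ?_⟩
      have hm : (pt.1, j) ∈ T := by rw [← hpt.2]; exact hpt.1
      have := h pt.1 j
      rw [if_pos hm] at this
      omega
    have pt0 : Fin n × Fin n := (⟨0, by omega⟩, ⟨0, by omega⟩)
    apply Finset.card_le_card_of_injOn
      (fun j => if hj : col T j = 1 then (hpt j hj).choose else pt0)
    · intro j hj
      simp only [Finset.coe_filter, Set.mem_setOf_eq, Finset.mem_univ, true_and] at hj
      beta_reduce
      rw [dif_pos hj]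
      have spec := (hpt j hj).choose_spec
      exact Finset.mem_filter.2 ⟨spec.1, spec.2.2⟩
    · intro j1 hj1 j2 hj2 heq
      simp only [Finset.coe_filter, Set.mem_setOf_eq, Finset.mem_univ, true_and] at hj1 hj2
      simp only [dif_pos hj1, dif_pos hj2] at heq
      have s1 := (hpt j1 hj1).choose_spec
      have s2 := (hpt j2 hj2).choose_spec
      rw [← s1.2.1, ← s2.2.1, heq]



lemma row_swap (T : Finset (Fin n × Fin n)) (i : Fin n) :
    row (T.image Prod.swap) i = col T i := by
  unfold row col
  rw [show (T.image Prod.swap).filter (fun p => p.1 = i)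
      = (T.filter fun p => p.2 = i).image Prod.swap by
    ext ⟨x, y⟩
    simp only [Finset.mem_filter, Finset.mem_image, Prod.exists, Prod.swap_prod_mk,
      Prod.mk.injEq]
    constructor
    · rintro ⟨⟨a, b, hab, rfl, rfl⟩, rfl⟩
      exact ⟨a, b, ⟨hab, rfl⟩, rfl, rfl⟩
    · rintro ⟨a, b, ⟨hab, rfl⟩, rfl, rfl⟩
      exact ⟨⟨a, b, hab, rfl, rfl⟩, rfl⟩]
  exact Finset.card_image_of_injective _ Prod.swap_injective

lemma mem_swap (T : Finset (Fin n × Fin n)) (i j : Fin n) :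
    (i, j) ∈ T.image Prod.swap ↔ (j, i) ∈ T := by
  simp only [Finset.mem_image, Prod.exists, Prod.swap_prod_mk, Prod.mk.injEq]
  constructor
  · rintro ⟨a, b, hab, h1, h2⟩; subst h1 h2; exact hab
  · intro hm; exact ⟨j, i, hm, rfl, rfl⟩

lemma col_swap (T : Finset (Fin n × Fin n)) (j : Fin n) :
    col (T.image Prod.swap) j = row T j := by
  have h := row_swap (T.image Prod.swap) j
  rw [Finset.image_image, Prod.swap_swap_eq, Finset.image_id] at h
  exact h.symm

lemma lower_s14 (hn : 2 ≤ n) (T : Finset (Fin n × Fin n))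
    (h : ∀ i j : Fin n, (if (i,j) ∈ T then 4 else 2) ≤ row T i + col T j) :
    3*n ≤ 2*T.card ∧ (n % 4 = 2 → 3*n + 2 ≤ 2*T.card) := by
  classical
  by_cases hpos : ∀ i : Fin n, 1 ≤ row T i ∧ 1 ≤ col T i
  · obtain ⟨p, q, X, e1, e2, e3, e4⟩ := half' T hn hpos h
    set T' := T.image Prod.swap with hT'
    have hpos' : ∀ i : Fin n, 1 ≤ row T' i ∧ 1 ≤ col T' i := by
      intro i; rw [row_swap, col_swap]; exact ⟨(hpos i).2, (hpos i).1⟩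
    have h' : ∀ i j : Fin n, (if (i,j) ∈ T' then 4 else 2) ≤ row T' i + col T' j := by
      intro i j
      simp only [hT']
      rw [row_swap, col_swap]
      simp only [mem_swap]
      have := h j i
      omega
    obtain ⟨p', q', Y, f1, f2, f3, f4⟩ := half' T' hn hpos' h'
    have hc : T'.card = T.card := Finset.card_image_of_injective _ Prod.swap_injective
    have hrw1 : (Finset.univ.filter fun i => row T' i = 1) = (Finset.univ.filter fun j => col T j = 1) := by
      apply Finset.filter_congr; intro i _; rw [row_swap]
    have hrw2 : (Finset.univ.filter fun j => col T' j = 1) = (Finset.univ.filter fun i => row T i = 1) := by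
      apply Finset.filter_congr; intro i _; rw [col_swap]
    simp only [hc, hrw1, hrw2] at f1 f2 f4
    omega
  · push_neg at hpos
    obtain ⟨i, hi⟩ := hpos
    have key : 2*n ≤ T.card := by
      rcases Nat.lt_or_ge (row T i) 1 with hr | hr
      · have hcol : ∀ j, 2 ≤ col T j := by
          intro j
          have hj := h i j
          have hnm : (i, j) ∉ T := by
            intro hm
            have : (i,j) ∈ T.filter fun p => p.1 = i := Finset.mem_filter.2 ⟨hm, rfl⟩
            have := Finset.card_pos.2 ⟨_, this⟩
            unfold row at hr; omega
          rw [if_neg hnm] at hj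
          omega
        rw [card_eq_sum_col]
        calc 2*n = ∑ _j : Fin n, 2 := by simp [Finset.card_univ, Nat.mul_comm]
        _ ≤ ∑ j, col T j := Finset.sum_le_sum fun j _ => hcol j
      · have hc : col T i = 0 := by omega
        have hrow : ∀ j, 2 ≤ row T j := by
          intro j
          have hj := h j i
          have hnm : (j, i) ∉ T := by
            intro hm
            have : (j,i) ∈ T.filter fun p => p.2 = i := Finset.mem_filter.2 ⟨hm, rfl⟩
            have := Finset.card_pos.2 ⟨_, this⟩
            unfold col at hc; omega
          rw [if_neg hnm] at hj
          omega
        rw [card_eq_sum_row]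
        calc 2*n = ∑ _j : Fin n, 2 := by simp [Finset.card_univ, Nat.mul_comm]
        _ ≤ ∑ j, row T j := Finset.sum_le_sum fun j _ => hrow j
    omega



def Pat (m s x y : ℕ) : Prop :=
  (x < 4*m ∧ y < 4*m ∧ x / 4 = y / 4 ∧
    ((x % 4 = 0 ∧ y % 4 ≠ 0) ∨ (x % 4 ≠ 0 ∧ y % 4 = 0)))
  ∨ (4*m ≤ x ∧ 4*m ≤ y ∧
      (if s = 2 then 4*m ≤ y
       else if s = 3 then (x = 4*m ∨ y = 4*m)
       else ((x = 4*m ∧ y ≠ 4*m) ∨ (x ≠ 4*m ∧ y = 4*m))))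

instance (m s x y : ℕ) : Decidable (Pat m s x y) := by unfold Pat; infer_instance

lemma pat_symm (m s x y : ℕ) : Pat m s x y ↔ Pat m s y x := by
  unfold Pat; split_ifs <;> tauto

def rv (m s x : ℕ) : ℕ :=
  if x < 4*m then (if x % 4 = 0 then 3 else 1)
  else if s = 2 then 2
  else if x = 4*m then (if s = 5 then 4 else 3)
  else 1

-- domination numeric check
lemma pat_dom (m s x y n : ℕ) (hn : n = 4*m + s) (hs2 : 2 ≤ s) (hs5 : s ≤ 5)
    (hx : x < n) (hy : y < n) :
    (Pat m s x y → 4 ≤ rv m s x + rv m s y) ∧ 2 ≤ rv m s x + rv m s y := by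
  unfold Pat rv
  split_ifs <;> omega

lemma count_pat (m s x n : ℕ) (hn : n = 4*m+s) (hs2 : 2 ≤ s) (hs5 : s ≤ 5) (hx : x < n) :
    ((range n).filter (fun y => Pat m s x y)).card = rv m s x := by
  by_cases h1 : x < 4*m
  · by_cases h2 : x % 4 = 0
    · have he : (range n).filter (fun y => Pat m s x y) = {x+1, x+2, x+3} := by
        ext z
        rw [mem_filter]; simp only [mem_range, mem_insert, mem_singleton, Pat]
        split_ifs <;> omega
      rw [he, card_insert_of_notMem (by simp), card_insert_of_notMem (by simp),
        card_singleton]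
      simp [rv, h1, h2]
    · have he : (range n).filter (fun y => Pat m s x y) = {4*(x/4)} := by
        ext z
        rw [mem_filter]; simp only [mem_range, mem_singleton, Pat]
        split_ifs <;> omega
      rw [he, card_singleton]
      simp [rv, h1, h2]
  · by_cases h2 : s = 2
    · have he : (range n).filter (fun y => Pat m s x y) = {4*m, 4*m+1} := by
        ext z
        rw [mem_filter]; simp only [mem_range, mem_insert, mem_singleton, Pat]
        split_ifs <;> omega
      rw [he, card_insert_of_notMem (by simp), card_singleton]
      simp [rv, h1, h2]
    · by_cases h3 : x = 4*m
      · by_cases h4 : s = 3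
        · have he : (range n).filter (fun y => Pat m s x y) = {4*m, 4*m+1, 4*m+2} := by
            ext z
            rw [mem_filter]; simp only [mem_range, mem_insert, mem_singleton, Pat]
            split_ifs <;> omega
          rw [he, card_insert_of_notMem (by simp), card_insert_of_notMem (by simp),
            card_singleton]
          simp [rv, h1, h2, h3, h4]
        · by_cases h5 : s = 5
          · have he : (range n).filter (fun y => Pat m s x y) = {4*m+1, 4*m+2, 4*m+3, 4*m+4} := by
              ext z
              rw [mem_filter]; simp only [mem_range, mem_insert, mem_singleton, Pat]
              split_ifs <;> omega
            rw [he, card_insert_of_notMem (by simp), card_insert_of_notMem (by simp),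
              card_insert_of_notMem (by simp), card_singleton]
            simp [rv, h1, h2, h3, h5]
          · have he : (range n).filter (fun y => Pat m s x y) = {4*m+1, 4*m+2, 4*m+3} := by
              ext z
              rw [mem_filter]; simp only [mem_range, mem_insert, mem_singleton, Pat]
              split_ifs <;> omega
            rw [he, card_insert_of_notMem (by simp), card_insert_of_notMem (by simp),
              card_singleton]
            simp [rv, h1, h2, h3, h5]
      · have he : (range n).filter (fun y => Pat m s x y) = {4*m} := by
          ext z
          rw [mem_filter]; simp only [mem_range, mem_singleton, Pat]
          split_ifs <;> omega
        rw [he, card_singleton]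
        simp [rv, h1, h2, h3]

lemma sum_reg (m : ℕ) :
    ∑ x ∈ range (4*m), (if x % 4 = 0 then (3:ℕ) else 1) = 6*m := by
  induction m with
  | zero => simp
  | succ k ih =>
    have e : 4*(k+1) = (4*k)+1+1+1+1 := by ring
    rw [e, sum_range_succ, sum_range_succ, sum_range_succ, sum_range_succ, ih]
    have e0 : (4*k) % 4 = 0 := by omega
    have e1 : ¬ (4*k+1) % 4 = 0 := by omega
    have e2 : ¬ (4*k+1+1) % 4 = 0 := by omega
    have e3 : ¬ (4*k+1+1+1) % 4 = 0 := by omega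
    rw [if_pos e0, if_neg e1, if_neg e2, if_neg e3]
    ring

lemma sum_rv (m s n : ℕ) (hn : n = 4*m+s) (hs2 : 2 ≤ s) (hs5 : s ≤ 5) :
    2 * ∑ x ∈ range n, rv m s x
      = 12*m + (if s = 2 then 8 else if s = 3 then 10 else if s = 4 then 12 else 16) := by
  have hreg : ∑ x ∈ range (4*m), rv m s x = 6*m := by
    rw [← sum_reg m]
    apply Finset.sum_congr rfl
    intro x hx
    rw [mem_range] at hx
    unfold rv
    rw [if_pos hx]
  have hs : s = 2 ∨ s = 3 ∨ s = 4 ∨ s = 5 := by omega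
  rcases hs with h | h | h | h <;> subst h <;> subst hn
  · rw [show 4*m+2 = (4*m)+1+1 by ring, sum_range_succ, sum_range_succ, hreg]
    have v0 : rv m 2 (4*m) = 2 := by unfold rv; rw [if_neg (by omega)]; simp
    have v1 : rv m 2 (4*m+1) = 2 := by unfold rv; rw [if_neg (by omega)]; simp
    rw [v0, v1]
    norm_num
    omega
  · rw [show 4*m+3 = (4*m)+1+1+1 by ring, sum_range_succ, sum_range_succ, sum_range_succ,
      hreg]
    have v0 : rv m 3 (4*m) = 3 := by unfold rv; rw [if_neg (by omega)]; simp
    have v1 : rv m 3 (4*m+1) = 1 := by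
      unfold rv; rw [if_neg (by omega), if_neg (by omega), if_neg (by omega)]
    have v2 : rv m 3 (4*m+1+1) = 1 := by
      unfold rv; rw [if_neg (by omega), if_neg (by omega), if_neg (by omega)]
    rw [v0, v1, v2]
    norm_num
    omega
  · rw [show 4*m+4 = (4*m)+1+1+1+1 by ring, sum_range_succ, sum_range_succ, sum_range_succ,
      sum_range_succ, hreg]
    have v0 : rv m 4 (4*m) = 3 := by
      unfold rv; rw [if_neg (by omega), if_neg (by omega), if_pos rfl, if_neg (by omega)]
    have v1 : rv m 4 (4*m+1) = 1 := by
      unfold rv; rw [if_neg (by omega), if_neg (by omega), if_neg (by omega)]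
    have v2 : rv m 4 (4*m+1+1) = 1 := by
      unfold rv; rw [if_neg (by omega), if_neg (by omega), if_neg (by omega)]
    have v3 : rv m 4 (4*m+1+1+1) = 1 := by
      unfold rv; rw [if_neg (by omega), if_neg (by omega), if_neg (by omega)]
    rw [v0, v1, v2, v3]
    norm_num
    omega
  · rw [show 4*m+5 = (4*m)+1+1+1+1+1 by ring, sum_range_succ, sum_range_succ, sum_range_succ,
      sum_range_succ, sum_range_succ, hreg]
    have v0 : rv m 5 (4*m) = 4 := by
      unfold rv; rw [if_neg (by omega), if_neg (by omega), if_pos rfl, if_pos rfl]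
    have v1 : rv m 5 (4*m+1) = 1 := by
      unfold rv; rw [if_neg (by omega), if_neg (by omega), if_neg (by omega)]
    have v2 : rv m 5 (4*m+1+1) = 1 := by
      unfold rv; rw [if_neg (by omega), if_neg (by omega), if_neg (by omega)]
    have v3 : rv m 5 (4*m+1+1+1) = 1 := by
      unfold rv; rw [if_neg (by omega), if_neg (by omega), if_neg (by omega)]
    have v4 : rv m 5 (4*m+1+1+1+1) = 1 := by
      unfold rv; rw [if_neg (by omega), if_neg (by omega), if_neg (by omega)]
    rw [v0, v1, v2, v3, v4]
    norm_num
    omega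


lemma fin_filter_card (n : ℕ) (Q : ℕ → Prop) [DecidablePred Q] :
    (Finset.univ.filter fun j : Fin n => Q j.val).card = ((range n).filter Q).card := by
  have himg : (range n).filter Q = (Finset.univ.filter fun j : Fin n => Q j.val).image Fin.val := by
    ext z
    simp only [mem_filter, mem_range, mem_image, mem_univ, true_and]
    constructor
    · rintro ⟨hz, hQ⟩; exact ⟨⟨z, hz⟩, hQ, rfl⟩
    · rintro ⟨j, hQ, rfl⟩; exact ⟨j.isLt, hQ⟩
  rw [himg, Finset.card_image_of_injective _ Fin.val_injective]

def TT (n m s : ℕ) : Finset (Fin n × Fin n) :=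
  Finset.univ.filter fun p => Pat m s p.1.val p.2.val

lemma mem_TT {n m s : ℕ} (i j : Fin n) : (i, j) ∈ TT n m s ↔ Pat m s i.val j.val := by
  simp [TT]

lemma row_TT {n m s : ℕ} (hn : n = 4*m+s) (hs2 : 2 ≤ s) (hs5 : s ≤ 5) (i : Fin n) :
    row (TT n m s) i = rv m s i.val := by
  unfold row
  have himg : (TT n m s).filter (fun p => p.1 = i)
      = (Finset.univ.filter fun j : Fin n => Pat m s i.val j.val).image (fun j => (i, j)) := by
    ext ⟨a, b⟩
    simp only [TT, mem_filter, mem_image, mem_univ, true_and, Prod.mk.injEq]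
    constructor
    · rintro ⟨hpat, rfl⟩; exact ⟨b, hpat, rfl, rfl⟩
    · rintro ⟨c, hpat, rfl, rfl⟩; exact ⟨hpat, rfl⟩
  rw [himg, Finset.card_image_of_injective _ (Prod.mk_right_injective i), fin_filter_card]
  exact count_pat m s i.val n hn hs2 hs5 i.isLt

lemma col_TT {n m s : ℕ} (hn : n = 4*m+s) (hs2 : 2 ≤ s) (hs5 : s ≤ 5) (j : Fin n) :
    col (TT n m s) j = rv m s j.val := by
  unfold col
  have himg : (TT n m s).filter (fun p => p.2 = j)
      = (Finset.univ.filter fun i : Fin n => Pat m s j.val i.val).image (fun i => (i, j)) := by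
    ext ⟨a, b⟩
    simp only [TT, mem_filter, mem_image, mem_univ, true_and, Prod.mk.injEq]
    constructor
    · rintro ⟨hpat, rfl⟩; exact ⟨a, (pat_symm _ _ _ _).1 hpat, rfl, rfl⟩
    · rintro ⟨c, hpat, rfl, rfl⟩; exact ⟨(pat_symm _ _ _ _).1 hpat, rfl⟩
  rw [himg, Finset.card_image_of_injective _ (Prod.mk_left_injective j), fin_filter_card]
  exact count_pat m s j.val n hn hs2 hs5 j.isLt

lemma card_TT {n m s : ℕ} (hn : n = 4*m+s) (hs2 : 2 ≤ s) (hs5 : s ≤ 5) :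
    2 * (TT n m s).card
      = 12*m + (if s = 2 then 8 else if s = 3 then 10 else if s = 4 then 12 else 16) := by
  have h1 : (TT n m s).card = ∑ i : Fin n, row (TT n m s) i :=
    Finset.card_eq_sum_card_fiberwise (fun p _ => Finset.mem_univ p.1)
  rw [h1, Finset.sum_congr rfl (fun i _ => row_TT hn hs2 hs5 i),
    Fin.sum_univ_eq_sum_range (fun x => rv m s x) n]
  exact sum_rv m s n hn hs2 hs5

lemma upper_exists (n : ℕ) (hn : 2 ≤ n) :
    ∃ T : Finset (Fin n × Fin n),
      (∀ i j : Fin n, (if (i,j) ∈ T then 4 else 2) ≤ row T i + col T j) ∧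
      2 * T.card = (if n % 4 = 0 then 3*n else if n % 2 = 1 then 3*n+1 else 3*n+2) := by
  set s := (n-2) % 4 + 2 with hs
  set m := (n-2) / 4 with hm
  have hns : n = 4*m+s := by omega
  have hs2 : 2 ≤ s := by omega
  have hs5 : s ≤ 5 := by omega
  refine ⟨TT n m s, ?_, ?_⟩
  · intro i j
    rw [row_TT hns hs2 hs5 i, col_TT hns hs2 hs5 j]
    have hd := pat_dom m s i.val j.val n hns hs2 hs5 i.isLt j.isLt
    by_cases hmem : (i, j) ∈ TT n m s
    · rw [if_pos hmem]
      exact hd.1 ((mem_TT i j).1 hmem)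
    · rw [if_neg hmem]
      exact hd.2
  · rw [card_TT hns hs2 hs5]
    have hs4 : s = 2 ∨ s = 3 ∨ s = 4 ∨ s = 5 := by omega
    rcases hs4 with h | h | h | h
    · rw [if_neg (show ¬ n % 4 = 0 by omega), if_neg (show ¬ n % 2 = 1 by omega), h]
      norm_num; omega
    · rw [if_neg (show ¬ n % 4 = 0 by omega), if_pos (show n % 2 = 1 by omega), h]
      norm_num; omega
    · rw [if_pos (show n % 4 = 0 by omega), h]
      norm_num; omega
    · rw [if_neg (show ¬ n % 4 = 0 by omega), if_pos (show n % 2 = 1 by omega), h]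
      norm_num; omega


set_option maxHeartbeats 1000000 in
theorem stmt_14 (n : ℕ) (hn : 2 ≤ n) :
    (n % 4 = 0 → 2 * gamma2t (K n □ K n) = 3 * n) ∧
    (n % 2 = 1 → 2 * gamma2t (K n □ K n) = 3 * n + 1) ∧
    (n % 4 = 2 → 2 * gamma2t (K n □ K n) = 3 * n + 2) := by
  classical
  have key : 2 * gamma2t (K n □ K n)
      = (if n % 4 = 0 then 3*n else if n % 2 = 1 then 3*n+1 else 3*n+2) := by
    obtain ⟨T, hTdom, hTcard⟩ := upper_exists n hn
    set Sset : Set ℕ :=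
      {k | ∃ S : Set (Fin n × Fin n), TotalTwoDom (K n □ K n) S ∧ S.ncard = k} with hSset
    have hmem : T.card ∈ Sset :=
      ⟨↑T, (ttd_iff T).2 hTdom, Set.ncard_coe_finset T⟩
    have hlow : ∀ k ∈ Sset, (if n % 4 = 0 then 3*n else if n % 2 = 1 then 3*n+1 else 3*n+2) ≤ 2 * k := by
      rintro k ⟨S, hS, rfl⟩
      have hfin : S.Finite := Set.toFinite S
      have hcoe : ↑hfin.toFinset = S := hfin.coe_toFinset
      rw [← hcoe] at hS
      have hcrit := (ttd_iff hfin.toFinset).1 hS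
      have hcard : S.ncard = hfin.toFinset.card :=
        Set.ncard_eq_toFinset_card S hfin
      obtain ⟨l1, l2⟩ := lower_s14 hn hfin.toFinset hcrit
      rw [hcard]
      split_ifs with h1 h2
      · omega
      · omega
      · have := l2 (by omega)
        omega
    have hγ : gamma2t (K n □ K n) = sInf Sset := rfl
    have hsmem : sInf Sset ∈ Sset := Nat.sInf_mem ⟨T.card, hmem⟩
    have hle : sInf Sset ≤ T.card := Nat.sInf_le hmem
    have hge := hlow _ hsmem
    rw [hγ]
    omega
  refine ⟨fun h => ?_, fun h => ?_, fun h => ?_⟩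
  · rw [key, if_pos h]
  · rw [key, if_neg (show ¬ n % 4 = 0 by omega), if_pos h]
  · rw [key, if_neg (show ¬ n % 4 = 0 by omega), if_neg (show ¬ n % 2 = 1 by omega)]
end

section
/- Let G and H be finite simple graphs without isolated vertices, of orders n and m respectively. Then γ_{2t}(G □ H) ≥ (3/2)·min{n,m}. -/
open SimpleGraph

namespace GammaAux

open Finset
open scoped Classical

variable {V W : Type*} [Fintype V] [Fintype W]

/-- The column of `v`: heights `w` with `(v,w) ∈ S`. -/
noncomputable def DD (S : Set (V × W)) (v : V) : Finset W :=
  univ.filter fun w => (v, w) ∈ S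

/-- The row of `w`: columns `v` with `(v,w) ∈ S`. -/
noncomputable def RR (S : Set (V × W)) (w : W) : Finset V :=
  univ.filter fun v => (v, w) ∈ S

lemma mem_DD {S : Set (V × W)} {v : V} {w : W} : w ∈ DD S v ↔ (v, w) ∈ S := by
  simp [DD]

lemma mem_RR {S : Set (V × W)} {v : V} {w : W} : v ∈ RR S w ↔ (v, w) ∈ S := by
  simp [RR]

variable (G : SimpleGraph V) (H : SimpleGraph W)

/-- Translation of the total 2-domination condition at `(v,w)` into rows/columns. -/
lemma key2 {S : Set (V × W)} (hS : TotalTwoDom (G □ H) S) (v : V) (w : W) :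
    2 ≤ ((RR S w).filter fun u => G.Adj v u).card
      + ((DD S v).filter fun z => H.Adj w z).card := by
  have h := hS (v, w)
  have hset : (S ∩ {u | (G □ H).Adj (v, w) u}) =
      ↑((((RR S w).filter fun u => G.Adj v u).image fun u => (u, w)) ∪
        (((DD S v).filter fun z => H.Adj w z).image fun z => (v, z))) := by
    ext ⟨a, b⟩
    simp only [Set.mem_inter_iff, Set.mem_setOf_eq, boxProd_adj, Finset.coe_union,
      Set.mem_union, Finset.coe_image, Set.mem_image, Finset.mem_coe, Finset.mem_filter,
      mem_RR, mem_DD, Prod.mk.injEq]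
    constructor
    · rintro ⟨hab, ⟨hg, rfl⟩ | ⟨hh, rfl⟩⟩
      · exact Or.inl ⟨a, ⟨hab, hg⟩, rfl, rfl⟩
      · exact Or.inr ⟨b, ⟨hab, hh⟩, rfl, rfl⟩
    · rintro (⟨u, ⟨hu, hg⟩, rfl, rfl⟩ | ⟨z, ⟨hz, hh⟩, rfl, rfl⟩)
      · exact ⟨hu, Or.inl ⟨hg, rfl⟩⟩
      · exact ⟨hz, Or.inr ⟨hh, rfl⟩⟩
  rw [hset, Set.ncard_coe_finset] at h
  refine le_trans h (le_trans (Finset.card_union_le _ _) ?_)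
  exact add_le_add Finset.card_image_le Finset.card_image_le

/-- If `v` is a singleton column containing `(v,w)`, then row `w` has at least 3 vertices. -/
lemma row_three {S : Set (V × W)} (hS : TotalTwoDom (G □ H) S) {v : V} {w : W}
    (hvw : (v, w) ∈ S) (h1 : (DD S v).card = 1) : 3 ≤ (RR S w).card := by
  have h2 := key2 G H hS v w
  have hD : DD S v = {w} := by
    obtain ⟨z, hz⟩ := Finset.card_eq_one.mp h1
    have hw : w ∈ DD S v := mem_DD.mpr hvw
    rw [hz] at hw ⊢
    rw [Finset.mem_singleton] at hw
    rw [hw]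
  have hzero : ((DD S v).filter fun z => H.Adj w z) = ∅ := by
    rw [hD]
    simp [Finset.filter_singleton]
  rw [hzero, Finset.card_empty, add_zero] at h2
  have hnot : v ∉ (RR S w).filter fun u => G.Adj v u := by
    simp
  have hsub : insert v ((RR S w).filter fun u => G.Adj v u) ⊆ RR S w := by
    intro u hu
    rcases Finset.mem_insert.mp hu with h | h
    · subst h; exact mem_RR.mpr hvw
    · exact Finset.mem_of_mem_filter _ h
  have hcard := Finset.card_le_card hsub
  rw [Finset.card_insert_of_notMem hnot] at hcard
  omega

/-- If `w` is a singleton row containing `(v,w)`, then column `v` has at least 3 vertices. -/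
lemma col_three {S : Set (V × W)} (hS : TotalTwoDom (G □ H) S) {v : V} {w : W}
    (hvw : (v, w) ∈ S) (h1 : (RR S w).card = 1) : 3 ≤ (DD S v).card := by
  have h2 := key2 G H hS v w
  have hR : RR S w = {v} := by
    obtain ⟨z, hz⟩ := Finset.card_eq_one.mp h1
    have hv : v ∈ RR S w := mem_RR.mpr hvw
    rw [hz] at hv ⊢
    rw [Finset.mem_singleton] at hv
    rw [hv]
  have hzero : ((RR S w).filter fun u => G.Adj v u) = ∅ := by
    rw [hR]
    simp [Finset.filter_singleton]
  rw [hzero, Finset.card_empty, zero_add] at h2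
  have hnot : w ∉ (DD S v).filter fun z => H.Adj w z := by
    simp
  have hsub : insert w ((DD S v).filter fun z => H.Adj w z) ⊆ DD S v := by
    intro z hz
    rcases Finset.mem_insert.mp hz with h | h
    · subst h; exact mem_DD.mpr hvw
    · exact Finset.mem_of_mem_filter _ h
  have hcard := Finset.card_le_card hsub
  rw [Finset.card_insert_of_notMem hnot] at hcard
  omega

lemma sum_DD (S : Set (V × W)) :
    ∑ v, (DD S v).card = (univ.filter fun p : V × W => p ∈ S).card := by
  rw [Finset.card_filter, Fintype.sum_prod_type]
  refine Finset.sum_congr rfl fun v _ => ?_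
  rw [DD, Finset.card_filter]

lemma sum_RR (S : Set (V × W)) :
    ∑ w, (RR S w).card = (univ.filter fun p : V × W => p ∈ S).card := by
  rw [Finset.card_filter, Fintype.sum_prod_type, Finset.sum_comm]
  refine Finset.sum_congr rfl fun w _ => ?_
  rw [RR, Finset.card_filter]

end GammaAux

theorem stmt_15 {V W : Type*} [Fintype V] [Fintype W]
    (G : SimpleGraph V) (H : SimpleGraph W)
    (hG : ∀ v : V, ∃ u, G.Adj v u) (hH : ∀ w : W, ∃ u, H.Adj w u)
    (hex : ∃ S : Set (V × W), TotalTwoDom (G □ H) S) :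
    3 * min (Fintype.card V) (Fintype.card W) ≤ 2 * gamma2t (G □ H) := by
  classical
  open Finset GammaAux in
  -- obtain an optimal total 2-dominating set
  have hne : {k | ∃ S : Set (V × W), TotalTwoDom (G □ H) S ∧ S.ncard = k}.Nonempty := by
    obtain ⟨S, hS⟩ := hex
    exact ⟨S.ncard, S, hS, rfl⟩
  obtain ⟨S, hS, hcard⟩ := Nat.sInf_mem hne
  rw [gamma2t, ← hcard]
  set n := Fintype.card V with hn
  set m := Fintype.card W with hm
  set N := (univ.filter fun p : V × W => p ∈ S).card with hNdef
  have hN : S.ncard = N := by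
    have hSeq : S = ↑(univ.filter fun p : V × W => p ∈ S) := by
      ext p; simp
    rw [hSeq, Set.ncard_coe_finset]
  rw [hN]
  have hsumD := GammaAux.sum_DD (V := V) (W := W) S
  have hsumR := GammaAux.sum_RR (V := V) (W := W) S
  have hminn : min n m ≤ n := Nat.min_le_left n m
  have hminm : min n m ≤ m := Nat.min_le_right n m
  -- Case 1 : an empty column
  by_cases hA : ∃ v, DD S v = ∅
  · obtain ⟨v, hv⟩ := hA
    have h2 : ∀ w, 2 ≤ (RR S w).card := by
      intro w
      have h := key2 G H hS v w
      rw [hv] at h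
      simp only [Finset.filter_empty, Finset.card_empty, add_zero] at h
      exact le_trans h (Finset.card_le_card (Finset.filter_subset _ _))
    have h2m : 2 * m ≤ N := by
      calc 2 * m = ∑ _w : W, 2 := by rw [Finset.sum_const, Finset.card_univ, smul_eq_mul, mul_comm]
      _ ≤ ∑ w, (RR S w).card := Finset.sum_le_sum fun w _ => h2 w
      _ = N := by rw [hsumR]
    omega
  -- Case 2 : an empty row
  by_cases hB : ∃ w, RR S w = ∅
  · obtain ⟨w, hw⟩ := hB
    have h2 : ∀ v, 2 ≤ (DD S v).card := by
      intro v
      have h := key2 G H hS v w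
      rw [hw] at h
      simp only [Finset.filter_empty, Finset.card_empty, zero_add] at h
      exact le_trans h (Finset.card_le_card (Finset.filter_subset _ _))
    have h2n : 2 * n ≤ N := by
      calc 2 * n = ∑ _v : V, 2 := by rw [Finset.sum_const, Finset.card_univ, smul_eq_mul, mul_comm]
      _ ≤ ∑ v, (DD S v).card := Finset.sum_le_sum fun v _ => h2 v
      _ = N := by rw [hsumD]
    omega
  -- Main case : all columns and rows nonempty
  push_neg at hA hB
  have hDpos : ∀ v, 1 ≤ (DD S v).card := fun v =>
    Finset.card_pos.mpr (hA v)
  have hRpos : ∀ w, 1 ≤ (RR S w).card := fun w =>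
    Finset.card_pos.mpr (hB w)
  set B : Finset V := univ.filter fun v => (DD S v).card = 1 with hBdef
  set sing : Finset W := univ.filter fun w => (RR S w).card = 1 with hsingdef
  set x := B.card with hxdef
  set s1 := sing.card with hs1def
  -- number of singleton-column vertices in row w
  have sum_brow : ∑ w, (B.filter fun v => (v, w) ∈ S).card = x := by
    have h1 : ∀ w : W, (B.filter fun v => (v, w) ∈ S).card
        = ∑ v ∈ B, (if (v, w) ∈ S then 1 else 0) := fun w => Finset.card_filter _ _
    calc ∑ w, (B.filter fun v => (v, w) ∈ S).card
        = ∑ w : W, ∑ v ∈ B, (if (v, w) ∈ S then 1 else 0) := by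
          exact Finset.sum_congr rfl fun w _ => h1 w
      _ = ∑ v ∈ B, ∑ w : W, (if (v, w) ∈ S then 1 else 0) := Finset.sum_comm
      _ = ∑ v ∈ B, (DD S v).card := by
          refine Finset.sum_congr rfl fun v _ => ?_
          rw [DD, Finset.card_filter]
      _ = ∑ _v ∈ B, 1 := by
          refine Finset.sum_congr rfl fun v hv => ?_
          exact (Finset.mem_filter.mp hv).2
      _ = x := by rw [Finset.sum_const, smul_eq_mul, mul_one]
  -- number of singleton-row vertices in column v
  have sum_scol : ∑ v, (sing.filter fun w => (v, w) ∈ S).card = s1 := by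
    have h1 : ∀ v : V, (sing.filter fun w => (v, w) ∈ S).card
        = ∑ w ∈ sing, (if (v, w) ∈ S then 1 else 0) := fun v => Finset.card_filter _ _
    calc ∑ v, (sing.filter fun w => (v, w) ∈ S).card
        = ∑ v : V, ∑ w ∈ sing, (if (v, w) ∈ S then 1 else 0) := by
          exact Finset.sum_congr rfl fun v _ => h1 v
      _ = ∑ w ∈ sing, ∑ v : V, (if (v, w) ∈ S then 1 else 0) := Finset.sum_comm
      _ = ∑ w ∈ sing, (RR S w).card := by
          refine Finset.sum_congr rfl fun w _ => ?_
          rw [RR, Finset.card_filter]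
      _ = ∑ _w ∈ sing, 1 := by
          refine Finset.sum_congr rfl fun w hw => ?_
          exact (Finset.mem_filter.mp hw).2
      _ = s1 := by rw [Finset.sum_const, smul_eq_mul, mul_one]
  -- a singleton row contains no singleton-column vertex
  have brow_zero : ∀ w : W, (RR S w).card = 1 → (B.filter fun v => (v, w) ∈ S).card = 0 := by
    intro w hw
    by_contra hne0
    obtain ⟨v, hv⟩ := Finset.card_pos.mp (Nat.pos_of_ne_zero hne0)
    obtain ⟨hvB, hvS⟩ := Finset.mem_filter.mp hv
    have h1 : (DD S v).card = 1 := (Finset.mem_filter.mp hvB).2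
    have := row_three G H hS hvS h1
    omega
  have brow_le : ∀ w : W, (B.filter fun v => (v, w) ∈ S).card ≤ (RR S w).card := by
    intro w
    refine Finset.card_le_card fun v hv => ?_
    exact mem_RR.mpr (Finset.mem_filter.mp hv).2
  -- a singleton column contains no singleton-row vertex
  have scol_zero : ∀ v : V, (DD S v).card = 1 → (sing.filter fun w => (v, w) ∈ S).card = 0 := by
    intro v hv
    by_contra hne0
    obtain ⟨w, hw⟩ := Finset.card_pos.mp (Nat.pos_of_ne_zero hne0)
    obtain ⟨hws, hwS⟩ := Finset.mem_filter.mp hw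
    have h1 : (RR S w).card = 1 := (Finset.mem_filter.mp hws).2
    have := col_three G H hS hwS h1
    omega
  have scol_le : ∀ v : V, (sing.filter fun w => (v, w) ∈ S).card ≤ (DD S v).card := by
    intro v
    refine Finset.card_le_card fun w hw => ?_
    exact mem_DD.mpr (Finset.mem_filter.mp hw).2
  -- pointwise row inequality
  have rowpoint : ∀ w : W, 6 + (B.filter fun v => (v, w) ∈ S).card
      ≤ 3 * (RR S w).card + 3 * (if (RR S w).card = 1 then 1 else 0) := by
    intro w
    by_cases h1 : (RR S w).card = 1
    · rw [brow_zero w h1, if_pos h1]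
      omega
    · rw [if_neg h1]
      have hge2 : 2 ≤ (RR S w).card := by have := hRpos w; omega
      by_cases hb : (B.filter fun v => (v, w) ∈ S).card = 0
      · omega
      · obtain ⟨v, hv⟩ := Finset.card_pos.mp (Nat.pos_of_ne_zero hb)
        obtain ⟨hvB, hvS⟩ := Finset.mem_filter.mp hv
        have h3 := row_three G H hS hvS (Finset.mem_filter.mp hvB).2
        have hle := brow_le w
        omega
  -- pointwise column inequality
  have colpoint : ∀ v : V, 6 + (sing.filter fun w => (v, w) ∈ S).card
      ≤ 3 * (DD S v).card + 3 * (if (DD S v).card = 1 then 1 else 0) := by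
    intro v
    by_cases h1 : (DD S v).card = 1
    · rw [scol_zero v h1, if_pos h1]
      omega
    · rw [if_neg h1]
      have hge2 : 2 ≤ (DD S v).card := by have := hDpos v; omega
      by_cases hb : (sing.filter fun w => (v, w) ∈ S).card = 0
      · omega
      · obtain ⟨w, hw⟩ := Finset.card_pos.mp (Nat.pos_of_ne_zero hb)
        obtain ⟨hws, hwS⟩ := Finset.mem_filter.mp hw
        have h3 := col_three G H hS hwS (Finset.mem_filter.mp hws).2
        have hle := scol_le v
        omega
  -- counting sums of indicators
  have sum_ite_sing : ∑ w : W, (if (RR S w).card = 1 then 1 else 0) = s1 := by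
    rw [hs1def, hsingdef, Finset.card_filter]
  have sum_ite_B : ∑ v : V, (if (DD S v).card = 1 then 1 else 0) = x := by
    rw [hxdef, hBdef, Finset.card_filter]
  -- summed row inequality : 6m + x ≤ 3N + 3s1
  have hrow : 6 * m + x ≤ 3 * N + 3 * s1 := by
    have hsum := Finset.sum_le_sum fun w (_ : w ∈ (univ : Finset W)) => rowpoint w
    rw [Finset.sum_add_distrib, Finset.sum_const, Finset.card_univ, smul_eq_mul, sum_brow,
      Finset.sum_add_distrib, ← Finset.mul_sum, ← Finset.mul_sum, hsumR, sum_ite_sing] at hsum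
    omega
  -- summed column inequality : 6n + s1 ≤ 3N + 3x
  have hcol : 6 * n + s1 ≤ 3 * N + 3 * x := by
    have hsum := Finset.sum_le_sum fun v (_ : v ∈ (univ : Finset V)) => colpoint v
    rw [Finset.sum_add_distrib, Finset.sum_const, Finset.card_univ, smul_eq_mul, sum_scol,
      Finset.sum_add_distrib, ← Finset.mul_sum, ← Finset.mul_sum, hsumD, sum_ite_B] at hsum
    omega
  -- x + s1 ≤ N
  have hxs : x + s1 ≤ N := by
    have hpoint : ∀ w : W, (B.filter fun v => (v, w) ∈ S).card
        + (if (RR S w).card = 1 then 1 else 0) ≤ (RR S w).card := by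
      intro w
      by_cases h1 : (RR S w).card = 1
      · rw [brow_zero w h1, if_pos h1]; omega
      · rw [if_neg h1]
        have := brow_le w
        omega
    have hsum := Finset.sum_le_sum fun w (_ : w ∈ (univ : Finset W)) => hpoint w
    rw [Finset.sum_add_distrib, sum_brow, sum_ite_sing, hsumR] at hsum
    exact hsum
  omega
end
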